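/- arXiv:0704.2560 — 4 statements merged into one kernel-verified Lean document; each statement's English description precedes it below -/
import Mathlib

section
/- Let d ≥ 3 and K ⊆ ℤ^d finite. For w ∈ W^0_K let L_K(w) = sup{n ≥ 0 : w(n) ∈ K} (finite for every w ∈ W^0_K), and let 𝒯_K be the set of finite nearest-neighbor paths τ = (τ(0),…,τ(N_τ)) with τ(0), τ(N_τ) ∈ supp e_K. Then under Q_K the path segment (X_n)_{0≤n≤L_K} lies in 𝒯_K almost everywhere, and for all measurable A, B ⊆ (ℤ^d)^ℕ and τ ∈ 𝒯_K: Q_K[(X_{−n})_{n≥0} ∈ A, (X_n)_{0≤n≤L_K} = τ, (X_{n+L_K})_{n≥0} ∈ B] = P^K_{τ(0)}[A] · e_K(τ(0)) · P_{τ(0)}[X_n = τ(n) for 0 ≤ n ≤ N_τ] · e_K(τ(N_τ)) · P^K_{τ(N_τ)}[B], where P^K_x = P_x[· | H̃_K = ∞] and the event {(X_n)_{0≤n≤L_K} = τ} means L_K = N_τ and X_n = τ(n) for 0 ≤ n ≤ N_τ. -/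
/-!
Decomposition (1.26) of `Q_K` at the last visit `L_K` to `K`.
-/

open MeasureTheory
open scoped ENNReal

abbrev Zd (d : ℕ) := Fin d → ℤ

def adj {d : ℕ} (x y : Zd d) : Prop := (∑ i, (x i - y i).natAbs) = 1

instance {d : ℕ} (x y : Zd d) : Decidable (adj x y) := by
  unfold adj; infer_instance

def IsSRW (d : ℕ) (P : Zd d → Measure (ℕ → Zd d)) : Prop :=
  (∀ x, IsProbabilityMeasure (P x)) ∧
  ∀ (x : Zd d) (N : ℕ) (γ : ℕ → Zd d), γ 0 = x →
    P x {w | ∀ k ≤ N, w k = γ k} =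
      if ∀ k < N, adj (γ (k + 1)) (γ k) then ((2 * d : ℝ≥0∞))⁻¹ ^ N else 0

def escSet (d : ℕ) (K : Finset (Zd d)) : Set (ℕ → Zd d) :=
  {ω | ∀ n : ℕ, 1 ≤ n → ω n ∉ K}

/-- The equilibrium measure `e_K`. -/
noncomputable def eqm (d : ℕ) (P : Zd d → Measure (ℕ → Zd d)) (K : Finset (Zd d))
    (x : Zd d) : ℝ≥0∞ :=
  if x ∈ K then P x (escSet d K) else 0

/-- The conditioned law `P^K_x[A] = P_x[A | H̃_K = ∞]`. -/
noncomputable def condEsc (d : ℕ) (P : Zd d → Measure (ℕ → Zd d)) (K : Finset (Zd d))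
    (x : Zd d) (A : Set (ℕ → Zd d)) : ℝ≥0∞ :=
  P x (A ∩ escSet d K) / P x (escSet d K)

def goodPath (d : ℕ) : Set (ℤ → Zd d) :=
  {w | (∀ n : ℤ, adj (w (n + 1)) (w n)) ∧ ∀ A : Finset (Zd d), {n : ℤ | w n ∈ A}.Finite}

abbrev WT (d : ℕ) := {w : ℤ → Zd d // w ∈ goodPath d}

def IsQK (d : ℕ) (P : Zd d → Measure (ℕ → Zd d)) (K : Finset (Zd d))
    (Q : Measure (WT d)) : Prop :=
  ∀ (x : Zd d) (A B : Set (ℕ → Zd d)), MeasurableSet A → MeasurableSet B →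
    Q {w : WT d | (fun n : ℕ => w.1 (-(n : ℤ))) ∈ A ∧ w.1 0 = x ∧
        (fun n : ℕ => w.1 (n : ℤ)) ∈ B}
      = if x ∈ K then P x (A ∩ escSet d K) * P x B else 0

/-- `L_K(w) = sup{n ≥ 0 : w(n) ∈ K}`, the last visit to `K` among nonnegative times
(junk value `0` if this set is empty or unbounded). -/
noncomputable def lastTime (d : ℕ) (K : Finset (Zd d)) (w : WT d) : ℕ :=
  sSup {n : ℕ | w.1 (n : ℤ) ∈ K}

namespace QKaux

variable {d : ℕ}

/-- cylinder set -/
def cyl (N : ℕ) (γ : ℕ → Zd d) : Set (ℕ → Zd d) := {ω | ∀ k ≤ N, ω k = γ k}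

def shiftN (N : ℕ) : (ℕ → Zd d) → (ℕ → Zd d) := fun ω n => ω (n + N)

lemma measurable_shiftN (N : ℕ) : Measurable (shiftN (d := d) N) :=
  measurable_pi_iff.2 fun n => measurable_pi_apply (n + N)

lemma measurableSet_cyl (N : ℕ) (γ : ℕ → Zd d) : MeasurableSet (cyl N γ) := by
  have : cyl N γ = ⋂ k, ⋂ (_ : k ≤ N), (fun ω : ℕ → Zd d => ω k) ⁻¹' {γ k} := by
    ext ω; simp [cyl]
  rw [this]
  exact MeasurableSet.iInter fun k => MeasurableSet.iInter fun _ =>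
    (measurable_pi_apply k) (MeasurableSet.singleton _)

lemma measurableSet_escSet (K : Finset (Zd d)) : MeasurableSet (escSet d K) := by
  have : escSet d K = ⋂ n, ⋂ (_ : 1 ≤ n), (fun ω : ℕ → Zd d => ω n) ⁻¹' ((↑K : Set (Zd d))ᶜ) := by
    ext ω; simp [escSet]
  rw [this]
  exact MeasurableSet.iInter fun n => MeasurableSet.iInter fun _ =>
    (measurable_pi_apply n) ((Set.to_countable _).measurableSet)

/-- extension of a finite vector to a path (constant after N) -/
def ext (N : ℕ) (v : Fin (N + 1) → Zd d) : ℕ → Zd d :=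
  fun k => v ⟨min k N, by omega⟩

lemma ext_of_le {N : ℕ} (v : Fin (N + 1) → Zd d) {k : ℕ} (hk : k ≤ N) :
    ext N v k = v ⟨k, by omega⟩ := by
  simp [ext, min_eq_left hk]

def cylSets (d : ℕ) : Set (Set (ℕ → Zd d)) := {s | ∃ N γ, s = cyl N γ}

lemma isPiSystem_cylSets : IsPiSystem (cylSets d) := by
  rintro s ⟨N, γ, rfl⟩ t ⟨M, δ, rfl⟩ ⟨ω, hω1, hω2⟩
  rcases le_total N M with h | h
  · have : cyl N γ ∩ cyl M δ = cyl M δ := by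
      apply Set.inter_eq_right.2
      intro ρ hρ k hk
      have h1 : ρ k = δ k := hρ k (le_trans hk h)
      have h2 : ω k = δ k := hω2 k (le_trans hk h)
      have h3 : ω k = γ k := hω1 k hk
      rw [h1, ← h2, h3]
    rw [this]; exact ⟨M, δ, rfl⟩
  · have : cyl N γ ∩ cyl M δ = cyl N γ := by
      apply Set.inter_eq_left.2
      intro ρ hρ k hk
      have h1 : ρ k = γ k := hρ k (le_trans hk h)
      have h2 : ω k = γ k := hω1 k (le_trans hk h)
      have h3 : ω k = δ k := hω2 k hk
      rw [h1, ← h2, h3]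
    rw [this]; exact ⟨N, γ, rfl⟩

lemma eval_eq_mem_generateFrom (n : ℕ) (y : Zd d) :
    MeasurableSet[MeasurableSpace.generateFrom (cylSets d)] {ω : ℕ → Zd d | ω n = y} := by
  have : {ω : ℕ → Zd d | ω n = y}
      = ⋃ v : Fin (n + 1) → Zd d,
          if v ⟨n, lt_add_one n⟩ = y then cyl n (ext n v) else ∅ := by
    ext ω
    constructor
    · intro hω
      refine Set.mem_iUnion.2 ⟨fun i => ω i, ?_⟩
      show ω ∈ if ω n = y then cyl n (ext n fun i => ω ↑i) else ∅
      rw [if_pos (show ω n = y from hω)]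
      intro k hk
      rw [ext_of_le _ hk]
    · intro hω
      rcases Set.mem_iUnion.1 hω with ⟨v, hv⟩
      by_cases hvy : v ⟨n, lt_add_one n⟩ = y
      · rw [if_pos hvy] at hv
        have := hv n le_rfl
        rw [ext_of_le _ le_rfl] at this
        rw [Set.mem_setOf_eq, this, hvy]
      · rw [if_neg hvy] at hv; exact absurd hv (Set.notMem_empty ω)
  rw [this]
  refine MeasurableSet.iUnion fun v => ?_
  split
  · exact MeasurableSpace.measurableSet_generateFrom ⟨n, ext n v, rfl⟩
  · exact @MeasurableSet.empty _ (MeasurableSpace.generateFrom (cylSets d))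

lemma generateFrom_cylSets :
    (inferInstance : MeasurableSpace (ℕ → Zd d)) = MeasurableSpace.generateFrom (cylSets d) := by
  apply le_antisymm
  · have h1 : ∀ n : ℕ, @Measurable _ _ (MeasurableSpace.generateFrom (cylSets d)) _
        (fun ω : ℕ → Zd d => ω n) := fun n =>
      @measurable_to_countable (Zd d) (ℕ → Zd d) _ _
        (MeasurableSpace.generateFrom (cylSets d)) (fun ω : ℕ → Zd d => ω n)
        (fun ω => eval_eq_mem_generateFrom n (ω n))
    exact iSup_le fun n => measurable_iff_comap_le.mp (h1 n)
  · exact MeasurableSpace.generateFrom_le (by rintro s ⟨N, γ, rfl⟩; exact measurableSet_cyl N γ)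

end QKaux

namespace QKaux

variable {d : ℕ} {P : Zd d → Measure (ℕ → Zd d)}

lemma prob_eval0 (hP : IsSRW d P) (x : Zd d) : P x {ω | ω 0 = x} = 1 := by
  have h := hP.2 x 0 (fun _ => x) rfl
  have hs : {w : ℕ → Zd d | ∀ k ≤ 0, w k = x} = {ω | ω 0 = x} := by
    ext ω; simp [Nat.le_zero]
  rw [hs] at h
  rw [h, if_pos (by omega)]
  simp

lemma eval0_ne_null (hP : IsSRW d P) (x y : Zd d) (h : y ≠ x) :
    P x {ω | ω 0 = y} = 0 := by
  haveI := hP.1 x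
  have hm : MeasurableSet {ω : ℕ → Zd d | ω 0 = x} := by
    have he : {ω : ℕ → Zd d | ω 0 = x} = (fun ω : ℕ → Zd d => ω 0) ⁻¹' {x} := by ext; simp
    rw [he]; exact (measurable_pi_apply 0) ((Set.to_countable {x}).measurableSet)
  have hc : P x {ω : ℕ → Zd d | ω 0 = x}ᶜ = 0 := by
    rw [prob_compl_eq_one_sub hm, prob_eval0 hP x, tsub_self]
  refine measure_mono_null ?_ hc
  intro ω hω
  simp only [Set.mem_compl_iff, Set.mem_setOf_eq] at *
  intro hx
  rw [hx] at hω
  exact h hω.symm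

lemma cyl_null_of_start_ne (hP : IsSRW d P) {x : Zd d} {N : ℕ} {γ : ℕ → Zd d}
    (h : γ 0 ≠ x) : P x (cyl N γ) = 0 :=
  measure_mono_null (fun ω hω => hω 0 (Nat.zero_le N)) (eval0_ne_null hP x (γ 0) h)

lemma markov (hP : IsSRW d P) (x : Zd d) (N : ℕ) (γ : ℕ → Zd d)
    (C : Set (ℕ → Zd d)) (hC : MeasurableSet C) :
    P x (cyl N γ ∩ shiftN N ⁻¹' C) = P x (cyl N γ) * P (γ N) C := by
  haveI := hP.1 x
  haveI := hP.1 (γ N)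
  by_cases h0 : γ 0 = x
  · by_cases hnn : ∀ k < N, adj (γ (k + 1)) (γ k)
    · -- main case: π-system argument
      set μ1 : Measure (ℕ → Zd d) := ((P x).restrict (cyl N γ)).map (shiftN N) with hμ1
      set μ2 : Measure (ℕ → Zd d) := (P x (cyl N γ)) • P (γ N) with hμ2
      have hfin : IsFiniteMeasure μ1 := by
        constructor
        rw [hμ1, Measure.map_apply (measurable_shiftN N) MeasurableSet.univ,
          Set.preimage_univ, Measure.restrict_apply MeasurableSet.univ, Set.univ_inter]
        exact lt_of_le_of_lt prob_le_one ENNReal.one_lt_top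
      have key : μ1 = μ2 := by
        haveI := hfin
        refine MeasureTheory.ext_of_generate_finite (cylSets d) generateFrom_cylSets
          isPiSystem_cylSets ?_ ?_
        · rintro s ⟨M, δ, rfl⟩
          have hμ1s : μ1 (cyl M δ) = P x (shiftN N ⁻¹' cyl M δ ∩ cyl N γ) := by
            rw [hμ1, Measure.map_apply (measurable_shiftN N) (measurableSet_cyl M δ),
              Measure.restrict_apply ((measurable_shiftN N) (measurableSet_cyl M δ))]
          have hμ2s : μ2 (cyl M δ) = P x (cyl N γ) * P (γ N) (cyl M δ) := by
            rw [hμ2, Measure.smul_apply, smul_eq_mul]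
          by_cases hδ0 : δ 0 = γ N
          · -- concatenate paths
            set ρ : ℕ → Zd d := fun k => if k ≤ N then γ k else δ (k - N) with hρ
            have hρle : ∀ k, k ≤ N → ρ k = γ k := fun k hk => by
              simp only [hρ, if_pos hk]
            have hρgt : ∀ k, N < k → ρ k = δ (k - N) := fun k hk => by
              simp only [hρ, if_neg (show ¬ k ≤ N by omega)]
            have hρat : ∀ k, N ≤ k → ρ k = δ (k - N) := by
              intro k hk
              rcases Nat.eq_or_lt_of_le hk with h | hlt
              · rw [← h, hρle N le_rfl, Nat.sub_self, hδ0]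
              · exact hρgt k hlt
            have hset : shiftN N ⁻¹' cyl M δ ∩ cyl N γ = cyl (N + M) ρ := by
              ext ω
              constructor
              · rintro ⟨hs, hc⟩ k hk
                by_cases hkN : k ≤ N
                · rw [hρle k hkN]; exact hc k hkN
                · rw [hρgt k (by omega)]
                  have h2 : k - N ≤ M := by omega
                  have h3 : ω (k - N + N) = δ (k - N) := hs (k - N) h2
                  rw [show k - N + N = k by omega] at h3
                  exact h3
              · intro h
                constructor
                · intro k hk
                  show ω (k + N) = δ k
                  rw [h (k + N) (by omega), hρat (k + N) (by omega),
                    show k + N - N = k by omega]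
                · intro k hk
                  rw [h k (by omega), hρle k hk]
            have hρnn : (∀ k < N + M, adj (ρ (k + 1)) (ρ k)) ↔
                (∀ k < M, adj (δ (k + 1)) (δ k)) := by
              constructor
              · intro H k hk
                have h5 := H (N + k) (by omega)
                rw [hρat (N + k + 1) (by omega), hρat (N + k) (by omega),
                  show N + k + 1 - N = k + 1 by omega, show N + k - N = k by omega] at h5
                exact h5
              · intro H k hk
                by_cases hkN : k < N
                · rw [hρle (k + 1) (by omega), hρle k (by omega)]
                  exact hnn k hkN
                · rw [hρat (k + 1) (by omega), hρat k (by omega),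
                    show k + 1 - N = k - N + 1 by omega]
                  exact H (k - N) (by omega)
            have hρ0 : ρ 0 = x := by rw [hρle 0 (Nat.zero_le N)]; exact h0
            rw [hμ1s, hμ2s, hset]
            have hval := hP.2 x (N + M) ρ hρ0
            have hvalγ := hP.2 x N γ h0
            have hvalδ := hP.2 (γ N) M δ hδ0
            rw [show {w : ℕ → Zd d | ∀ k ≤ N + M, w k = ρ k} = cyl (N + M) ρ from rfl] at hval
            rw [show {w : ℕ → Zd d | ∀ k ≤ N, w k = γ k} = cyl N γ from rfl] at hvalγ
            rw [show {w : ℕ → Zd d | ∀ k ≤ M, w k = δ k} = cyl M δ from rfl] at hvalδ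
            rw [hval, hvalγ, hvalδ, if_pos hnn]
            by_cases hδnn : ∀ k < M, adj (δ (k + 1)) (δ k)
            · rw [if_pos (hρnn.2 hδnn), if_pos hδnn, pow_add]
            · rw [if_neg (fun h => hδnn (hρnn.1 h)), if_neg hδnn, mul_zero]
          · -- inconsistent: both sides zero
            have hset : shiftN N ⁻¹' cyl M δ ∩ cyl N γ = ∅ := by
              ext ω
              simp only [Set.mem_inter_iff, Set.mem_preimage, Set.mem_empty_iff_false,
                iff_false, not_and]
              intro hs hc
              have h1 : ω (0 + N) = δ 0 := hs 0 (Nat.zero_le M)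
              have h2 : ω N = γ N := hc N le_rfl
              rw [Nat.zero_add] at h1
              exact hδ0 (h1 ▸ h2 ▸ rfl)
            rw [hμ1s, hμ2s, hset, measure_empty,
              cyl_null_of_start_ne hP hδ0, mul_zero]
        · rw [hμ1, hμ2, Measure.map_apply (measurable_shiftN N) MeasurableSet.univ,
            Set.preimage_univ, Measure.restrict_apply MeasurableSet.univ, Set.univ_inter,
            Measure.smul_apply, smul_eq_mul, measure_univ, mul_one]
      calc P x (cyl N γ ∩ shiftN N ⁻¹' C)
          = P x (shiftN N ⁻¹' C ∩ cyl N γ) := by rw [Set.inter_comm]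
        _ = ((P x).restrict (cyl N γ)) (shiftN N ⁻¹' C) := by
            rw [Measure.restrict_apply ((measurable_shiftN N) hC)]
        _ = μ1 C := by rw [hμ1, Measure.map_apply (measurable_shiftN N) hC]
        _ = μ2 C := by rw [key]
        _ = P x (cyl N γ) * P (γ N) C := by rw [hμ2, Measure.smul_apply, smul_eq_mul]
    · have hz : P x (cyl N γ) = 0 := by
        have := hP.2 x N γ h0
        rw [show {w : ℕ → Zd d | ∀ k ≤ N, w k = γ k} = cyl N γ from rfl] at this
        rw [this, if_neg hnn]
      rw [measure_mono_null Set.inter_subset_left hz, hz, zero_mul]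
  · have hz : P x (cyl N γ) = 0 := cyl_null_of_start_ne hP h0
    rw [measure_mono_null Set.inter_subset_left hz, hz, zero_mul]

end QKaux

namespace QKaux

variable {d : ℕ} {P : Zd d → Measure (ℕ → Zd d)} {K : Finset (Zd d)}

lemma measurableSet_evalEq (n : ℕ) (y : Zd d) :
    MeasurableSet {ω : ℕ → Zd d | ω n = y} := by
  have he : {ω : ℕ → Zd d | ω n = y} = (fun ω : ℕ → Zd d => ω n) ⁻¹' {y} := by ext; simp
  rw [he]
  exact (measurable_pi_apply n) ((Set.to_countable {y}).measurableSet)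

lemma natSet_finite (K : Finset (Zd d)) (w : WT d) :
    {n : ℕ | w.1 (n : ℤ) ∈ K}.Finite := by
  have hfin := w.2.2 K
  have he : {n : ℕ | w.1 (n : ℤ) ∈ K} = (fun n : ℕ => (n : ℤ)) ⁻¹' {n : ℤ | w.1 n ∈ K} := rfl
  rw [he]
  exact Set.Finite.preimage (Function.Injective.injOn Nat.cast_injective) hfin

lemma lastTime_eq_iff (w : WT d) {N : ℕ}
    (h0 : w.1 ((0 : ℕ) : ℤ) ∈ K) (hN : w.1 ((N : ℕ) : ℤ) ∈ K) :
    lastTime d K w = N ↔ ∀ m : ℕ, N < m → w.1 ((m : ℕ) : ℤ) ∉ K := by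
  have hfin := natSet_finite K w
  constructor
  · intro hL m hm hmem
    have h1 : m ∈ {n : ℕ | w.1 (n : ℤ) ∈ K} := hmem
    have h2 := le_csSup hfin.bddAbove h1
    rw [show sSup {n : ℕ | w.1 (n : ℤ) ∈ K} = lastTime d K w from rfl, hL] at h2
    omega
  · intro h
    apply le_antisymm
    · refine csSup_le ⟨N, hN⟩ fun m hm => ?_
      by_contra hc
      exact h m (by omega) hm
    · exact le_csSup hfin.bddAbove hN

lemma lastTime_mem (w : WT d) (h0 : w.1 ((0 : ℕ) : ℤ) ∈ K) :
    w.1 ((lastTime d K w : ℕ) : ℤ) ∈ K :=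
  Nat.sSup_mem ⟨0, h0⟩ (natSet_finite K w).bddAbove

end QKaux

/-- **Theorem 1.1, (1.26).** Under `Q_K` the path segment up to the last visit to `K`
lies a.e. in `𝒯_K` (nearest-neighbor, with endpoints in the support of `e_K`), and the
decomposition formula (1.26) at the last visit to `K` holds. -/
theorem QK_last_visit_decomposition
    (d : ℕ) (hd : 3 ≤ d) (P : Zd d → Measure (ℕ → Zd d)) (hP : IsSRW d P)
    (K : Finset (Zd d)) (QK : Measure (WT d)) (hQK : IsQK d P K QK) :
    (∀ᵐ w ∂QK,
      (∀ k : ℕ, k < lastTime d K w → adj (w.1 ((k : ℤ) + 1)) (w.1 (k : ℤ)))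
      ∧ (w.1 0 ∈ K ∧ eqm d P K (w.1 0) ≠ 0)
      ∧ (w.1 (lastTime d K w : ℤ) ∈ K ∧ eqm d P K (w.1 (lastTime d K w : ℤ)) ≠ 0))
    ∧ ∀ (N : ℕ) (τ : ℕ → Zd d),
        (∀ k < N, adj (τ (k + 1)) (τ k)) →
        τ 0 ∈ K → eqm d P K (τ 0) ≠ 0 →
        τ N ∈ K → eqm d P K (τ N) ≠ 0 →
        ∀ (A B : Set (ℕ → Zd d)), MeasurableSet A → MeasurableSet B →
          QK {w : WT d | (fun n : ℕ => w.1 (-(n : ℤ))) ∈ A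
              ∧ lastTime d K w = N
              ∧ (∀ k : ℕ, k ≤ N → w.1 (k : ℤ) = τ k)
              ∧ (fun n : ℕ => w.1 ((n : ℤ) + (N : ℤ))) ∈ B}
            = condEsc d P K (τ 0) A * eqm d P K (τ 0)
              * P (τ 0) {ω | ∀ k ≤ N, ω k = τ k}
              * eqm d P K (τ N) * condEsc d P K (τ N) B := by
  classical
  open QKaux in
  constructor
  · -- a.e. statement
    have h2 : ∀ᵐ w ∂QK, w.1 0 ∈ K ∧ eqm d P K (w.1 0) ≠ 0 := by
      rw [MeasureTheory.ae_iff]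
      refine measure_mono_null ?_
        (measure_iUnion_null (s := fun x : Zd d =>
          {w : WT d | w.1 0 = x ∧ ¬(x ∈ K ∧ eqm d P K x ≠ 0)}) fun x => ?_)
      · intro w hw
        exact Set.mem_iUnion.2 ⟨w.1 0, rfl, hw⟩
      · beta_reduce
        by_cases hx : x ∈ K ∧ eqm d P K x ≠ 0
        · have hempty : {w : WT d | w.1 0 = x ∧ ¬(x ∈ K ∧ eqm d P K x ≠ 0)} = ∅ := by
            ext w; simp [hx]
          rw [hempty]; exact measure_empty
        · haveI := hP.1 x
          have hset : {w : WT d | w.1 0 = x ∧ ¬(x ∈ K ∧ eqm d P K x ≠ 0)}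
              = {w : WT d | (fun n : ℕ => w.1 (-(n : ℤ))) ∈ (Set.univ : Set (ℕ → Zd d))
                  ∧ w.1 0 = x
                  ∧ (fun n : ℕ => w.1 (n : ℤ)) ∈ (Set.univ : Set (ℕ → Zd d))} := by
            ext w; simp [hx]
          rw [hset, hQK x Set.univ Set.univ MeasurableSet.univ MeasurableSet.univ]
          by_cases hxK : x ∈ K
          · rw [if_pos hxK, Set.univ_inter, measure_univ, mul_one]
            have h0 : eqm d P K x = 0 := by
              by_contra hne; exact hx ⟨hxK, hne⟩
            rwa [eqm, if_pos hxK] at h0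
          · rw [if_neg hxK]
    have h3 : ∀ᵐ w ∂QK, w.1 0 ∈ K →
        (w.1 ((lastTime d K w : ℕ) : ℤ) ∈ K
          ∧ eqm d P K (w.1 ((lastTime d K w : ℕ) : ℤ)) ≠ 0) := by
      rw [MeasureTheory.ae_iff]
      refine measure_mono_null ?_
        (measure_iUnion_null (s := fun z : Zd d × Zd d × ℕ =>
          if z.2.1 ∈ K ∧ eqm d P K z.2.1 = 0 then
            {w : WT d | w.1 0 = z.1 ∧ (fun n : ℕ => w.1 (n : ℤ)) ∈
              ({ω : ℕ → Zd d | ω z.2.2 = z.2.1} ∩ shiftN z.2.2 ⁻¹' escSet d K)}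
          else ∅) fun z => ?_)
      · intro w hw
        simp only [Set.mem_setOf_eq, not_forall] at hw
        obtain ⟨h0, hb⟩ := hw
        have h0' : w.1 ((0 : ℕ) : ℤ) ∈ K := by simpa using h0
        have hLmem : w.1 ((lastTime d K w : ℕ) : ℤ) ∈ K := lastTime_mem w h0'
        have hLe : eqm d P K (w.1 ((lastTime d K w : ℕ) : ℤ)) = 0 := by
          by_contra hne; exact hb ⟨hLmem, hne⟩
        refine Set.mem_iUnion.2 ⟨⟨w.1 0, w.1 ((lastTime d K w : ℕ) : ℤ), lastTime d K w⟩, ?_⟩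
        rw [if_pos ⟨hLmem, hLe⟩]
        refine ⟨rfl, rfl, ?_⟩
        intro j hj
        have hgt := (lastTime_eq_iff w h0' hLmem).1 rfl (j + lastTime d K w) (by omega)
        exact hgt
      · rcases z with ⟨x, y, N⟩
        beta_reduce
        by_cases hcond : y ∈ K ∧ eqm d P K y = 0
        · rw [if_pos hcond]
          haveI := hP.1 x
          have hB2m : MeasurableSet ({ω : ℕ → Zd d | ω N = y} ∩ shiftN N ⁻¹' escSet d K) :=
            (measurableSet_evalEq N y).inter ((measurable_shiftN N) (measurableSet_escSet K))
          have hset : {w : WT d | w.1 0 = x ∧ (fun n : ℕ => w.1 (n : ℤ)) ∈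
              ({ω : ℕ → Zd d | ω N = y} ∩ shiftN N ⁻¹' escSet d K)}
              = {w : WT d | (fun n : ℕ => w.1 (-(n : ℤ))) ∈ (Set.univ : Set (ℕ → Zd d))
                  ∧ w.1 0 = x
                  ∧ (fun n : ℕ => w.1 (n : ℤ)) ∈
                    ({ω : ℕ → Zd d | ω N = y} ∩ shiftN N ⁻¹' escSet d K)} := by
            ext w; simp
          rw [hset, hQK x Set.univ _ MeasurableSet.univ hB2m]
          have hPB2 : P x ({ω : ℕ → Zd d | ω N = y} ∩ shiftN N ⁻¹' escSet d K) = 0 := by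
            refine measure_mono_null ?_
              (measure_iUnion_null (s := fun v : Fin (N + 1) → Zd d =>
                if v ⟨N, lt_add_one N⟩ = y then
                  cyl N (ext N v) ∩ shiftN N ⁻¹' escSet d K
                else ∅) fun v => ?_)
            · intro ω hω
              refine Set.mem_iUnion.2 ⟨fun i => ω i, ?_⟩
              show ω ∈ if (fun i : Fin (N + 1) => ω ↑i) ⟨N, lt_add_one N⟩ = y then
                  cyl N (ext N fun i : Fin (N + 1) => ω ↑i) ∩ shiftN N ⁻¹' escSet d K else ∅
              rw [if_pos (show ω N = y from hω.1)]
              exact ⟨fun k hk => by rw [ext_of_le _ hk], hω.2⟩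
            · beta_reduce
              by_cases hv : v ⟨N, lt_add_one N⟩ = y
              · rw [if_pos hv,
                  markov hP x N (ext N v) (escSet d K) (measurableSet_escSet K)]
                have hvN : ext N v N = y := by rw [ext_of_le _ le_rfl]; exact hv
                have hPy : P y (escSet d K) = 0 := by
                  have := hcond.2
                  rwa [eqm, if_pos hcond.1] at this
                rw [hvN, hPy, mul_zero]
              · rw [if_neg hv]; exact measure_empty
          rw [hPB2, mul_zero]
          split <;> rfl
        · rw [if_neg hcond]; exact measure_empty
    filter_upwards [h2, h3] with w hw2 hw3
    exact ⟨fun k _ => w.2.1 (k : ℤ), hw2, hw3 hw2.1⟩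
  · -- decomposition formula
    intro N τ hτnn hτ0K hτ0e hτNK hτNe A B hA hB
    haveI := hP.1 (τ 0)
    haveI := hP.1 (τ N)
    set B' : Set (ℕ → Zd d) := cyl N τ ∩ shiftN N ⁻¹' (escSet d K ∩ B) with hB'
    have hB'm : MeasurableSet B' :=
      (measurableSet_cyl N τ).inter
        ((measurable_shiftN N) ((measurableSet_escSet K).inter hB))
    have hfun : ∀ w : WT d,
        (shiftN N fun n : ℕ => w.1 (n : ℤ)) = (fun n : ℕ => w.1 ((n : ℤ) + (N : ℤ))) := by
      intro w
      funext n
      show w.1 (((n + N : ℕ) : ℤ)) = w.1 ((n : ℤ) + (N : ℤ))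
      norm_cast
    have hsets : {w : WT d | (fun n : ℕ => w.1 (-(n : ℤ))) ∈ A
          ∧ lastTime d K w = N
          ∧ (∀ k : ℕ, k ≤ N → w.1 (k : ℤ) = τ k)
          ∧ (fun n : ℕ => w.1 ((n : ℤ) + (N : ℤ))) ∈ B}
        = {w : WT d | (fun n : ℕ => w.1 (-(n : ℤ))) ∈ A ∧ w.1 0 = τ 0
            ∧ (fun n : ℕ => w.1 (n : ℤ)) ∈ B'} := by
      ext w
      simp only [Set.mem_setOf_eq]
      constructor
      · rintro ⟨hA', hL, hcyl, hBmem⟩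
        have h0K : w.1 ((0 : ℕ) : ℤ) ∈ K := by rw [hcyl 0 (Nat.zero_le N)]; exact hτ0K
        have hNK : w.1 ((N : ℕ) : ℤ) ∈ K := by rw [hcyl N le_rfl]; exact hτNK
        refine ⟨hA', by simpa using hcyl 0 (Nat.zero_le N), fun k hk => hcyl k hk, ?_, ?_⟩
        · -- escape after N
          intro j hj
          have := (lastTime_eq_iff w h0K hNK).1 hL (j + N) (by omega)
          exact this
        · rw [hfun w]; exact hBmem
      · rintro ⟨hA', h0, hcylmem, hshift⟩
        have hcyl : ∀ k : ℕ, k ≤ N → w.1 (k : ℤ) = τ k := hcylmem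
        have h0K : w.1 ((0 : ℕ) : ℤ) ∈ K := by rw [hcyl 0 (Nat.zero_le N)]; exact hτ0K
        have hNK : w.1 ((N : ℕ) : ℤ) ∈ K := by rw [hcyl N le_rfl]; exact hτNK
        refine ⟨hA', ?_, hcyl, ?_⟩
        · refine (lastTime_eq_iff w h0K hNK).2 fun m hm hmem => ?_
          refine hshift.1 (m - N) (by omega) ?_
          show w.1 (((m - N + N : ℕ)) : ℤ) ∈ K
          rwa [show ((m - N + N : ℕ) : ℤ) = ((m : ℕ) : ℤ) by omega]
        · rw [← hfun w]; exact hshift.2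
    rw [hsets, hQK (τ 0) A B' hA hB'm, if_pos hτ0K, hB',
      markov hP (τ 0) N τ (escSet d K ∩ B) ((measurableSet_escSet K).inter hB)]
    have hcyleq : {ω : ℕ → Zd d | ∀ k ≤ N, ω k = τ k} = cyl N τ := rfl
    have he0 : P (τ 0) (escSet d K) ≠ 0 := by
      rwa [eqm, if_pos hτ0K] at hτ0e
    have he0' : P (τ N) (escSet d K) ≠ 0 := by
      rwa [eqm, if_pos hτNK] at hτNe
    rw [condEsc, condEsc, eqm, eqm, if_pos hτ0K, if_pos hτNK, hcyleq,
      ENNReal.div_mul_cancel he0 (measure_ne_top _ _), mul_assoc (_ * _),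
      ENNReal.mul_div_cancel he0' (measure_ne_top _ _),
      Set.inter_comm (escSet d K) B, mul_assoc]
end

section
/- (Time-reversal invariance.) Let d ≥ 3 and K ⊆ ℤ^d finite, and for w ∈ W^0_K let L_K(w) = sup{n ≥ 0 : w(n) ∈ K}. The map w ↦ ŵ defined by ŵ(n) = w(L_K(w) − n) for n ∈ ℤ maps W^0_K into itself, and the image of Q_K under this map equals Q_K. -/
/-!
Time-reversal invariance of `Q_K` (part of (1.27)): the reversal of a trajectory at its
last visit to `K` maps `W^0_K` into itself and preserves `Q_K`.
-/

open MeasureTheory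
open scoped ENNReal

lemma adj_symm {d : ℕ} {x y : Zd d} (h : adj x y) : adj y x := by
  unfold adj at h ⊢
  calc ∑ i, (y i - x i).natAbs = ∑ i, (x i - y i).natAbs :=
        Finset.sum_congr rfl (fun i _ => by omega)
    _ = 1 := h

/-- The time-reversal map `w ↦ ŵ`, `ŵ(n) = w(L_K(w) − n)`. -/
noncomputable def revAt (d : ℕ) (K : Finset (Zd d)) (w : WT d) : WT d :=
  ⟨fun n => w.1 ((lastTime d K w : ℤ) - n), by
    constructor
    · intro n
      show adj (w.1 ((lastTime d K w : ℤ) - (n + 1))) (w.1 ((lastTime d K w : ℤ) - n))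
      have h := w.2.1 ((lastTime d K w : ℤ) - (n + 1))
      have e : (lastTime d K w : ℤ) - (n + 1) + 1 = (lastTime d K w : ℤ) - n := by ring
      rw [e] at h
      exact adj_symm h
    · intro A
      have h : {n : ℤ | w.1 ((lastTime d K w : ℤ) - n) ∈ A}
          = (fun n : ℤ => (lastTime d K w : ℤ) - n) ⁻¹' {n : ℤ | w.1 n ∈ A} := rfl
      rw [h]
      exact (w.2.2 A).preimage (Set.injOn_of_injective (fun a b hab => by omega))⟩

namespace QKaux
open MeasureTheory

variable {d : ℕ}

lemma measSet_Zd (S : Set (Zd d)) : MeasurableSet S := S.to_countable.measurableSet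

lemma meas_coordN (n : ℕ) : Measurable fun ω : ℕ → Zd d => ω n := measurable_pi_apply n

lemma meas_coordW (n : ℤ) : Measurable fun w : WT d => w.1 n :=
  (measurable_pi_apply n).comp measurable_subtype_coe

/-- Cylinders on one-sided path space. -/
def Cyl (γ : ℕ → Zd d) (N : ℕ) : Set (ℕ → Zd d) := {ω | ∀ k ≤ N, ω k = γ k}

lemma measSet_Cyl (γ : ℕ → Zd d) (N : ℕ) : MeasurableSet (Cyl γ N) := by
  have : Cyl γ N = ⋂ k : ℕ, ⋂ _ : k ≤ N, (fun ω : ℕ → Zd d => ω k) ⁻¹' {γ k} := by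
    ext ω; simp [Cyl]
  rw [this]
  exact MeasurableSet.iInter fun k => MeasurableSet.iInter fun _ =>
    (meas_coordN k) (measSet_Zd _)

def shift (ℓ : ℕ) (ω : ℕ → Zd d) : ℕ → Zd d := fun n => ω (ℓ + n)

lemma meas_shift (ℓ : ℕ) : Measurable (shift (d := d) ℓ) :=
  measurable_pi_lambda _ fun n => measurable_pi_apply (ℓ + n)

/-- The collection of one-sided cylinders. -/
def CylSys (d : ℕ) : Set (Set (ℕ → Zd d)) := {S | ∃ γ N, S = Cyl γ N}

lemma isPiSystem_CylSys : IsPiSystem (CylSys d) := by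
  rintro s ⟨γ, N, rfl⟩ t ⟨δ, M, rfl⟩ ⟨ω₀, h0⟩
  refine ⟨ω₀, max N M, ?_⟩
  obtain ⟨h1, h2⟩ := h0
  ext ω
  constructor
  · rintro ⟨hω1, hω2⟩ k hk
    rcases le_max_iff.mp hk with h | h
    · rw [hω1 k h, ← h1 k h]
    · rw [hω2 k h, ← h2 k h]
  · intro hω
    constructor
    · intro k hk; rw [hω k (le_trans hk (le_max_left _ _)), h1 k hk]
    · intro k hk; rw [hω k (le_trans hk (le_max_right _ _)), h2 k hk]

lemma gen_CylSys : (inferInstance : MeasurableSpace (ℕ → Zd d)) =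
    MeasurableSpace.generateFrom (CylSys d) := by
  apply le_antisymm
  · -- pi ≤ generateFrom
    have hcoord : ∀ (n : ℕ) (y : Zd d),
        MeasurableSet[MeasurableSpace.generateFrom (CylSys d)] {ω : ℕ → Zd d | ω n = y} := by
      intro n y
      have : {ω : ℕ → Zd d | ω n = y} =
          ⋃ (p : Fin (n+1) → Zd d) (_ : p ⟨n, Nat.lt_succ_self n⟩ = y),
            Cyl (fun k => if h : k < n + 1 then p ⟨k, h⟩ else y) n := by
        ext ω
        simp only [Set.mem_setOf_eq, Set.mem_iUnion]
        constructor
        · intro h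
          refine ⟨fun k => ω k, h, fun k hk => ?_⟩
          simp [Nat.lt_succ_iff.mpr hk]
        · rintro ⟨p, hp, hω⟩
          have := hω n le_rfl
          simpa [hp] using this
      rw [this]
      exact MeasurableSet.iUnion fun p => MeasurableSet.iUnion fun hp =>
        MeasurableSpace.measurableSet_generateFrom ⟨_, n, rfl⟩
    rw [show (inferInstance : MeasurableSpace (ℕ → Zd d)) = MeasurableSpace.pi from rfl]
    refine iSup_le fun n => ?_
    rw [MeasurableSpace.comap_le_iff_le_map]
    intro S hS
    have : (fun ω : ℕ → Zd d => ω n) ⁻¹' S = ⋃ y ∈ S, {ω : ℕ → Zd d | ω n = y} := by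
      ext ω; simp
    rw [MeasurableSpace.map_def, this]
    exact MeasurableSet.biUnion S.to_countable fun y _ => hcoord n y
  · rw [MeasurableSpace.generateFrom_le_iff]
    rintro s ⟨γ, N, rfl⟩
    exact measSet_Cyl γ N

end QKaux
namespace QKaux
open MeasureTheory

variable {d : ℕ} {P : Zd d → Measure (ℕ → Zd d)}

lemma P_coord_zero (hP : IsSRW d P) (x : Zd d) : P x {ω : ℕ → Zd d | ω 0 = x} = 1 := by
  have h := hP.2 x 0 (fun _ => x) rfl
  have hset : {w : ℕ → Zd d | ∀ k ≤ 0, w k = (fun _ => x) k} = {ω : ℕ → Zd d | ω 0 = x} := by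
    ext ω; simp [Nat.le_zero]
  rw [hset] at h
  simpa using h

lemma P_coord_ne (hP : IsSRW d P) {x y : Zd d} (hxy : y ≠ x) :
    P x {ω : ℕ → Zd d | ω 0 = y} = 0 := by
  haveI := hP.1 x
  have h1 := P_coord_zero hP x
  have hdisj : Disjoint {ω : ℕ → Zd d | ω 0 = y} {ω : ℕ → Zd d | ω 0 = x} := by
    rw [Set.disjoint_left]; intro ω h1 h2; exact hxy (h1 ▸ h2 ▸ rfl)
  have hm : MeasurableSet {ω : ℕ → Zd d | ω 0 = x} := (meas_coordN 0) (measSet_Zd {x})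
  have := measure_union hdisj hm (μ := P x)
  have hle : P x ({ω : ℕ → Zd d | ω 0 = y} ∪ {ω : ℕ → Zd d | ω 0 = x}) ≤ 1 :=
    prob_le_one
  rw [this, h1] at hle
  have h2 : P x {ω : ℕ → Zd d | ω 0 = y} ≤ 0 :=
    (ENNReal.add_le_add_iff_right ENNReal.one_ne_top).mp (by simpa using hle)
  exact le_antisymm h2 (zero_le)

lemma P_Cyl (hP : IsSRW d P) (x : Zd d) (γ : ℕ → Zd d) (N : ℕ) (h : γ 0 = x) :
    P x (Cyl γ N) = if ∀ k < N, adj (γ (k+1)) (γ k) then ((2*d:ℝ≥0∞))⁻¹ ^ N else 0 :=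
  hP.2 x N γ h

lemma Cyl_subset_coord (γ : ℕ → Zd d) (N : ℕ) : Cyl γ N ⊆ {ω : ℕ → Zd d | ω 0 = γ 0} :=
  fun ω hω => hω 0 (Nat.zero_le N)

/-- Markov-type concatenation identity, derived from the cylinder description. -/
lemma P_markov (hP : IsSRW d P) (x : Zd d) (ℓ : ℕ) (σ : ℕ → Zd d) (hσ0 : σ 0 = x)
    {D : Set (ℕ → Zd d)} (hD : MeasurableSet D) :
    P x (Cyl σ ℓ ∩ shift ℓ ⁻¹' D)
      = (if ∀ k < ℓ, adj (σ (k+1)) (σ k) then ((2*d:ℝ≥0∞))⁻¹ ^ ℓ else 0) * P (σ ℓ) D := by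
  by_cases hadj : ∀ k < ℓ, adj (σ (k+1)) (σ k)
  · haveI := hP.1 x; haveI := hP.1 (σ ℓ)
    set c := ((2*(d:ℝ≥0∞)))⁻¹ ^ ℓ with hc
    have hPc : P x (Cyl σ ℓ) = c := by
      have := hP.2 x ℓ σ hσ0; rwa [if_pos hadj] at this
    set μ := Measure.map (shift ℓ) ((P x).restrict (Cyl σ ℓ)) with hμ
    have hμap : ∀ {s : Set (ℕ → Zd d)}, MeasurableSet s → μ s = P x (Cyl σ ℓ ∩ shift ℓ ⁻¹' s) := by
      intro s hs
      rw [hμ, Measure.map_apply (meas_shift ℓ) hs,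
        Measure.restrict_apply (meas_shift ℓ hs), Set.inter_comm]
    haveI : IsFiniteMeasure ((P x).restrict (Cyl σ ℓ)) := by
      constructor
      rw [Measure.restrict_apply_univ]
      exact (measure_mono (Set.subset_univ _)).trans_lt (by simp [measure_univ])
    have key : μ = c • P (σ ℓ) := by
      refine ext_of_generate_finite (CylSys d) gen_CylSys isPiSystem_CylSys ?_ ?_
      · rintro s ⟨δ, N, rfl⟩
        rw [hμap (measSet_Cyl δ N), Measure.smul_apply, smul_eq_mul]
        by_cases hδ : δ 0 = σ ℓ
        · set τ : ℕ → Zd d := fun k => if k ≤ ℓ then σ k else δ (k - ℓ) with hτ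
          have hset : Cyl σ ℓ ∩ shift ℓ ⁻¹' Cyl δ N = Cyl τ (ℓ + N) := by
            ext ω
            simp only [Cyl, Set.mem_inter_iff, Set.mem_setOf_eq, Set.mem_preimage, shift, hτ]
            constructor
            · rintro ⟨h1, h2⟩ k hk
              by_cases hkℓ : k ≤ ℓ
              · rw [if_pos hkℓ]; exact h1 k hkℓ
              · rw [if_neg hkℓ]
                have he : ℓ + (k - ℓ) = k := by omega
                have h3 := h2 (k - ℓ) (by omega)
                rwa [he] at h3
            · intro h
              constructor
              · intro k hk
                have := h k (by omega)
                rwa [if_pos hk] at this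
              · intro k hk
                have := h (ℓ + k) (by omega)
                by_cases hk0 : k = 0
                · subst hk0
                  rw [if_pos (by omega)] at this
                  simpa [hδ] using this
                · rw [if_neg (by omega)] at this
                  simpa [show ℓ + k - ℓ = k by omega] using this
          rw [hset, P_Cyl hP x τ (ℓ + N) (by simp [hτ, hσ0]), P_Cyl hP (σ ℓ) δ N hδ]
          have hτeval : ∀ m : ℕ, τ m = if m ≤ ℓ then σ m else δ (m - ℓ) := fun m => rfl
          have hiff : (∀ k < ℓ + N, adj (τ (k+1)) (τ k)) ↔ (∀ k < N, adj (δ (k+1)) (δ k)) := by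
            constructor
            · intro h k hk
              have h5 := h (ℓ + k) (by omega)
              have e1 : τ (ℓ + k + 1) = δ (k + 1) := by
                rw [hτeval, if_neg (show ¬(ℓ + k + 1 ≤ ℓ) by omega),
                  show ℓ + k + 1 - ℓ = k + 1 by omega]
              have e2 : τ (ℓ + k) = δ k := by
                by_cases hk0 : k = 0
                · subst hk0
                  rw [hτeval, if_pos (show ℓ + 0 ≤ ℓ by omega)]
                  rw [show ℓ + 0 = ℓ from rfl]
                  exact hδ.symm
                · rw [hτeval, if_neg (show ¬(ℓ + k ≤ ℓ) by omega),
                    show ℓ + k - ℓ = k by omega]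
              rwa [e1, e2] at h5
            · intro h k hk
              by_cases hkℓ : k + 1 ≤ ℓ
              · have e1 : τ (k+1) = σ (k+1) := by rw [hτeval, if_pos hkℓ]
                have e2 : τ k = σ k := by rw [hτeval, if_pos (show k ≤ ℓ by omega)]
                rw [e1, e2]; exact hadj k (by omega)
              · by_cases hkℓ' : k ≤ ℓ
                · have hkeq : k = ℓ := by omega
                  subst hkeq
                  have e1 : τ (k+1) = δ 1 := by
                    rw [hτeval, if_neg (show ¬(k + 1 ≤ k) by omega),
                      show k + 1 - k = 1 by omega]
                  have e2 : τ k = δ 0 := by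
                    rw [hτeval, if_pos le_rfl]; exact hδ.symm
                  rw [e1, e2]
                  exact h 0 (by omega)
                · have e1 : τ (k+1) = δ (k + 1 - ℓ) := by
                    rw [hτeval, if_neg (show ¬(k + 1 ≤ ℓ) by omega)]
                  have e2 : τ k = δ (k - ℓ) := by
                    rw [hτeval, if_neg (show ¬(k ≤ ℓ) by omega)]
                  rw [e1, e2]
                  have h6 := h (k - ℓ) (by omega)
                  have e3 : k - ℓ + 1 = k + 1 - ℓ := by omega
                  rwa [e3] at h6
          by_cases hδadj : ∀ k < N, adj (δ (k+1)) (δ k)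
          · rw [if_pos (hiff.mpr hδadj), if_pos hδadj, pow_add]
          · rw [if_neg (fun hcon => hδadj (hiff.mp hcon)), if_neg hδadj, mul_zero]
        · have hset : Cyl σ ℓ ∩ shift ℓ ⁻¹' Cyl δ N = ∅ := by
            rw [Set.eq_empty_iff_forall_notMem]
            rintro ω ⟨h1, h2⟩
            have ha : ω ℓ = σ ℓ := h1 ℓ le_rfl
            have hb : ω (ℓ + 0) = δ 0 := h2 0 (Nat.zero_le N)
            simp only [Nat.add_zero] at hb
            exact hδ (hb ▸ ha ▸ rfl)
          rw [hset]
          have : P (σ ℓ) (Cyl δ N) = 0 := by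
            refine le_antisymm ?_ (zero_le)
            calc P (σ ℓ) (Cyl δ N) ≤ P (σ ℓ) {ω : ℕ → Zd d | ω 0 = δ 0} :=
                  measure_mono (Cyl_subset_coord δ N)
              _ = 0 := P_coord_ne hP hδ
          simp [this]
      · rw [hμap MeasurableSet.univ, Measure.smul_apply, smul_eq_mul, measure_univ, mul_one]
        simpa using hPc
    have := hμap hD
    rw [key] at this
    rw [← this, Measure.smul_apply, smul_eq_mul, if_pos hadj]
  · rw [if_neg hadj, zero_mul]
    have h0 : P x (Cyl σ ℓ) = 0 := by
      have := hP.2 x ℓ σ hσ0; rwa [if_neg hadj] at this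
    exact le_antisymm (le_trans (measure_mono Set.inter_subset_left) h0.le) (zero_le)

end QKaux
namespace QKaux
open MeasureTheory

variable {d : ℕ}

/-- Two-sided cylinders on `WT d`. -/
def wcyl (γ : ℤ → Zd d) (a b : ℤ) : Set (WT d) :=
  {w | ∀ n : ℤ, a ≤ n → n ≤ b → w.1 n = γ n}

lemma measSet_wcyl (γ : ℤ → Zd d) (a b : ℤ) : MeasurableSet (wcyl γ a b) := by
  have : wcyl γ a b = ⋂ (n : ℤ), ⋂ (_ : a ≤ n), ⋂ (_ : n ≤ b),
      (fun w : WT d => w.1 n) ⁻¹' {γ n} := by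
    ext w; simp [wcyl]
  rw [this]
  exact MeasurableSet.iInter fun n => MeasurableSet.iInter fun _ =>
    MeasurableSet.iInter fun _ => (meas_coordW n) (measSet_Zd _)

def wcylSys (d : ℕ) (ℓ : ℕ) : Set (Set (WT d)) :=
  {S | ∃ γ a b, a ≤ 0 ∧ (ℓ : ℤ) ≤ b ∧ S = wcyl γ a b}

lemma isPiSystem_wcylSys (ℓ : ℕ) : IsPiSystem (wcylSys d ℓ) := by
  rintro s ⟨γ, a, b, ha, hb, rfl⟩ t ⟨γ', a', b', ha', hb', rfl⟩ ⟨w₀, hw1, hw2⟩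
  refine ⟨w₀.1, min a a', max b b', by omega, by omega, ?_⟩
  ext w
  constructor
  · rintro ⟨h1, h2⟩ n hn1 hn2
    have hor : (a ≤ n ∧ n ≤ b) ∨ (a' ≤ n ∧ n ≤ b') := by
      have h0 : (0:ℤ) ≤ (ℓ:ℤ) := Int.ofNat_nonneg ℓ
      omega
    rcases hor with ⟨u, v⟩ | ⟨u, v⟩
    · rw [h1 n u v, ← hw1 n u v]
    · rw [h2 n u v, ← hw2 n u v]
  · intro h
    constructor
    · intro n u v; rw [h n (by omega) (by omega), hw1 n u v]
    · intro n u v; rw [h n (by omega) (by omega), hw2 n u v]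

lemma gen_wcylSys (ℓ : ℕ) : (inferInstance : MeasurableSpace (WT d)) =
    MeasurableSpace.generateFrom (wcylSys d ℓ) := by
  apply le_antisymm
  · have hcoord : ∀ (n : ℤ) (y : Zd d),
        MeasurableSet[MeasurableSpace.generateFrom (wcylSys d ℓ)] {w : WT d | w.1 n = y} := by
      intro n y
      set a := min n 0 with hadef
      set b := max n (ℓ : ℤ) with hbdef
      have hn : n ∈ Finset.Icc a b := by
        rw [Finset.mem_Icc]; constructor <;> omega
      have : {w : WT d | w.1 n = y} =
          ⋃ (p : {m : ℤ // m ∈ Finset.Icc a b} → Zd d) (_ : p ⟨n, hn⟩ = y),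
            wcyl (fun m => if h : m ∈ Finset.Icc a b then p ⟨m, h⟩ else y) a b := by
        ext w
        simp only [Set.mem_setOf_eq, Set.mem_iUnion]
        constructor
        · intro h
          refine ⟨fun m => w.1 m.1, h, fun m hm1 hm2 => ?_⟩
          show w.1 m = if h : m ∈ Finset.Icc a b then w.1 m else y
          rw [dif_pos (Finset.mem_Icc.mpr ⟨hm1, hm2⟩)]
        · rintro ⟨p, hp, hw⟩
          have h1 : w.1 n = if h : n ∈ Finset.Icc a b then p ⟨n, h⟩ else y :=
            hw n (Finset.mem_Icc.mp hn).1 (Finset.mem_Icc.mp hn).2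
          rw [dif_pos hn] at h1
          rw [h1, hp]
      rw [this]
      exact MeasurableSet.iUnion fun p => MeasurableSet.iUnion fun hp =>
        MeasurableSpace.measurableSet_generateFrom ⟨_, a, b, by omega, by omega, rfl⟩
    rw [show (inferInstance : MeasurableSpace (WT d)) =
        MeasurableSpace.comap (Subtype.val) (inferInstance : MeasurableSpace (ℤ → Zd d)) from rfl]
    rw [MeasurableSpace.comap_le_iff_le_map]
    rw [show (inferInstance : MeasurableSpace (ℤ → Zd d)) = MeasurableSpace.pi from rfl]
    refine iSup_le fun n => ?_
    rw [MeasurableSpace.comap_le_iff_le_map]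
    intro S hS
    rw [MeasurableSpace.map_def]
    rw [MeasurableSpace.map_def]
    have : Subtype.val ⁻¹' ((fun w : ℤ → Zd d => w n) ⁻¹' S) =
        ⋃ y ∈ S, {w : WT d | w.1 n = y} := by
      ext w; simp
    rw [this]
    exact MeasurableSet.biUnion S.to_countable fun y _ => hcoord n y
  · rw [MeasurableSpace.generateFrom_le_iff]
    rintro s ⟨γ, a, b, _, _, rfl⟩
    exact measSet_wcyl γ a b

variable {K : Finset (Zd d)}

/-- The set of trajectories in `W^0_K` whose last visit to `K` occurs at time `ℓ`. -/
def Aset (K : Finset (Zd d)) (ℓ : ℕ) : Set (WT d) :=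
  {w | w.1 0 ∈ K ∧ (∀ m : ℤ, m < 0 → w.1 m ∉ K) ∧ w.1 (ℓ : ℤ) ∈ K ∧
    ∀ m : ℤ, (ℓ : ℤ) < m → w.1 m ∉ K}

lemma measSet_Aset (ℓ : ℕ) : MeasurableSet (Aset K ℓ) := by
  have : Aset K ℓ = ((fun w : WT d => w.1 0) ⁻¹' ↑K) ∩
      (⋂ m : ℤ, ⋂ (_ : m < 0), (fun w : WT d => w.1 m) ⁻¹' (↑K : Set (Zd d))ᶜ) ∩
      ((fun w : WT d => w.1 (ℓ : ℤ)) ⁻¹' ↑K) ∩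
      (⋂ m : ℤ, ⋂ (_ : (ℓ:ℤ) < m), (fun w : WT d => w.1 m) ⁻¹' (↑K : Set (Zd d))ᶜ) := by
    ext w; simp [Aset]; tauto
  rw [this]
  refine MeasurableSet.inter (MeasurableSet.inter (MeasurableSet.inter ?_ ?_) ?_) ?_
  · exact (meas_coordW 0) (measSet_Zd _)
  · exact MeasurableSet.iInter fun m => MeasurableSet.iInter fun _ =>
      (meas_coordW m) (measSet_Zd _)
  · exact (meas_coordW _) (measSet_Zd _)
  · exact MeasurableSet.iInter fun m => MeasurableSet.iInter fun _ =>
      (meas_coordW m) (measSet_Zd _)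

lemma Aset_disjoint : Pairwise fun ℓ ℓ' : ℕ => Disjoint (Aset (d := d) K ℓ) (Aset K ℓ') := by
  intro ℓ ℓ' hne
  rcases hne.lt_or_gt with h | h
  · rw [Set.disjoint_left]
    rintro w ⟨_, _, _, h4⟩ ⟨_, _, h3', _⟩
    exact h4 (ℓ' : ℤ) (by exact_mod_cast h) h3'
  · rw [Set.disjoint_left]
    rintro w ⟨_, _, h3, _⟩ ⟨_, _, _, h4'⟩
    exact h4' (ℓ : ℤ) (by exact_mod_cast h) h3

/-- The visit set of `w` to `K` at nonnegative times. -/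
lemma visits_finite (w : WT d) : Set.Finite {n : ℕ | w.1 (n : ℤ) ∈ K} := by
  have h := w.2.2 K
  have : {n : ℕ | w.1 (n : ℤ) ∈ K} = (fun n : ℕ => (n : ℤ)) ⁻¹' {n : ℤ | w.1 n ∈ K} := rfl
  rw [this]
  exact Set.Finite.preimage (Set.injOn_of_injective (fun u v huv => by exact_mod_cast huv)) h

lemma lastTime_eq_of (w : WT d) (ℓ : ℕ) (h1 : w.1 (ℓ : ℤ) ∈ K)
    (h2 : ∀ m : ℕ, ℓ < m → w.1 (m : ℤ) ∉ K) : lastTime d K w = ℓ := by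
  unfold lastTime
  apply le_antisymm
  · exact csSup_le ⟨ℓ, h1⟩ (fun n hn => by by_contra hcon; exact h2 n (by omega) hn)
  · exact le_csSup ⟨ℓ, fun n hn => by by_contra hcon; exact h2 n (by omega) hn⟩ h1

lemma lastTime_eq_of_Aset {w : WT d} {ℓ : ℕ} (h : w ∈ Aset K ℓ) : lastTime d K w = ℓ := by
  obtain ⟨_, _, h3, h4⟩ := h
  exact lastTime_eq_of w ℓ h3 (fun m hm => h4 (m : ℤ) (by exact_mod_cast hm))

lemma mem_Aset_lastTime {w : WT d} (h0 : w.1 0 ∈ K) (hneg : ∀ m : ℤ, m < 0 → w.1 m ∉ K) :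
    w ∈ Aset K (lastTime d K w) := by
  have hfin := visits_finite (K := K) w
  have hne : {n : ℕ | w.1 (n : ℤ) ∈ K}.Nonempty := ⟨0, by exact_mod_cast h0⟩
  have hmem : lastTime d K w ∈ {n : ℕ | w.1 (n : ℤ) ∈ K} :=
    Nat.sSup_mem hne hfin.bddAbove
  refine ⟨h0, hneg, hmem, fun m hm => ?_⟩
  intro hcon
  have hm0 : (0:ℤ) ≤ m := le_trans (Int.ofNat_nonneg _) (le_of_lt hm)
  have : m.toNat ∈ {n : ℕ | w.1 (n : ℤ) ∈ K} := by
    show w.1 ((m.toNat : ℤ)) ∈ K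
    rwa [Int.toNat_of_nonneg hm0]
  have hle : m.toNat ≤ lastTime d K w := le_csSup hfin.bddAbove this
  omega

lemma meas_lastTime_eq (ℓ : ℕ) : MeasurableSet {w : WT d | lastTime d K w = ℓ} := by
  have : {w : WT d | lastTime d K w = ℓ} =
      {w : WT d | w.1 (ℓ : ℤ) ∈ K ∧ ∀ m : ℕ, ℓ < m → w.1 (m : ℤ) ∉ K} ∪
      {w : WT d | ℓ = 0 ∧ ∀ m : ℕ, w.1 (m : ℤ) ∉ K} := by
    ext w
    simp only [Set.mem_setOf_eq, Set.mem_union]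
    constructor
    · intro h
      rcases Set.eq_empty_or_nonempty {n : ℕ | w.1 (n : ℤ) ∈ K} with he | hne
      · right
        constructor
        · rw [← h]; unfold lastTime; rw [he]; exact csSup_empty
        · intro m hcon
          exact Set.eq_empty_iff_forall_notMem.mp he m hcon
      · left
        have hfin := visits_finite (K := K) w
        have hmem : sSup {n : ℕ | w.1 (n : ℤ) ∈ K} ∈ {n : ℕ | w.1 (n : ℤ) ∈ K} :=
          Nat.sSup_mem hne hfin.bddAbove
        have hL : lastTime d K w = sSup {n : ℕ | w.1 (n : ℤ) ∈ K} := rfl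
        rw [hL] at h
        constructor
        · rw [← h]; exact hmem
        · intro m hm hcon
          have : m ≤ sSup {n : ℕ | w.1 (n : ℤ) ∈ K} := le_csSup hfin.bddAbove hcon
          omega
    · rintro (⟨h1, h2⟩ | ⟨h1, h2⟩)
      · exact lastTime_eq_of w ℓ h1 h2
      · subst h1
        unfold lastTime
        have he : {n : ℕ | w.1 (n : ℤ) ∈ K} = ∅ :=
          Set.eq_empty_iff_forall_notMem.mpr (fun m => h2 m)
        rw [he]
        exact csSup_empty
  rw [this]
  apply MeasurableSet.union
  · have e : {w : WT d | w.1 (ℓ:ℤ) ∈ K ∧ ∀ m : ℕ, ℓ < m → w.1 (m:ℤ) ∉ K} =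
        ((fun w : WT d => w.1 (ℓ:ℤ)) ⁻¹' ↑K) ∩
        ⋂ m : ℕ, ⋂ (_ : ℓ < m), (fun w : WT d => w.1 (m:ℤ)) ⁻¹' (↑K : Set (Zd d))ᶜ := by
      ext w
      simp only [Set.mem_setOf_eq, Set.mem_inter_iff, Set.mem_preimage, Set.mem_iInter,
        Set.mem_compl_iff, Finset.mem_coe]
    rw [e]
    exact ((meas_coordW _) (measSet_Zd _)).inter (MeasurableSet.iInter fun m =>
      MeasurableSet.iInter fun _ => (meas_coordW _) (measSet_Zd _))
  · by_cases h : ℓ = 0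
    · have : {w : WT d | ℓ = 0 ∧ ∀ m : ℕ, w.1 (m : ℤ) ∉ K} =
          ⋂ m : ℕ, (fun w : WT d => w.1 (m : ℤ)) ⁻¹' (↑K : Set (Zd d))ᶜ := by
        ext w; simp [h]
      rw [this]
      exact MeasurableSet.iInter fun m => (meas_coordW _) (measSet_Zd _)
    · have : {w : WT d | ℓ = 0 ∧ ∀ m : ℕ, w.1 (m : ℤ) ∉ K} = ∅ := by
        ext w; simp [h]
      rw [this]
      exact MeasurableSet.empty

/-- Flip of a trajectory around time `t`. -/
def flipW (t : ℤ) (w : WT d) : WT d :=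
  ⟨fun n => w.1 (t - n), by
    constructor
    · intro n
      show adj (w.1 (t - (n + 1))) (w.1 (t - n))
      have h := w.2.1 (t - (n + 1))
      have e : t - (n + 1) + 1 = t - n := by ring
      rw [e] at h
      exact adj_symm h
    · intro A
      have h : {n : ℤ | w.1 (t - n) ∈ A}
          = (fun n : ℤ => t - n) ⁻¹' {n : ℤ | w.1 n ∈ A} := rfl
      rw [h]
      exact (w.2.2 A).preimage (Set.injOn_of_injective (fun u v huv => by omega))⟩

lemma revAt_eq_flipW (w : WT d) : revAt d K w = flipW (lastTime d K w : ℤ) w :=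
  Subtype.ext rfl

lemma flipW_flipW (t : ℤ) (w : WT d) : flipW t (flipW t w) = w :=
  Subtype.ext (funext fun n => congrArg w.1 (by ring))

lemma meas_flipW (t : ℤ) : Measurable (flipW (d := d) t) :=
  Measurable.subtype_mk (measurable_pi_lambda _ fun n => meas_coordW (t - n))

lemma meas_revAt : Measurable (revAt d K) := by
  apply Measurable.subtype_mk
  apply measurable_pi_lambda
  intro n
  intro S _
  have : (fun w : WT d => w.1 ((lastTime d K w : ℤ) - n)) ⁻¹' S =
      ⋃ ℓ : ℕ, {w : WT d | lastTime d K w = ℓ} ∩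
        ((fun w : WT d => w.1 ((ℓ : ℤ) - n)) ⁻¹' S) := by
    ext w
    simp only [Set.mem_preimage, Set.mem_iUnion, Set.mem_inter_iff, Set.mem_setOf_eq]
    constructor
    · intro h; exact ⟨lastTime d K w, rfl, h⟩
    · rintro ⟨ℓ, rfl, h⟩; exact h
  rw [this]
  exact MeasurableSet.iUnion fun ℓ => (meas_lastTime_eq ℓ).inter ((meas_coordW _) (measSet_Zd _))

end QKaux
namespace QKaux
open MeasureTheory

variable {d : ℕ} {P : Zd d → Measure (ℕ → Zd d)} {K : Finset (Zd d)} {QK : Measure (WT d)}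

def SQ (x : Zd d) (A B : Set (ℕ → Zd d)) : Set (WT d) :=
  {w : WT d | (fun n : ℕ => w.1 (-(n : ℤ))) ∈ A ∧ w.1 0 = x ∧ (fun n : ℕ => w.1 ((n : ℤ))) ∈ B}

lemma QK_SQ (hQK : IsQK d P K QK) (x : Zd d) {A B : Set (ℕ → Zd d)}
    (hA : MeasurableSet A) (hB : MeasurableSet B) :
    QK (SQ x A B) = if x ∈ K then P x (A ∩ escSet d K) * P x B else 0 :=
  hQK x A B hA hB

lemma measSet_escSet : MeasurableSet (escSet d K) := by
  have : escSet d K = ⋂ (n : ℕ), ⋂ (_ : 1 ≤ n), (fun ω : ℕ → Zd d => ω n) ⁻¹' (↑K : Set (Zd d))ᶜ := by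
    ext ω; simp [escSet]
  rw [this]
  exact MeasurableSet.iInter fun n => MeasurableSet.iInter fun _ => (meas_coordN n) (measSet_Zd _)

/-- `Q_K` gives no mass to trajectories visiting `K` at negative times. -/
lemma QK_neg_null (hQK : IsQK d P K QK) :
    QK {w : WT d | ∃ m : ℤ, m < 0 ∧ w.1 m ∈ K} = 0 := by
  have hsub : {w : WT d | ∃ m : ℤ, m < 0 ∧ w.1 m ∈ K} ⊆
      ⋃ (j : ℕ) (x : Zd d), SQ x {ω : ℕ → Zd d | ω (j+1) ∈ K} Set.univ := by
    rintro w ⟨m, hm, hmem⟩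
    have hj : (-m).toNat - 1 + 1 = (-m).toNat := by omega
    refine Set.mem_iUnion.mpr ⟨(-m).toNat - 1, Set.mem_iUnion.mpr ⟨w.1 0, ?_, rfl, trivial⟩⟩
    show w.1 (-(((-m).toNat - 1 + 1 : ℕ) : ℤ)) ∈ K
    rw [hj]
    have : (((-m).toNat : ℕ) : ℤ) = -m := Int.toNat_of_nonneg (by omega)
    rw [this, neg_neg]
    exact hmem
  refine le_antisymm (le_trans (measure_mono hsub) ?_) (zero_le)
  rw [measure_iUnion_null fun j => measure_iUnion_null fun x => ?_]
  have hA : MeasurableSet {ω : ℕ → Zd d | ω (j+1) ∈ K} := (meas_coordN (j+1)) (measSet_Zd _)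
  rw [QK_SQ hQK x hA MeasurableSet.univ]
  have hempty : {ω : ℕ → Zd d | ω (j+1) ∈ K} ∩ escSet d K = ∅ := by
    rw [Set.eq_empty_iff_forall_notMem]
    rintro ω ⟨h1, h2⟩
    exact h2 (j+1) (by omega) h1
  rw [hempty]
  simp

lemma QK_w0_null (hQK : IsQK d P K QK) : QK {w : WT d | w.1 0 ∉ K} = 0 := by
  have hsub : {w : WT d | w.1 0 ∉ K} ⊆
      ⋃ (x : Zd d), (if x ∈ K then (∅ : Set (WT d)) else SQ x Set.univ Set.univ) := by
    intro w hw
    refine Set.mem_iUnion.mpr ⟨w.1 0, ?_⟩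
    rw [if_neg hw]
    exact ⟨trivial, rfl, trivial⟩
  refine le_antisymm (le_trans (measure_mono hsub) ?_) (zero_le)
  rw [measure_iUnion_null fun x => ?_]
  by_cases hx : x ∈ K
  · rw [if_pos hx]; exact measure_empty
  · rw [if_neg hx, QK_SQ hQK x MeasurableSet.univ MeasurableSet.univ, if_neg hx]

/-- The complement of the sets `Aset K ℓ` is `Q_K`-null. -/
lemma QK_Aset_compl_null (hQK : IsQK d P K QK) : QK (⋃ ℓ : ℕ, Aset K ℓ)ᶜ = 0 := by
  have hsub : (⋃ ℓ : ℕ, Aset (d := d) K ℓ)ᶜ ⊆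
      {w : WT d | w.1 0 ∉ K} ∪ {w : WT d | ∃ m : ℤ, m < 0 ∧ w.1 m ∈ K} := by
    intro w hw
    by_cases h0 : w.1 0 ∈ K
    · by_cases hneg : ∀ m : ℤ, m < 0 → w.1 m ∉ K
      · exact absurd (Set.mem_iUnion.mpr ⟨lastTime d K w, mem_Aset_lastTime h0 hneg⟩) hw
      · right
        push_neg at hneg
        obtain ⟨m, hm1, hm2⟩ := hneg
        exact ⟨m, hm1, hm2⟩
    · left; exact h0
  refine le_antisymm (le_trans (measure_mono hsub) ?_) (zero_le)
  exact le_of_eq (measure_union_null (QK_w0_null hQK) (QK_neg_null hQK))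

lemma QK_finite (hP : IsSRW d P) (hQK : IsQK d P K QK) : IsFiniteMeasure QK := by
  constructor
  have hcover : (Set.univ : Set (WT d)) ⊆ ⋃ x : Zd d, SQ x Set.univ Set.univ :=
    fun w _ => Set.mem_iUnion.mpr ⟨w.1 0, trivial, rfl, trivial⟩
  have h1 : QK Set.univ ≤ ∑' x : Zd d, QK (SQ x Set.univ Set.univ) :=
    le_trans (measure_mono hcover) (measure_iUnion_le _)
  have h2 : ∀ x : Zd d, QK (SQ x Set.univ Set.univ) ≤ (if x ∈ K then 1 else 0) := by
    intro x
    rw [QK_SQ hQK x MeasurableSet.univ MeasurableSet.univ]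
    by_cases hx : x ∈ K
    · rw [if_pos hx, if_pos hx]
      haveI := hP.1 x
      exact mul_le_one' prob_le_one prob_le_one
    · rw [if_neg hx, if_neg hx]
  have h3 : ∑' x : Zd d, (if x ∈ K then (1:ℝ≥0∞) else 0) = ∑ x ∈ K, (if x ∈ K then (1:ℝ≥0∞) else 0) :=
    tsum_eq_sum (fun x hx => if_neg hx)
  calc QK Set.univ ≤ ∑' x : Zd d, QK (SQ x Set.univ Set.univ) := h1
    _ ≤ ∑' x : Zd d, (if x ∈ K then (1:ℝ≥0∞) else 0) :=
        ENNReal.tsum_le_tsum h2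
    _ = ∑ x ∈ K, (if x ∈ K then (1:ℝ≥0∞) else 0) := h3
    _ < ⊤ := by
        refine ENNReal.sum_lt_top.mpr fun x hx => ?_
        split_ifs <;> simp

end QKaux
namespace QKaux
open MeasureTheory

variable {d : ℕ} {P : Zd d → Measure (ℕ → Zd d)} {K : Finset (Zd d)} {QK : Measure (WT d)}

/-- The central computation: the `Q_K`-measure of a cylinder event intersected with
the event that the trajectory lies in `W^0_K` and has its last visit to `K` at time `ℓ`. -/
lemma QK_cyl_Aset (hP : IsSRW d P) (hQK : IsQK d P K QK) (η : ℤ → Zd d) {a b : ℤ} (ℓ : ℕ)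
    (ha : a ≤ 0) (hb : (ℓ:ℤ) ≤ b) :
    QK (wcyl η a b ∩ Aset K ℓ) =
      if (η 0 ∈ K ∧ η (ℓ:ℤ) ∈ K ∧ (∀ m : ℤ, a ≤ m → m < 0 → η m ∉ K) ∧
          (∀ m : ℤ, (ℓ:ℤ) < m → m ≤ b → η m ∉ K) ∧
          (∀ n : ℤ, a ≤ n → n < b → adj (η (n+1)) (η n)))
      then ((2*d:ℝ≥0∞))⁻¹ ^ (b - a).toNat * (P (η a) (escSet d K) * P (η b) (escSet d K))
      else 0 := by
  have hl0 : (0:ℤ) ≤ (ℓ:ℤ) := Int.ofNat_nonneg ℓ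
  have hb0 : (0:ℤ) ≤ b := le_trans hl0 hb
  set M : ℕ := (-a).toNat with hMdef
  have hM : ((M : ℕ) : ℤ) = -a := Int.toNat_of_nonneg (by omega)
  set bN : ℕ := b.toNat with hbNdef
  have hbN : ((bN : ℕ) : ℤ) = b := Int.toNat_of_nonneg hb0
  have hlbN : ℓ ≤ bN := by omega
  by_cases hη0 : η 0 ∈ K
  case neg =>
    have hempty : wcyl η a b ∩ Aset K ℓ = ∅ := by
      rw [Set.eq_empty_iff_forall_notMem]
      rintro w ⟨h1, h2, _, _, _⟩
      exact hη0 (h1 0 ha hb0 ▸ h2)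
    rw [hempty, measure_empty, if_neg (by tauto)]
  case pos =>
  set σa : ℕ → Zd d := fun k => η (-(k:ℤ)) with hσa
  set σb : ℕ → Zd d := fun k => η ((k:ℤ)) with hσb
  set Astar : Set (ℕ → Zd d) := Cyl σa M with hAstar
  set Bstar : Set (ℕ → Zd d) :=
    Cyl σb bN ∩ ((fun ω : ℕ → Zd d => ω ℓ) ⁻¹' ↑K) ∩
      (⋂ (m : ℕ), ⋂ (_ : ℓ < m), (fun ω : ℕ → Zd d => ω m) ⁻¹' (↑K : Set (Zd d))ᶜ) with hBstar
  have measA : MeasurableSet Astar := measSet_Cyl _ _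
  have measB : MeasurableSet Bstar := by
    refine (((measSet_Cyl _ _).inter ((meas_coordN ℓ) (measSet_Zd _))).inter ?_)
    exact MeasurableSet.iInter fun m => MeasurableSet.iInter fun _ =>
      (meas_coordN m) (measSet_Zd _)
  -- membership description of Bstar
  have hBmem : ∀ ω : ℕ → Zd d, ω ∈ Bstar ↔
      ((∀ k ≤ bN, ω k = σb k) ∧ ω ℓ ∈ K ∧ ∀ m : ℕ, ℓ < m → ω m ∉ K) := by
    intro ω
    rw [hBstar]
    simp only [Set.mem_inter_iff, Set.mem_preimage, Set.mem_iInter, Set.mem_compl_iff,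
      Finset.mem_coe, Cyl, Set.mem_setOf_eq]
    tauto
  -- Step 1: replace the event with an event of the canonical form, up to a null set
  have hsub1 : wcyl η a b ∩ Aset K ℓ ⊆ SQ (η 0) Astar Bstar := by
    rintro w ⟨hcyl, hK0, hneg, hKl, hafter⟩
    refine ⟨?_, hcyl 0 ha hb0, (hBmem _).mpr ⟨?_, ?_, ?_⟩⟩
    · intro k hk
      have hk' : (k:ℤ) ≤ (M:ℤ) := by exact_mod_cast hk
      have hk0 : (0:ℤ) ≤ (k:ℤ) := Int.ofNat_nonneg k
      exact hcyl (-(k:ℤ)) (by omega) (by omega)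
    · intro k hk
      have hk' : (k:ℤ) ≤ (bN:ℤ) := by exact_mod_cast hk
      have hk0 : (0:ℤ) ≤ (k:ℤ) := Int.ofNat_nonneg k
      exact hcyl ((k:ℤ)) (by omega) (by omega)
    · exact hKl
    · intro m hm
      exact hafter ((m:ℤ)) (by exact_mod_cast hm)
  have hsub2 : SQ (η 0) Astar Bstar ⊆
      (wcyl η a b ∩ Aset K ℓ) ∪ {w : WT d | ∃ m : ℤ, m < 0 ∧ w.1 m ∈ K} := by
    rintro w ⟨hbw, h0, hfw⟩
    obtain ⟨hfc, hfK, hfi⟩ := (hBmem _).mp hfw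
    by_cases hneg : ∀ m : ℤ, m < 0 → w.1 m ∉ K
    · left
      have hwcyl : w ∈ wcyl η a b := by
        intro n hn1 hn2
        rcases le_or_gt 0 n with hn0 | hn0
        · have hc := hfc n.toNat (by omega)
          have he : ((n.toNat : ℕ) : ℤ) = n := Int.toNat_of_nonneg hn0
          have hc' : w.1 ((n.toNat : ℕ) : ℤ) = η ((n.toNat : ℕ) : ℤ) := hc
          rwa [he] at hc'
        · set k : ℕ := (-n).toNat with hkdef
          have he : ((k : ℕ) : ℤ) = -n := Int.toNat_of_nonneg (by omega)
          have hc := hbw k (by omega)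
          have hc' : w.1 (-((k:ℕ):ℤ)) = η (-((k:ℕ):ℤ)) := hc
          have he2 : -((k:ℕ):ℤ) = n := by omega
          rwa [he2] at hc'
      refine ⟨hwcyl, h0 ▸ hη0, hneg, hfK, ?_⟩
      intro m hm
      have hm0 : (0:ℤ) ≤ m := le_trans hl0 (le_of_lt hm)
      have he : ((m.toNat : ℕ) : ℤ) = m := Int.toNat_of_nonneg hm0
      have := hfi m.toNat (by omega)
      rwa [he] at this
    · right
      push_neg at hneg
      obtain ⟨m, hm1, hm2⟩ := hneg
      exact ⟨m, hm1, hm2⟩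
  have hstep1 : QK (wcyl η a b ∩ Aset K ℓ) = QK (SQ (η 0) Astar Bstar) := by
    refine le_antisymm (measure_mono hsub1) ?_
    calc QK (SQ (η 0) Astar Bstar)
        ≤ QK ((wcyl η a b ∩ Aset K ℓ) ∪ {w : WT d | ∃ m : ℤ, m < 0 ∧ w.1 m ∈ K}) :=
          measure_mono hsub2
      _ ≤ QK (wcyl η a b ∩ Aset K ℓ) + QK {w : WT d | ∃ m : ℤ, m < 0 ∧ w.1 m ∈ K} :=
          measure_union_le _ _
      _ = QK (wcyl η a b ∩ Aset K ℓ) := by rw [QK_neg_null hQK, add_zero]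
  rw [hstep1, QK_SQ hQK (η 0) measA measB, if_pos hη0]
  -- Step 3: backward factor
  have hAesc : P (η 0) (Astar ∩ escSet d K) =
      (if (∀ m : ℤ, a ≤ m → m < 0 → η m ∉ K) ∧ (∀ k < M, adj (σa (k+1)) (σa k))
       then ((2*d:ℝ≥0∞))⁻¹ ^ M else 0) * P (η a) (escSet d K) := by
    by_cases hC3 : ∀ m : ℤ, a ≤ m → m < 0 → η m ∉ K
    · have hset : Astar ∩ escSet d K = Cyl σa M ∩ shift M ⁻¹' escSet d K := by
        ext ω
        simp only [hAstar, Set.mem_inter_iff, Set.mem_preimage]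
        refine and_congr_right fun hcy => ?_
        constructor
        · intro hesc n hn
          exact hesc (M + n) (by omega)
        · intro hesc n hn
          rcases le_or_gt n M with hnM | hnM
          · have := hcy n hnM
            rw [this, hσa]
            refine hC3 (-(n:ℤ)) ?_ ?_
            · have : (n:ℤ) ≤ (M:ℤ) := by exact_mod_cast hnM
              omega
            · have : (1:ℤ) ≤ (n:ℤ) := by exact_mod_cast hn
              omega
          · have h2 := hesc (n - M) (by omega)
            have h3 : ω (M + (n - M)) ∉ K := h2
            rwa [show M + (n - M) = n by omega] at h3
      rw [hset, P_markov hP (η 0) M σa (by rw [hσa]; simp) measSet_escSet]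
      have hend : σa M = η a := by rw [hσa]; show η (-(M:ℤ)) = η a; rw [hM]; ring_nf
      rw [hend]
      by_cases hadjA : ∀ k < M, adj (σa (k+1)) (σa k)
      · rw [if_pos hadjA, if_pos ⟨hC3, hadjA⟩]
      · rw [if_neg hadjA, if_neg (by tauto)]
    · have hset : Astar ∩ escSet d K = ∅ := by
        rw [Set.eq_empty_iff_forall_notMem]
        rintro ω ⟨hcy, hesc⟩
        push_neg at hC3
        obtain ⟨m, hm1, hm2, hm3⟩ := hC3
        set k : ℕ := (-m).toNat with hkdef
        have he : ((k:ℕ):ℤ) = -m := Int.toNat_of_nonneg (by omega)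
        have hc := hcy k (by omega)
        have hc' : ω k = η (-((k:ℕ):ℤ)) := hc
        have he2 : -((k:ℕ):ℤ) = m := by omega
        rw [he2] at hc'
        exact hesc k (by omega) (hc' ▸ hm3)
      rw [hset, measure_empty, if_neg (by tauto), zero_mul]
  -- Step 4: forward factor
  have hBesc : P (η 0) Bstar =
      (if (η (ℓ:ℤ) ∈ K ∧ (∀ m : ℤ, (ℓ:ℤ) < m → m ≤ b → η m ∉ K)) ∧
          (∀ k < bN, adj (σb (k+1)) (σb k))
       then ((2*d:ℝ≥0∞))⁻¹ ^ bN else 0) * P (η b) (escSet d K) := by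
    by_cases hC24 : η (ℓ:ℤ) ∈ K ∧ ∀ m : ℤ, (ℓ:ℤ) < m → m ≤ b → η m ∉ K
    · obtain ⟨hC2, hC4⟩ := hC24
      have hset : Bstar = Cyl σb bN ∩ shift bN ⁻¹' escSet d K := by
        ext ω
        rw [hBmem]
        simp only [Set.mem_inter_iff, Set.mem_preimage, Cyl, Set.mem_setOf_eq]
        constructor
        · rintro ⟨hcy, hK, hi⟩
          refine ⟨hcy, fun n hn => ?_⟩
          exact hi (bN + n) (by omega)
        · rintro ⟨hcy, hesc⟩
          refine ⟨hcy, ?_, ?_⟩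
          · have := hcy ℓ hlbN
            rw [this, hσb]
            exact hC2
          · intro m hm
            rcases le_or_gt m bN with hmb | hmb
            · have := hcy m hmb
              rw [this, hσb]
              refine hC4 ((m:ℤ)) (by exact_mod_cast hm) (by omega)
            · have h2 := hesc (m - bN) (by omega)
              have h3 : ω (bN + (m - bN)) ∉ K := h2
              rwa [show bN + (m - bN) = m by omega] at h3
      rw [hset, P_markov hP (η 0) bN σb (by rw [hσb]; simp) measSet_escSet]
      have hend : σb bN = η b := by rw [hσb]; show η ((bN:ℤ)) = η b; rw [hbN]
      rw [hend]
      by_cases hadjB : ∀ k < bN, adj (σb (k+1)) (σb k)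
      · rw [if_pos hadjB, if_pos ⟨⟨hC2, hC4⟩, hadjB⟩]
      · rw [if_neg hadjB, if_neg (by tauto)]
    · have hset : Bstar = ∅ := by
        rw [Set.eq_empty_iff_forall_notMem]
        intro ω hω
        obtain ⟨hcy, hK, hi⟩ := (hBmem _).mp hω
        by_cases hC2 : η (ℓ:ℤ) ∈ K
        · have hC4 : ¬ ∀ m : ℤ, (ℓ:ℤ) < m → m ≤ b → η m ∉ K := by tauto
          push_neg at hC4
          obtain ⟨m, hm1, hm2, hm3⟩ := hC4
          have hm0 : (0:ℤ) ≤ m := le_trans hl0 (le_of_lt hm1)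
          have he : ((m.toNat : ℕ) : ℤ) = m := Int.toNat_of_nonneg hm0
          have hc := hcy m.toNat (by omega)
          have hc' : ω m.toNat = η ((m.toNat : ℕ) : ℤ) := hc
          rw [he] at hc'
          exact hi m.toNat (by omega) (hc' ▸ hm3)
        · have hc : ω ℓ = η ((ℓ:ℕ):ℤ) := hcy ℓ hlbN
          exact hC2 (hc ▸ hK)
      rw [hset, measure_empty, if_neg (by tauto), zero_mul]
  rw [hAesc, hBesc]
  -- Step 5: combine
  have hadjiff : ((∀ k < M, adj (σa (k+1)) (σa k)) ∧ (∀ k < bN, adj (σb (k+1)) (σb k))) ↔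
      (∀ n : ℤ, a ≤ n → n < b → adj (η (n+1)) (η n)) := by
    constructor
    · rintro ⟨hA, hB⟩ n hn1 hn2
      rcases lt_or_ge n 0 with hn0 | hn0
      · set k : ℕ := (-n).toNat - 1 with hkdef
        have he : ((k:ℕ):ℤ) = -n - 1 := by
          have : ((-n).toNat : ℤ) = -n := Int.toNat_of_nonneg (by omega)
          omega
        have h := hA k (by omega)
        have h' : adj (η (-((k+1:ℕ):ℤ))) (η (-((k:ℕ):ℤ))) := h
        have e1 : -(((k+1:ℕ)):ℤ) = n := by push_cast; omega
        have e2 : -((k:ℕ):ℤ) = n + 1 := by omega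
        rw [e1, e2] at h'
        exact adj_symm h'
      · set k : ℕ := n.toNat with hkdef
        have he : ((k:ℕ):ℤ) = n := Int.toNat_of_nonneg hn0
        have h := hB k (by omega)
        have h' : adj (η (((k+1:ℕ)):ℤ)) (η ((k:ℕ):ℤ)) := h
        have e1 : (((k+1:ℕ)):ℤ) = n + 1 := by push_cast; omega
        rw [e1, he] at h'
        exact h'
    · intro h
      constructor
      · intro k hk
        have hk' : ((k:ℕ):ℤ) < (M:ℤ) := by exact_mod_cast hk
        have h0 : (0:ℤ) ≤ (k:ℤ) := Int.ofNat_nonneg k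
        have hh := h (-(k:ℤ) - 1) (by omega) (by omega)
        have e1 : -(k:ℤ) - 1 + 1 = -(k:ℤ) := by ring
        rw [e1] at hh
        rw [hσa]
        have e2 : -(((k+1:ℕ)):ℤ) = -(k:ℤ) - 1 := by push_cast; ring
        show adj (η (-((k+1:ℕ):ℤ))) (η (-(k:ℤ)))
        rw [e2]
        exact adj_symm hh
      · intro k hk
        have hk' : ((k:ℕ):ℤ) < (bN:ℤ) := by exact_mod_cast hk
        have h0 : (0:ℤ) ≤ (k:ℤ) := Int.ofNat_nonneg k
        have hh := h ((k:ℤ)) (by omega) (by omega)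
        rw [hσb]
        show adj (η (((k+1:ℕ):ℤ))) (η ((k:ℤ)))
        have e1 : (((k+1:ℕ)):ℤ) = (k:ℤ) + 1 := by push_cast; ring
        rw [e1]
        exact hh
  by_cases hC : η 0 ∈ K ∧ η (ℓ:ℤ) ∈ K ∧ (∀ m : ℤ, a ≤ m → m < 0 → η m ∉ K) ∧
      (∀ m : ℤ, (ℓ:ℤ) < m → m ≤ b → η m ∉ K) ∧
      (∀ n : ℤ, a ≤ n → n < b → adj (η (n+1)) (η n))
  · obtain ⟨h1, h2, h3, h4, h5⟩ := hC
    obtain ⟨hadjA, hadjB⟩ := hadjiff.mpr h5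
    rw [if_pos ⟨h3, hadjA⟩, if_pos ⟨⟨h2, h4⟩, hadjB⟩, if_pos ⟨h1, h2, h3, h4, h5⟩]
    have hexp : (b - a).toNat = M + bN := by omega
    rw [hexp, pow_add]
    ring
  · rw [if_neg hC]
    have : ¬((∀ m : ℤ, a ≤ m → m < 0 → η m ∉ K) ∧ (∀ k < M, adj (σa (k+1)) (σa k))) ∨
        ¬((η (ℓ:ℤ) ∈ K ∧ (∀ m : ℤ, (ℓ:ℤ) < m → m ≤ b → η m ∉ K)) ∧
          (∀ k < bN, adj (σb (k+1)) (σb k))) := by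
      by_contra hcon
      push_neg at hcon
      obtain ⟨hc1, hc2⟩ := hcon
      exact hC ⟨hη0, hc2.1.1, hc1.1, hc2.1.2, hadjiff.mp ⟨hc1.2, hc2.2⟩⟩
    rcases this with h | h
    · rw [if_neg h, zero_mul, zero_mul]
    · rw [if_neg h, zero_mul, mul_zero]

end QKaux
namespace QKaux
open MeasureTheory

variable {d : ℕ} {P : Zd d → Measure (ℕ → Zd d)} {K : Finset (Zd d)} {QK : Measure (WT d)}

lemma QK_flip_inv (hP : IsSRW d P) (hQK : IsQK d P K QK) (ℓ : ℕ) {S : Set (WT d)}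
    (hS : MeasurableSet S) :
    QK (flipW (ℓ:ℤ) ⁻¹' S ∩ Aset K ℓ) = QK (S ∩ Aset K ℓ) := by
  haveI := QK_finite hP hQK
  set μ1 := (QK.restrict (Aset K ℓ)).map (flipW (ℓ:ℤ)) with hμ1def
  set μ2 := QK.restrict (Aset K ℓ) with hμ2def
  have hμ1 : ∀ {T : Set (WT d)}, MeasurableSet T →
      μ1 T = QK (flipW (ℓ:ℤ) ⁻¹' T ∩ Aset K ℓ) := by
    intro T hT
    rw [hμ1def, Measure.map_apply (meas_flipW _) hT,
      Measure.restrict_apply (meas_flipW _ hT)]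
  have hμ2 : ∀ {T : Set (WT d)}, MeasurableSet T → μ2 T = QK (T ∩ Aset K ℓ) := by
    intro T hT
    rw [hμ2def, Measure.restrict_apply hT]
  haveI : IsFiniteMeasure μ2 := by
    constructor
    rw [hμ2def, Measure.restrict_apply_univ]
    exact (measure_mono (Set.subset_univ _)).trans_lt (measure_lt_top QK Set.univ)
  haveI : IsFiniteMeasure μ1 := by
    constructor
    rw [hμ1 MeasurableSet.univ]
    exact (measure_mono (Set.subset_univ _)).trans_lt (measure_lt_top QK Set.univ)
  have key : μ1 = μ2 := by
    refine ext_of_generate_finite (wcylSys d ℓ) (gen_wcylSys ℓ) (isPiSystem_wcylSys ℓ) ?_ ?_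
    · rintro s ⟨γ, a, b, ha, hb, rfl⟩
      rw [hμ1 (measSet_wcyl γ a b), hμ2 (measSet_wcyl γ a b)]
      have hflip : flipW (ℓ:ℤ) ⁻¹' wcyl γ a b =
          wcyl (fun m => γ ((ℓ:ℤ) - m)) ((ℓ:ℤ) - b) ((ℓ:ℤ) - a) := by
        ext w
        constructor
        · intro h m hm1 hm2
          have h2 : w.1 ((ℓ:ℤ) - ((ℓ:ℤ) - m)) = γ ((ℓ:ℤ) - m) := h ((ℓ:ℤ) - m) (by omega) (by omega)
          have e : (ℓ:ℤ) - ((ℓ:ℤ) - m) = m := by ring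
          rwa [e] at h2
        · intro h n hn1 hn2
          have h2 : w.1 ((ℓ:ℤ) - n) = γ ((ℓ:ℤ) - ((ℓ:ℤ) - n)) :=
            h ((ℓ:ℤ) - n) (by omega) (by omega)
          have e : (ℓ:ℤ) - ((ℓ:ℤ) - n) = n := by ring
          rw [e] at h2
          exact h2
      rw [hflip, QK_cyl_Aset hP hQK _ ℓ (by omega) (by omega),
        QK_cyl_Aset hP hQK γ ℓ ha hb]
      simp only [sub_sub_cancel, sub_zero, sub_self]
      have he : ((ℓ:ℤ) - a - ((ℓ:ℤ) - b)).toNat = (b - a).toNat := by omega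
      rw [he, mul_comm (P (γ b) (escSet d K)) (P (γ a) (escSet d K))]
      refine if_congr ?_ rfl rfl
      constructor
      · rintro ⟨h1, h2, h3, h4, h5⟩
        refine ⟨h2, h1, ?_, ?_, ?_⟩
        · intro m hm1 hm2
          have h6 := h4 ((ℓ:ℤ) - m) (by omega) (by omega)
          rwa [show (ℓ:ℤ) - ((ℓ:ℤ) - m) = m by ring] at h6
        · intro m hm1 hm2
          have h6 := h3 ((ℓ:ℤ) - m) (by omega) (by omega)
          rwa [show (ℓ:ℤ) - ((ℓ:ℤ) - m) = m by ring] at h6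
        · intro n hn1 hn2
          have h6 := h5 ((ℓ:ℤ) - n - 1) (by omega) (by omega)
          rw [show (ℓ:ℤ) - ((ℓ:ℤ) - n - 1 + 1) = n by ring,
            show (ℓ:ℤ) - ((ℓ:ℤ) - n - 1) = n + 1 by ring] at h6
          exact adj_symm h6
      · rintro ⟨h1, h2, h3, h4, h5⟩
        refine ⟨h2, h1, ?_, ?_, ?_⟩
        · intro m hm1 hm2
          exact h4 ((ℓ:ℤ) - m) (by omega) (by omega)
        · intro m hm1 hm2
          exact h3 ((ℓ:ℤ) - m) (by omega) (by omega)
        · intro n hn1 hn2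
          have h6 := h5 ((ℓ:ℤ) - n - 1) (by omega) (by omega)
          rw [show (ℓ:ℤ) - n - 1 + 1 = (ℓ:ℤ) - n by ring] at h6
          rw [show (ℓ:ℤ) - (n + 1) = (ℓ:ℤ) - n - 1 by ring]
          exact adj_symm h6
    · rw [hμ1 MeasurableSet.univ, hμ2 MeasurableSet.univ, Set.preimage_univ]
  rw [← hμ1 hS, key, hμ2 hS]

lemma QK_map_rev (hP : IsSRW d P) (hQK : IsQK d P K QK) :
    QK.map (revAt d K) = QK := by
  haveI := QK_finite hP hQK
  ext S hS
  rw [Measure.map_apply meas_revAt hS]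
  have hdecomp : ∀ (T : Set (WT d)), MeasurableSet T →
      QK T = ∑' ℓ : ℕ, QK (T ∩ Aset K ℓ) := by
    intro T hT
    have h1 : QK T = QK (T ∩ ⋃ ℓ, Aset K ℓ) := by
      refine le_antisymm ?_ (measure_mono Set.inter_subset_left)
      calc QK T ≤ QK ((T ∩ ⋃ ℓ, Aset K ℓ) ∪ (⋃ ℓ : ℕ, Aset (d := d) K ℓ)ᶜ) := by
            refine measure_mono fun w hw => ?_
            by_cases h : w ∈ ⋃ ℓ, Aset K ℓ
            · exact Or.inl ⟨hw, h⟩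
            · exact Or.inr h
        _ ≤ QK (T ∩ ⋃ ℓ, Aset K ℓ) + QK (⋃ ℓ : ℕ, Aset (d := d) K ℓ)ᶜ := measure_union_le _ _
        _ = QK (T ∩ ⋃ ℓ, Aset K ℓ) := by rw [QK_Aset_compl_null hQK, add_zero]
    rw [h1, Set.inter_iUnion, measure_iUnion ?_ (fun ℓ => hT.inter (measSet_Aset ℓ))]
    intro i j hij
    exact ((Aset_disjoint hij).mono Set.inter_subset_right Set.inter_subset_right :)
  rw [hdecomp _ (meas_revAt hS), hdecomp S hS]
  refine tsum_congr fun ℓ => ?_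
  have hkey : ∀ w : WT d, w ∈ Aset K ℓ → revAt d K w = flipW (ℓ:ℤ) w := by
    intro w hw
    rw [revAt_eq_flipW, lastTime_eq_of_Aset hw]
  have hAeq : revAt d K ⁻¹' S ∩ Aset K ℓ = flipW (ℓ:ℤ) ⁻¹' S ∩ Aset K ℓ := by
    ext w
    constructor
    · rintro ⟨h1, h2⟩
      refine ⟨?_, h2⟩
      show flipW (ℓ:ℤ) w ∈ S
      rw [← hkey w h2]
      exact h1
    · rintro ⟨h1, h2⟩
      refine ⟨?_, h2⟩
      show revAt d K w ∈ S
      rw [hkey w h2]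
      exact h1
  rw [hAeq, QK_flip_inv hP hQK ℓ hS]

end QKaux
/-- **Time-reversal invariance of `Q_K`.** The map `w ↦ ŵ`, `ŵ(n) = w(L_K(w) − n)`,
maps `W^0_K` into itself and the image of `Q_K` under it equals `Q_K`. -/
theorem QK_time_reversal
    (d : ℕ) (hd : 3 ≤ d) (P : Zd d → Measure (ℕ → Zd d)) (hP : IsSRW d P)
    (K : Finset (Zd d)) (QK : Measure (WT d)) (hQK : IsQK d P K QK) :
    (∀ w : WT d, w.1 0 ∈ K → (∀ n : ℤ, n < 0 → w.1 n ∉ K) →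
      ((revAt d K w).1 0 ∈ K ∧ ∀ n : ℤ, n < 0 → (revAt d K w).1 n ∉ K))
    ∧ QK.map (revAt d K) = QK := by
  constructor
  · intro w h0 hneg
    obtain ⟨_, _, h3, h4⟩ := QKaux.mem_Aset_lastTime (K := K) h0 hneg
    constructor
    · show w.1 ((lastTime d K w : ℤ) - 0) ∈ K
      rw [sub_zero]
      exact h3
    · intro n hn
      show w.1 ((lastTime d K w : ℤ) - n) ∉ K
      exact h4 _ (by omega)
  · exact QKaux.QK_map_rev hP hQK
end

section
/- (Exponential moment of occupation time of a low-dimensional set.) Let d ≥ 4 and 1 ≤ m ≤ d−3, and let λ > 0 satisfy χ(λ) := e^λ·(m/d + (1 − m/d)·q(d−m)) < 1. Let F ∈ ℒ_m be an m-dimensional coordinate affine sublattice of ℤ^d and A ⊆ F finite, and set f_A = Σ_{n≥0} 1{X_n ∈ A}. Then sup_{x∈ℤ^d} E_x[exp(λ f_A)] ≤ 1 + (e^λ − 1)/(1 − χ(λ)), and consequently E_{e_A}[exp(λ f_A) − 1] ≤ cap(A)·(e^λ − 1)/(1 − χ(λ)). -/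
open MeasureTheory
open scoped ENNReal

/-- The capacity `cap(K) = Σ_x e_K(x)`. -/
noncomputable def capa (d : ℕ) (P : Zd d → Measure (ℕ → Zd d)) (K : Finset (Zd d)) : ℝ≥0∞ :=
  ∑ x ∈ K, eqm d P K x

/-- `Q` is a vacant-set law at level `u`:
`Q[Y_z = 1 for z ∈ K] = exp(−u·cap(K))` for every finite `K`. -/
def IsVacantLaw (d : ℕ) (P : Zd d → Measure (ℕ → Zd d)) (u : ℝ)
    (Q : Measure (Zd d → Bool)) : Prop :=
  IsProbabilityMeasure Q ∧
  ∀ K : Finset (Zd d),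
    Q {ω | ∀ z ∈ K, ω z = true} = ENNReal.ofReal (Real.exp (-(u * (capa d P K).toReal)))

/- `exp(λ f_A)(w)` where `f_A(w) = Σ_{n≥0} 1{X_n(w) ∈ A}` is the total occupation time
of `A` (value `∞` when `A` is visited infinitely often). -/
open Classical in
noncomputable def expOcc (d : ℕ) (lam : ℝ) (A : Finset (Zd d)) (w : ℕ → Zd d) : ℝ≥0∞ :=
  if h : {n : ℕ | w n ∈ A}.Finite then ENNReal.ofReal (Real.exp (lam * h.toFinset.card))
  else ⊤

/-- The return probability `q(ν)` of simple random walk on `ℤ^ν`. -/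
noncomputable def retProb (ν : ℕ) (Pν : Zd ν → Measure (ℕ → Zd ν)) : ℝ :=
  (Pν 0 {w : ℕ → Zd ν | ∃ n : ℕ, 1 ≤ n ∧ w n = 0}).toReal

/-- `χ(λ) = e^λ (m/d + (1 − m/d) q(d−m))`. -/
noncomputable def chiVal (d m : ℕ) (q lam : ℝ) : ℝ :=
  Real.exp lam * ((m : ℝ) / d + (1 - (m : ℝ) / d) * q)

namespace SRWp
variable {ν : ℕ}

lemma measurableSet_coordEq (n : ℕ) (s : Set (Zd ν)) :
    MeasurableSet {w : ℕ → Zd ν | w n ∈ s} := by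
  show MeasurableSet ((fun w : ℕ → Zd ν => w n) ⁻¹' s)
  exact (measurable_pi_apply n) (s.to_countable.measurableSet)

def cyl (N : ℕ) (γ : ℕ → Zd ν) : Set (ℕ → Zd ν) := {w | ∀ k ≤ N, w k = γ k}
def shift (n : ℕ) (w : ℕ → Zd ν) : ℕ → Zd ν := fun k => w (n + k)
lemma measurable_shift (n : ℕ) : Measurable (shift (ν := ν) n) :=
  measurable_pi_lambda _ (fun k => measurable_pi_apply (n + k))
lemma measurableSet_cyl (N : ℕ) (γ : ℕ → Zd ν) : MeasurableSet (cyl N γ) := by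
  have : cyl N γ = ⋂ k ∈ Finset.range (N+1), (fun w : ℕ → Zd ν => w k) ⁻¹' {γ k} := by
    ext w; simp [cyl, Nat.lt_succ_iff]
  rw [this]
  exact MeasurableSet.biInter (Finset.range (N+1)).countable_toSet
    (fun k _ => (measurable_pi_apply k) (MeasurableSet.singleton _))
def cylSet (ν : ℕ) : Set (Set (ℕ → Zd ν)) := {S | ∃ N γ, S = cyl N γ}
lemma isPiSystem_cyl : IsPiSystem (cylSet ν) := by
  rintro s ⟨N, γ, rfl⟩ t ⟨M, δ, rfl⟩ ⟨w, hw1, hw2⟩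
  rcases le_total N M with h | h
  · have : cyl N γ ∩ cyl M δ = cyl M δ := by
      apply Set.inter_eq_self_of_subset_right
      intro u hu k hk
      rw [hu k (hk.trans h), ← hw2 k (hk.trans h), hw1 k hk]
    rw [this]; exact ⟨M, δ, rfl⟩
  · have : cyl N γ ∩ cyl M δ = cyl N γ := by
      apply Set.inter_eq_self_of_subset_left
      intro u hu k hk
      rw [hu k (hk.trans h), ← hw1 k (hk.trans h), hw2 k hk]
    rw [this]; exact ⟨N, γ, rfl⟩
lemma coord_mem_generate (n : ℕ) (a : Zd ν) :
    MeasurableSet[MeasurableSpace.generateFrom (cylSet ν)] {w : ℕ → Zd ν | w n = a} := by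
  have : {w : ℕ → Zd ν | w n = a}
      = ⋃ p : {p : Fin (n+1) → Zd ν // p ⟨n, Nat.lt_succ_self n⟩ = a},
        cyl n (fun k => if h : k < n + 1 then p.1 ⟨k, h⟩ else a) := by
    ext w
    constructor
    · intro hw
      refine Set.mem_iUnion.2 ⟨⟨fun k => w k, by simpa using hw⟩, ?_⟩
      intro k hk
      simp [Nat.lt_succ_iff.2 hk]
    · rintro hw
      rcases Set.mem_iUnion.1 hw with ⟨p, hp⟩
      have := hp n le_rfl
      simpa [p.2] using this
  rw [this]
  exact MeasurableSet.iUnion (fun p => MeasurableSpace.measurableSet_generateFrom ⟨_, _, rfl⟩)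
lemma generateFrom_cyl :
    (inferInstance : MeasurableSpace (ℕ → Zd ν)) = MeasurableSpace.generateFrom (cylSet ν) := by
  apply le_antisymm
  · rw [MeasurableSpace.pi_eq_generateFrom_projections]
    apply MeasurableSpace.generateFrom_le
    rintro S ⟨n, s, hs, rfl⟩
    have : (fun w : ℕ → Zd ν => w n) ⁻¹' s = ⋃ a : s, {w : ℕ → Zd ν | w n = a.1} := by
      ext w; simp
    rw [this]
    exact MeasurableSet.iUnion (fun a => coord_mem_generate n a.1)
  · apply MeasurableSpace.generateFrom_le
    rintro S ⟨N, γ, rfl⟩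
    exact measurableSet_cyl N γ

variable {P : Zd ν → Measure (ℕ → Zd ν)}

lemma cyl_measure (hP : IsSRW ν P) (x : Zd ν) (N : ℕ) (γ : ℕ → Zd ν) (hγ : γ 0 = x) :
    P x (cyl N γ) = if ∀ k < N, adj (γ (k + 1)) (γ k) then ((2 * ν : ℝ≥0∞))⁻¹ ^ N else 0 :=
  hP.2 x N γ hγ

lemma start_full (hP : IsSRW ν P) (x : Zd ν) : P x {w | w 0 = x} = 1 := by
  have := hP.2 x 0 (fun _ => x) rfl
  simpa using this

lemma start_null (hP : IsSRW ν P) (x : Zd ν) : P x {w | w 0 = x}ᶜ = 0 := by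
  have h1 : IsProbabilityMeasure (P x) := hP.1 x
  have hms : MeasurableSet {w : ℕ → Zd ν | w 0 = x} := measurableSet_coordEq 0 {x}
  rw [measure_compl hms (by simp)]
  simp [start_full hP x]

lemma measure_inter_start (hP : IsSRW ν P) (x : Zd ν) (S : Set (ℕ → Zd ν)) :
    P x (S ∩ {w | w 0 = x}) = P x S := by
  apply le_antisymm (measure_mono Set.inter_subset_left)
  calc P x S ≤ P x ((S ∩ {w | w 0 = x}) ∪ {w | w 0 = x}ᶜ) := by
        apply measure_mono; intro w hw
        by_cases h : w 0 = x
        · exact Or.inl ⟨hw, h⟩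
        · exact Or.inr h
    _ ≤ P x (S ∩ {w | w 0 = x}) + P x {w | w 0 = x}ᶜ := measure_union_le _ _
    _ = P x (S ∩ {w | w 0 = x}) := by rw [start_null hP x, add_zero]

lemma null_of_start_ne (hP : IsSRW ν P) (x a : Zd ν) (ha : a ≠ x)
    (S : Set (ℕ → Zd ν)) (hS : S ⊆ {w | w 0 = a}) : P x S = 0 := by
  apply le_antisymm _ zero_le
  calc P x S ≤ P x {w | w 0 = x}ᶜ := by
        apply measure_mono
        intro w hw h0
        exact ha ((hS hw).symm.trans h0)
    _ = 0 := start_null hP x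

/-- Markov property. -/
lemma markov (hP : IsSRW ν P) (x : Zd ν) (n : ℕ) (γ : ℕ → Zd ν) (hγ : γ 0 = x)
    (E : Set (ℕ → Zd ν)) (hE : MeasurableSet E) :
    P x (cyl n γ ∩ shift n ⁻¹' E)
      = (if ∀ k < n, adj (γ (k+1)) (γ k) then ((2 * ν : ℝ≥0∞))⁻¹ ^ n else 0) * P (γ n) E := by
  by_cases hval : ∀ k < n, adj (γ (k+1)) (γ k)
  swap
  · rw [if_neg hval, zero_mul]
    apply le_antisymm _ zero_le
    calc P x (cyl n γ ∩ shift n ⁻¹' E) ≤ P x (cyl n γ) := measure_mono Set.inter_subset_left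
      _ = 0 := by rw [cyl_measure hP x n γ hγ, if_neg hval]
  rw [if_pos hval]
  set c : ℝ≥0∞ := ((2 * ν : ℝ≥0∞))⁻¹ ^ n with hc
  have hPx : IsProbabilityMeasure (P x) := hP.1 x
  have hPγ : IsProbabilityMeasure (P (γ n)) := hP.1 (γ n)
  set μ₁ : Measure (ℕ → Zd ν) := Measure.map (shift n) ((P x).restrict (cyl n γ)) with hμ₁
  set μ₂ : Measure (ℕ → Zd ν) := c • P (γ n) with hμ₂
  have hcylP : P x (cyl n γ) = c := by
    rw [cyl_measure hP x n γ hγ, if_pos hval]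
  have h1 : ∀ E, MeasurableSet E → μ₁ E = P x (cyl n γ ∩ shift n ⁻¹' E) := by
    intro E hE
    rw [hμ₁, Measure.map_apply (measurable_shift n) hE,
      Measure.restrict_apply (measurable_shift n hE), Set.inter_comm]
  suffices h : μ₁ = μ₂ by
    have h2 := h1 E hE
    rw [h] at h2
    rw [← h2, hμ₂]
    simp [Measure.smul_apply]
  have hfin : IsFiniteMeasure μ₁ := by
    constructor
    rw [h1 _ MeasurableSet.univ]
    exact lt_of_le_of_lt (measure_mono (Set.subset_univ _)) (by simp [hPx.measure_univ])
  apply ext_of_generate_finite (cylSet ν) generateFrom_cyl isPiSystem_cyl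
  · rintro s ⟨N, δ, rfl⟩
    rw [h1 _ (measurableSet_cyl N δ)]
    by_cases hδ0 : δ 0 = γ n
    · set γδ : ℕ → Zd ν := fun k => if k ≤ n then γ k else δ (k - n) with hγδdef
      have hγδ : ∀ k, γδ k = if k ≤ n then γ k else δ (k - n) := fun k => rfl
      have hset : cyl n γ ∩ shift n ⁻¹' cyl N δ = cyl (n + N) γδ := by
        ext w
        constructor
        · rintro ⟨ha, hb⟩ k hk
          rw [hγδ k]
          by_cases hkn : k ≤ n
          · rw [if_pos hkn]; exact ha k hkn
          · rw [if_neg hkn]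
            push_neg at hkn
            have h3 : k - n ≤ N := by omega
            have h5 : w (n + (k - n)) = δ (k - n) := hb (k - n) h3
            have e : n + (k - n) = k := by omega
            rw [e] at h5
            exact h5
        · intro h
          constructor
          · intro k hk
            have := h k (by omega)
            rwa [hγδ k, if_pos hk] at this
          · intro k hk
            have h4 := h (n + k) (by omega)
            rw [hγδ (n + k)] at h4
            rcases Nat.eq_zero_or_pos k with rfl | hk0
            · have h2 := h n (by omega)
              rw [hγδ n, if_pos le_rfl] at h2
              show w (n + 0) = δ 0
              rw [Nat.add_zero, hδ0]
              exact h2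
            · rw [if_neg (by omega)] at h4
              show w (n + k) = δ k
              have e : n + k - n = k := by omega
              rw [e] at h4
              exact h4
      rw [hset, cyl_measure hP x (n + N) γδ (by rw [hγδ 0, if_pos (Nat.zero_le n)]; exact hγ)]
      have hvδ : ∀ k, n ≤ k → (adj (γδ (k+1)) (γδ k) ↔ adj (δ (k+1-n)) (δ (k-n))) := by
        intro k hnk
        have hk1 : ¬ (k + 1 ≤ n) := by omega
        rw [hγδ (k+1), if_neg hk1, hγδ k]
        by_cases hkeq : k ≤ n
        · have he : k = n := le_antisymm hkeq hnk
          rw [if_pos hkeq]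
          have e0 : k - n = 0 := by omega
          rw [e0, hδ0, he]
        · rw [if_neg hkeq]
      have hvγ : ∀ k, k < n → (adj (γδ (k+1)) (γδ k) ↔ adj (γ (k+1)) (γ k)) := by
        intro k hk
        rw [hγδ (k+1), hγδ k, if_pos (by omega), if_pos (by omega)]
      have hiff : (∀ k < n + N, adj (γδ (k+1)) (γδ k)) ↔ (∀ k < N, adj (δ (k+1)) (δ k)) := by
        constructor
        · intro h k hk
          have h5 := (hvδ (k + n) (by omega)).1 (h (k + n) (by omega))
          have e1 : k + n + 1 - n = k + 1 := by omega
          have e2 : k + n - n = k := by omega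
          rwa [e1, e2] at h5
        · intro h k hk
          by_cases hkn : k < n
          · exact (hvγ k hkn).2 (hval k hkn)
          · push_neg at hkn
            refine (hvδ k hkn).2 ?_
            have e : k + 1 - n = k - n + 1 := by omega
            rw [e]
            have h3 : k - n < N := by omega
            exact h (k - n) h3
      by_cases hvd : ∀ k < N, adj (δ (k+1)) (δ k)
      · rw [if_pos (hiff.2 hvd), hμ₂]
        simp only [Measure.smul_apply, smul_eq_mul]
        rw [cyl_measure hP (γ n) N δ hδ0, if_pos hvd, hc, pow_add]
      · rw [if_neg (fun h => hvd (hiff.1 h)), hμ₂]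
        simp only [Measure.smul_apply, smul_eq_mul]
        rw [cyl_measure hP (γ n) N δ hδ0, if_neg hvd, mul_zero]
    · have hset : cyl n γ ∩ shift n ⁻¹' cyl N δ = ∅ := by
        ext w
        simp only [Set.mem_inter_iff, Set.mem_empty_iff_false, iff_false]
        rintro ⟨ha, hb⟩
        have h1 : w n = δ 0 := hb 0 (Nat.zero_le _)
        exact hδ0 (h1.symm.trans (ha n le_rfl))
      rw [hset]
      simp only [measure_empty, hμ₂, Measure.smul_apply, smul_eq_mul]
      have : P (γ n) (cyl N δ) = 0 :=
        null_of_start_ne hP (γ n) (δ 0) hδ0 _ (fun w hw => hw 0 (Nat.zero_le _))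
      rw [this, mul_zero]
  · rw [h1 _ MeasurableSet.univ]
    simp only [Set.preimage_univ, Set.inter_univ, hcylP, hμ₂]
    simp [hPγ.measure_univ]

/-- Unconditional product form. -/
lemma markov_prod (hP : IsSRW ν P) (x : Zd ν) (n : ℕ) (γ : ℕ → Zd ν)
    (E : Set (ℕ → Zd ν)) (hE : MeasurableSet E) :
    P x (cyl n γ ∩ shift n ⁻¹' E) = P x (cyl n γ) * P (γ n) E := by
  by_cases hγ : γ 0 = x
  · rw [markov hP x n γ hγ E hE]
    congr 1
    rw [cyl_measure hP x n γ hγ]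
  · have h0 : P x (cyl n γ) = 0 :=
      null_of_start_ne hP x (γ 0) hγ _ (fun w hw => hw 0 (Nat.zero_le _))
    rw [h0, zero_mul]
    apply le_antisymm _ zero_le
    calc P x (cyl n γ ∩ shift n ⁻¹' E) ≤ P x (cyl n γ) := measure_mono Set.inter_subset_left
      _ = 0 := h0

/-! ### Neighbors -/

def nbr (x : Zd ν) (i : Fin ν) (s : Bool) : Zd ν :=
  Function.update x i (x i + if s then 1 else -1)

lemma adj_nbr (x : Zd ν) (i : Fin ν) (s : Bool) : adj (nbr x i s) x := by
  unfold adj nbr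
  rw [Finset.sum_eq_single i]
  · simp only [Function.update_self]
    cases s <;> simp
  · intro j _ hj
    simp [Function.update_of_ne hj]
  · simp

lemma nbr_inj (x : Zd ν) : Function.Injective (fun p : Fin ν × Bool => nbr x p.1 p.2) := by
  rintro ⟨i, s⟩ ⟨i', s'⟩ h
  simp only at h
  by_cases hii : i = i'
  · subst hii
    have := congrFun h i
    simp only [nbr, Function.update_self] at this
    have hs : (if s then (1:ℤ) else -1) = (if s' then (1:ℤ) else -1) := by omega
    cases s <;> cases s' <;> simp_all
  · have := congrFun h i
    simp only [nbr, Function.update_self, Function.update_of_ne hii] at this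
    exfalso
    cases s <;> simp at this <;> omega

lemma adj_iff_nbr (z x : Zd ν) : adj z x ↔ ∃ p : Fin ν × Bool, z = nbr x p.1 p.2 := by
  constructor
  · intro h
    unfold adj at h
    have hex : ∃ i, (z i - x i).natAbs ≠ 0 := by
      by_contra hc
      push_neg at hc
      rw [Finset.sum_eq_zero (fun i _ => hc i)] at h
      omega
    obtain ⟨i, hi⟩ := hex
    have h1 : (z i - x i).natAbs = 1 := by
      have hle : (z i - x i).natAbs ≤ 1 := by
        rw [← h]
        exact Finset.single_le_sum (f := fun k => (z k - x k).natAbs)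
          (fun j _ => Nat.zero_le _) (Finset.mem_univ i)
      omega
    have hz : ∀ j, j ≠ i → z j = x j := by
      intro j hj
      have h2 : (z j - x j).natAbs ≤ ∑ k ∈ Finset.univ.erase i, (z k - x k).natAbs :=
        Finset.single_le_sum (f := fun k => (z k - x k).natAbs)
          (fun k _ => Nat.zero_le _) (Finset.mem_erase.2 ⟨hj, Finset.mem_univ j⟩)
      have h3 : (∑ k ∈ Finset.univ.erase i, (z k - x k).natAbs) + (z i - x i).natAbs
          = ∑ k, (z k - x k).natAbs :=
        Finset.sum_erase_add _ _ (Finset.mem_univ i)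
      omega
    have hcase : z i - x i = 1 ∨ z i - x i = -1 := by omega
    rcases hcase with h2 | h2
    · refine ⟨⟨i, true⟩, funext fun j => ?_⟩
      by_cases hj : j = i
      · subst hj
        simp only [nbr, Function.update_self, if_pos]
        omega
      · simp only [nbr]
        rw [Function.update_of_ne hj]
        exact hz j hj
    · refine ⟨⟨i, false⟩, funext fun j => ?_⟩
      by_cases hj : j = i
      · subst hj
        simp only [nbr, Function.update_self, Bool.false_eq_true, if_false]
        omega
      · simp only [nbr]
        rw [Function.update_of_ne hj]
        exact hz j hj
  · rintro ⟨p, rfl⟩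
    exact adj_nbr x p.1 p.2

lemma tsum_adj (x : Zd ν) (g : Zd ν → ℝ≥0∞) :
    (∑' z : Zd ν, if adj z x then g z else 0)
      = ∑ p : Fin ν × Bool, g (nbr x p.1 p.2) := by
  classical
  rw [tsum_eq_sum (s := Finset.image (fun p : Fin ν × Bool => nbr x p.1 p.2) Finset.univ)]
  · rw [Finset.sum_image (fun a _ b _ h => nbr_inj x h)]
    apply Finset.sum_congr rfl
    intro p _
    rw [if_pos (adj_nbr x p.1 p.2)]
  · intro z hz
    rw [if_neg]
    intro hadj
    rcases (adj_iff_nbr z x).1 hadj with ⟨p, rfl⟩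
    exact hz (Finset.mem_image.2 ⟨p, Finset.mem_univ p, rfl⟩)

/-- one-step decomposition -/
lemma first_step (hP : IsSRW ν P) (x : Zd ν) (E : Set (ℕ → Zd ν)) (hE : MeasurableSet E) :
    P x (shift 1 ⁻¹' E) = ∑ p : Fin ν × Bool, (2 * ν : ℝ≥0∞)⁻¹ * P (nbr x p.1 p.2) E := by
  classical
  have hset : shift 1 ⁻¹' E ∩ {w | w 0 = x}
      = ⋃ z : Zd ν, (cyl 1 (fun k => if k = 0 then x else z) ∩ shift 1 ⁻¹' E) := by
    ext w
    constructor
    · rintro ⟨hw, h0⟩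
      refine Set.mem_iUnion.2 ⟨w 1, ⟨?_, hw⟩⟩
      intro k hk
      interval_cases k
      · simpa using h0
      · simp
    · rintro hw
      rcases Set.mem_iUnion.1 hw with ⟨z, ⟨hc, hw'⟩⟩
      exact ⟨hw', by simpa using hc 0 (by omega)⟩
  have hdisj : Pairwise (Function.onFun Disjoint
      (fun z : Zd ν => (cyl 1 (fun k => if k = 0 then x else z) ∩ shift 1 ⁻¹' E))) := by
    intro z z' hzz
    apply Set.disjoint_left.2
    rintro w ⟨hc, _⟩ ⟨hc', _⟩
    exact hzz ((hc 1 le_rfl).symm.trans (hc' 1 le_rfl) : z = z')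
  have hmeas : ∀ z : Zd ν, MeasurableSet
      (cyl 1 (fun k => if k = 0 then x else z) ∩ shift 1 ⁻¹' E) :=
    fun z => (measurableSet_cyl _ _).inter (measurable_shift 1 hE)
  rw [← measure_inter_start hP x, hset, measure_iUnion hdisj hmeas]
  have hterm : ∀ z : Zd ν,
      P x (cyl 1 (fun k => if k = 0 then x else z) ∩ shift 1 ⁻¹' E)
        = if adj z x then (2 * ν : ℝ≥0∞)⁻¹ * P z E else 0 := by
    intro z
    rw [markov hP x 1 (fun k => if k = 0 then x else z) (by simp) E hE]
    have e1 : (if (1:ℕ) = 0 then x else z) = z := by norm_num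
    rw [e1]
    have : (∀ k < 1, adj (if k + 1 = 0 then x else z) (if k = 0 then x else z)) ↔ adj z x := by
      constructor
      · intro h; simpa using h 0 (by omega)
      · intro h k hk
        interval_cases k
        simpa using h
    by_cases ha : adj z x
    · rw [if_pos ha, if_pos (this.2 ha), pow_one]
    · rw [if_neg ha, if_neg (fun hc => ha (this.1 hc)), zero_mul]
  calc (∑' z : Zd ν, P x (cyl 1 (fun k => if k = 0 then x else z) ∩ shift 1 ⁻¹' E))
      = ∑' z : Zd ν, if adj z x then (2 * ν : ℝ≥0∞)⁻¹ * P z E else 0 := by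
        apply tsum_congr; intro z; rw [hterm z]
    _ = ∑ p : Fin ν × Bool, (2 * ν : ℝ≥0∞)⁻¹ * P (nbr x p.1 p.2) E :=
        tsum_adj x (fun z => (2 * ν : ℝ≥0∞)⁻¹ * P z E)

/-! ### Hitting events -/

def hitBy (S : Set (Zd ν)) (n : ℕ) : Set (ℕ → Zd ν) := {w | ∃ k ≤ n, w k ∈ S}
def hit (S : Set (Zd ν)) : Set (ℕ → Zd ν) := {w | ∃ k, w k ∈ S}
def ret (S : Set (Zd ν)) : Set (ℕ → Zd ν) := {w | ∃ k, 1 ≤ k ∧ w k ∈ S}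

lemma measurableSet_hitBy (S : Set (Zd ν)) (n : ℕ) : MeasurableSet (hitBy S n) := by
  have : hitBy S n = ⋃ k ∈ Finset.range (n+1), {w : ℕ → Zd ν | w k ∈ S} := by
    ext w; simp [hitBy, Nat.lt_succ_iff]
  rw [this]
  exact MeasurableSet.biUnion (Finset.range (n+1)).countable_toSet
    (fun k _ => measurableSet_coordEq k S)

lemma measurableSet_hit (S : Set (Zd ν)) : MeasurableSet (hit S) := by
  have : hit S = ⋃ k, {w : ℕ → Zd ν | w k ∈ S} := by ext w; simp [hit]
  rw [this]
  exact MeasurableSet.iUnion (fun k => measurableSet_coordEq k S)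

lemma measurableSet_ret (S : Set (Zd ν)) : MeasurableSet (ret S) := by
  have : ret S = ⋃ k, ⋃ _ : 1 ≤ k, {w : ℕ → Zd ν | w k ∈ S} := by ext w; simp [ret]
  rw [this]
  exact MeasurableSet.iUnion (fun k => MeasurableSet.iUnion
    (fun _ => measurableSet_coordEq k S))

lemma hitBy_mono (S : Set (Zd ν)) : Monotone (hitBy S) := by
  intro a b hab w ⟨k, hk, hw⟩
  exact ⟨k, hk.trans hab, hw⟩

lemma hit_eq_iUnion (S : Set (Zd ν)) : hit S = ⋃ n, hitBy S n := by
  ext w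
  constructor
  · rintro ⟨k, hk⟩
    exact Set.mem_iUnion.2 ⟨k, k, le_rfl, hk⟩
  · intro h
    rcases Set.mem_iUnion.1 h with ⟨n, k, _, hk⟩
    exact ⟨k, hk⟩

lemma hit_measure (hP : IsSRW ν P) (z : Zd ν) (S : Set (Zd ν)) :
    P z (hit S) = ⨆ n, P z (hitBy S n) := by
  rw [hit_eq_iUnion]
  exact Directed.measure_iUnion (directed_of_isDirected_le (fun a b hab => hitBy_mono S hab))

lemma hitBy_mem (hP : IsSRW ν P) (z : Zd ν) (S : Set (Zd ν)) (hz : z ∈ S) (n : ℕ) :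
    P z (hitBy S n) = 1 := by
  have h1 : IsProbabilityMeasure (P z) := hP.1 z
  apply le_antisymm prob_le_one
  calc (1:ℝ≥0∞) = P z {w | w 0 = z} := (start_full hP z).symm
    _ ≤ P z (hitBy S n) := by
        apply measure_mono
        intro w hw
        exact ⟨0, Nat.zero_le n, by rw [(hw : w 0 = z)]; exact hz⟩

lemma hitBy_zero (hP : IsSRW ν P) (z : Zd ν) (S : Set (Zd ν)) (hz : z ∉ S) :
    P z (hitBy S 0) = 0 := by
  rw [← measure_inter_start hP z]
  have hemp : hitBy S 0 ∩ {w : ℕ → Zd ν | w 0 = z} = ∅ := by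
    ext w
    simp only [Set.mem_inter_iff, Set.mem_empty_iff_false, iff_false]
    rintro ⟨⟨k, hk, hw⟩, h0⟩
    interval_cases k
    exact hz (h0 ▸ hw)
  rw [hemp, measure_empty]

lemma hitBy_succ (hP : IsSRW ν P) (z : Zd ν) (S : Set (Zd ν)) (hz : z ∉ S) (n : ℕ) :
    P z (hitBy S (n+1)) = ∑ p : Fin ν × Bool, (2 * ν : ℝ≥0∞)⁻¹ * P (nbr z p.1 p.2) (hitBy S n) := by
  rw [← first_step hP z _ (measurableSet_hitBy S n), ← measure_inter_start hP z,
    ← measure_inter_start hP z (shift 1 ⁻¹' hitBy S n)]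
  congr 1
  ext w
  simp only [Set.mem_inter_iff, Set.mem_preimage, Set.mem_setOf_eq]
  constructor
  · rintro ⟨⟨k, hk, hw⟩, h0⟩
    refine ⟨⟨k - 1, by omega, ?_⟩, h0⟩
    have hk1 : 1 ≤ k := by
      rcases Nat.eq_zero_or_pos k with rfl | h
      · exact absurd (h0 ▸ hw) hz
      · exact h
    show w (1 + (k-1)) ∈ S
    have e : 1 + (k - 1) = k := by omega
    rw [e]
    exact hw
  · rintro ⟨⟨k, hk, hw⟩, h0⟩
    exact ⟨⟨1 + k, by omega, hw⟩, h0⟩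

lemma ret_measure (hP : IsSRW ν P) (z : Zd ν) (S : Set (Zd ν)) :
    P z (ret S) = ∑ p : Fin ν × Bool, (2 * ν : ℝ≥0∞)⁻¹ * P (nbr z p.1 p.2) (hit S) := by
  rw [← first_step hP z _ (measurableSet_hit S), ← measure_inter_start hP z,
    ← measure_inter_start hP z (shift 1 ⁻¹' hit S)]
  congr 1
  ext w
  simp only [Set.mem_inter_iff, Set.mem_preimage, Set.mem_setOf_eq]
  constructor
  · rintro ⟨⟨k, hk1, hw⟩, h0⟩
    refine ⟨⟨k - 1, ?_⟩, h0⟩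
    show w (1 + (k-1)) ∈ S
    have e : 1 + (k - 1) = k := by omega
    rw [e]
    exact hw
  · rintro ⟨⟨k, hw⟩, h0⟩
    exact ⟨⟨1 + k, by omega, hw⟩, h0⟩

/-! ### Dimension transfer -/

section Transfer

variable {d m : ℕ} {P : Zd d → Measure (ℕ → Zd d)}
  {Pm : Zd (d - m) → Measure (ℕ → Zd (d - m))}

lemma card_compl_eq (I : Finset (Fin d)) (hI : I.card = m) :
    Fintype.card {i : Fin d // i ∉ I} = d - m := by
  have h := Fintype.card_subtype_compl (fun i : Fin d => i ∈ I)
  simp only [Fintype.card_fin] at h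
  rw [h]
  congr 1
  rw [← hI]
  exact Fintype.card_coe I

theorem return_bound (hdm : 0 < d - m) (hd : 0 < d)
    (hP : IsSRW d P) (hPm : IsSRW (d - m) Pm)
    (I : Finset (Fin d)) (hI : I.card = m) (y : Zd d)
    (a : Zd d) (ha : ∀ i : Fin d, i ∉ I → a i = y i) :
    P a (ret {z : Zd d | ∀ i : Fin d, i ∉ I → z i = y i})
      ≤ (2 * m) * (2 * d : ℝ≥0∞)⁻¹
        + (2 * ((d - m : ℕ)) : ℝ≥0∞) * (2 * d : ℝ≥0∞)⁻¹ * Pm 0 (ret {(0 : Zd (d - m))}) := by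
  classical
  set Fset : Set (Zd d) := {z : Zd d | ∀ i : Fin d, i ∉ I → z i = y i} with hFset
  have e : {i : Fin d // i ∉ I} ≃ Fin (d - m) :=
    Fintype.equivFinOfCardEq (card_compl_eq I hI)
  set proj : Zd d → Zd (d - m) := fun z j => z (e.symm j).1 - y (e.symm j).1 with hprojdef
  have hproj_mem : ∀ z : Zd d, z ∈ Fset ↔ proj z = 0 := by
    intro z
    constructor
    · intro hz
      funext j
      have := hz (e.symm j).1 (e.symm j).2
      simp [hprojdef, this]
    · intro hz i hi
      have h2 := congrFun hz (e ⟨i, hi⟩)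
      simp only [hprojdef, Equiv.symm_apply_apply] at h2
      have h3 : z i - y i = 0 := h2
      omega
  have hproj_par : ∀ (z : Zd d) (i : Fin d) (s : Bool), i ∈ I → proj (nbr z i s) = proj z := by
    intro z i s hi
    funext j
    have hne : (e.symm j).1 ≠ i := fun hc => (e.symm j).2 (hc ▸ hi)
    simp only [hprojdef, nbr]
    rw [Function.update_of_ne hne]
  have hproj_perp : ∀ (z : Zd d) (q : Fin (d - m) × Bool),
      proj (nbr z (e.symm q.1).1 q.2) = nbr (proj z) q.1 q.2 := by
    intro z q
    funext j
    by_cases hj : j = q.1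
    · subst hj
      simp only [hprojdef, nbr, Function.update_self]
      ring
    · have hne : (e.symm j) ≠ (e.symm q.1) := fun hc => hj (e.symm.injective hc)
      have hne' : (e.symm j).1 ≠ (e.symm q.1).1 := fun hc => hne (Subtype.ext hc)
      simp only [hprojdef, nbr]
      rw [Function.update_of_ne hne', Function.update_of_ne hj]
  -- reindexing map
  set ι : Fin (d - m) × Bool → Fin d × Bool := fun q => ((e.symm q.1).1, q.2) with hι
  have hι_inj : ∀ q ∈ (Finset.univ : Finset (Fin (d-m) × Bool)), ∀ q' ∈ Finset.univ,
      ι q = ι q' → q = q' := by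
    intro q _ q' _ h
    rw [hι] at h
    simp only [Prod.mk.injEq] at h
    have h1 : e.symm q.1 = e.symm q'.1 := Subtype.ext h.1
    exact Prod.ext (e.symm.injective h1) h.2
  have himage : Finset.univ.image ι = Finset.univ.filter (fun p : Fin d × Bool => p.1 ∉ I) := by
    ext p
    simp only [Finset.mem_image, Finset.mem_filter, Finset.mem_univ, true_and]
    constructor
    · rintro ⟨q, _, rfl⟩
      exact (e.symm q.1).2
    · intro hp
      refine ⟨(e ⟨p.1, hp⟩, p.2), ?_⟩
      simp [hι]
  have hreindex : ∀ g : Fin d × Bool → ℝ≥0∞,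
      ∑ p ∈ Finset.univ.filter (fun p : Fin d × Bool => p.1 ∉ I), g p
        = ∑ q : Fin (d - m) × Bool, g (ι q) := by
    intro g
    rw [← himage, Finset.sum_image hι_inj]
  have hcard_in : (Finset.univ.filter (fun p : Fin d × Bool => p.1 ∈ I)).card = 2 * m := by
    have h : Finset.univ.filter (fun p : Fin d × Bool => p.1 ∈ I) = I ×ˢ Finset.univ := by
      ext p; simp [Finset.mem_product]
    rw [h, Finset.card_product, hI]
    simp [mul_comm]
  have h2d0 : (2 * d : ℝ≥0∞) ≠ 0 := by
    simp [hd.ne']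
  have h2dm0 : (2 * ((d - m : ℕ)) : ℝ≥0∞) ≠ 0 :=
    mul_ne_zero (by norm_num) (Nat.cast_ne_zero.2 hdm.ne')
  have h2dmtop : (2 * ((d - m : ℕ)) : ℝ≥0∞) ≠ ⊤ :=
    ENNReal.mul_ne_top (by norm_num) (ENNReal.natCast_ne_top _)
  have harith : (2 * (m : ℝ≥0∞)) * (2 * d : ℝ≥0∞)⁻¹
      + (2 * ((d - m : ℕ)) : ℝ≥0∞) * (2 * d : ℝ≥0∞)⁻¹ = 1 := by
    have hmd : m ≤ d := le_trans (Nat.le_add_right m (d - m)) (by omega)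
    have hnat : (2 * m) + 2 * (d - m) = 2 * d := by omega
    calc (2 * (m : ℝ≥0∞)) * (2 * d : ℝ≥0∞)⁻¹
          + (2 * ((d - m : ℕ)) : ℝ≥0∞) * (2 * d : ℝ≥0∞)⁻¹
        = ((2 * m + 2 * (d - m) : ℕ) : ℝ≥0∞) * (2 * d : ℝ≥0∞)⁻¹ := by
          push_cast
          ring
      _ = (2 * d : ℝ≥0∞) * (2 * d : ℝ≥0∞)⁻¹ := by rw [hnat]; push_cast; ring_nf
      _ = 1 := ENNReal.mul_inv_cancel h2d0
          (ENNReal.mul_ne_top (by norm_num) (ENNReal.natCast_ne_top _))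
  -- key induction
  have key : ∀ n (z : Zd d), P z (hitBy Fset n) ≤ Pm (proj z) (hitBy {(0 : Zd (d-m))} n) := by
    intro n
    induction n with
    | zero =>
      intro z
      by_cases hz : z ∈ Fset
      · rw [(hproj_mem z).1 hz, hitBy_mem hPm 0 {(0 : Zd (d-m))} rfl]
        have := hP.1 z
        exact prob_le_one
      · rw [hitBy_zero hP z Fset hz]
        exact zero_le
    | succ n ih =>
      intro z
      by_cases hz : z ∈ Fset
      · rw [(hproj_mem z).1 hz, hitBy_mem hPm 0 {(0 : Zd (d-m))} rfl]
        have := hP.1 z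
        exact prob_le_one
      · have hz0 : proj z ∉ ({0} : Set (Zd (d - m))) := by
          simp only [Set.mem_singleton_iff]
          exact fun hc => hz ((hproj_mem z).2 hc)
        set V : ℝ≥0∞ := Pm (proj z) (hitBy {(0 : Zd (d-m))} (n+1)) with hV
        have hsum0 : ∑ q : Fin (d-m) × Bool, Pm (nbr (proj z) q.1 q.2) (hitBy {(0:Zd (d-m))} n)
            = (2 * ((d - m : ℕ)) : ℝ≥0∞) * V := by
          rw [hV, hitBy_succ hPm (proj z) _ hz0 n, ← Finset.mul_sum, ← mul_assoc,
            ENNReal.mul_inv_cancel h2dm0 h2dmtop, one_mul]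
        have hvmono : ∀ t : Zd (d - m), Pm t (hitBy {(0:Zd (d-m))} n)
            ≤ Pm t (hitBy {(0:Zd (d-m))} (n+1)) :=
          fun t => measure_mono (hitBy_mono _ (Nat.le_succ n))
        rw [hitBy_succ hP z Fset hz n,
          ← Finset.sum_filter_add_sum_filter_not Finset.univ (fun p : Fin d × Bool => p.1 ∈ I)]
        have hpart1 : ∑ p ∈ Finset.univ.filter (fun p : Fin d × Bool => p.1 ∈ I),
              (2 * d : ℝ≥0∞)⁻¹ * P (nbr z p.1 p.2) (hitBy Fset n)
            ≤ (2 * (m:ℝ≥0∞)) * (2 * d : ℝ≥0∞)⁻¹ * V := by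
          calc ∑ p ∈ Finset.univ.filter (fun p : Fin d × Bool => p.1 ∈ I),
                (2 * d : ℝ≥0∞)⁻¹ * P (nbr z p.1 p.2) (hitBy Fset n)
              ≤ ∑ _p ∈ Finset.univ.filter (fun p : Fin d × Bool => p.1 ∈ I),
                (2 * d : ℝ≥0∞)⁻¹ * V := by
                apply Finset.sum_le_sum
                intro p hp
                have hpI : p.1 ∈ I := (Finset.mem_filter.1 hp).2
                apply mul_le_mul_right
                calc P (nbr z p.1 p.2) (hitBy Fset n)
                    ≤ Pm (proj (nbr z p.1 p.2)) (hitBy {(0 : Zd (d-m))} n) := ih _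
                  _ = Pm (proj z) (hitBy {(0 : Zd (d-m))} n) := by
                      rw [hproj_par z p.1 p.2 hpI]
                  _ ≤ V := hvmono _
            _ = (2 * (m:ℝ≥0∞)) * (2 * d : ℝ≥0∞)⁻¹ * V := by
                rw [Finset.sum_const, hcard_in]
                rw [nsmul_eq_mul]
                push_cast
                ring
        have hpart2 : ∑ p ∈ Finset.univ.filter (fun p : Fin d × Bool => ¬ p.1 ∈ I),
              (2 * d : ℝ≥0∞)⁻¹ * P (nbr z p.1 p.2) (hitBy Fset n)
            ≤ (2 * ((d - m : ℕ)) : ℝ≥0∞) * (2 * d : ℝ≥0∞)⁻¹ * V := by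
          calc ∑ p ∈ Finset.univ.filter (fun p : Fin d × Bool => ¬ p.1 ∈ I),
                (2 * d : ℝ≥0∞)⁻¹ * P (nbr z p.1 p.2) (hitBy Fset n)
              = ∑ q : Fin (d-m) × Bool,
                (2 * d : ℝ≥0∞)⁻¹ * P (nbr z (e.symm q.1).1 q.2) (hitBy Fset n) :=
                hreindex _
            _ ≤ ∑ q : Fin (d-m) × Bool,
                (2 * d : ℝ≥0∞)⁻¹ * Pm (nbr (proj z) q.1 q.2) (hitBy {(0:Zd (d-m))} n) := by
                apply Finset.sum_le_sum
                intro q _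
                apply mul_le_mul_right
                calc P (nbr z (e.symm q.1).1 q.2) (hitBy Fset n)
                    ≤ Pm (proj (nbr z (e.symm q.1).1 q.2)) (hitBy {(0 : Zd (d-m))} n) := ih _
                  _ = Pm (nbr (proj z) q.1 q.2) (hitBy {(0:Zd (d-m))} n) := by
                      rw [hproj_perp z q]
            _ = (2 * d : ℝ≥0∞)⁻¹ * ((2 * ((d - m : ℕ)) : ℝ≥0∞) * V) := by
                rw [← Finset.mul_sum, hsum0]
            _ = (2 * ((d - m : ℕ)) : ℝ≥0∞) * (2 * d : ℝ≥0∞)⁻¹ * V := by ring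
        calc (∑ p ∈ Finset.univ.filter (fun p : Fin d × Bool => p.1 ∈ I),
                (2 * d : ℝ≥0∞)⁻¹ * P (nbr z p.1 p.2) (hitBy Fset n))
              + ∑ p ∈ Finset.univ.filter (fun p : Fin d × Bool => ¬ p.1 ∈ I),
                (2 * d : ℝ≥0∞)⁻¹ * P (nbr z p.1 p.2) (hitBy Fset n)
            ≤ (2 * (m:ℝ≥0∞)) * (2 * d : ℝ≥0∞)⁻¹ * V
              + (2 * ((d - m : ℕ)) : ℝ≥0∞) * (2 * d : ℝ≥0∞)⁻¹ * V :=
              add_le_add hpart1 hpart2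
          _ = ((2 * (m:ℝ≥0∞)) * (2 * d : ℝ≥0∞)⁻¹
              + (2 * ((d - m : ℕ)) : ℝ≥0∞) * (2 * d : ℝ≥0∞)⁻¹) * V := by ring
          _ = V := by rw [harith, one_mul]
  -- hitting bound
  have hhit : ∀ z : Zd d, P z (hit Fset) ≤ Pm (proj z) (hit {(0 : Zd (d-m))}) := by
    intro z
    rw [hit_measure hP, hit_measure hPm]
    exact iSup_mono (fun n => key n z)
  -- final: return decomposition at a
  have hproja : proj a = 0 := (hproj_mem a).1 ha
  have hq : ∑ q : Fin (d-m) × Bool, Pm (nbr 0 q.1 q.2) (hit {(0:Zd (d-m))})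
      = (2 * ((d - m : ℕ)) : ℝ≥0∞) * Pm 0 (ret {(0:Zd (d-m))}) := by
    rw [ret_measure hPm 0, ← Finset.mul_sum, ← mul_assoc,
      ENNReal.mul_inv_cancel h2dm0 h2dmtop, one_mul]
  rw [ret_measure hP a,
    ← Finset.sum_filter_add_sum_filter_not Finset.univ (fun p : Fin d × Bool => p.1 ∈ I)]
  have hpart1 : ∑ p ∈ Finset.univ.filter (fun p : Fin d × Bool => p.1 ∈ I),
        (2 * d : ℝ≥0∞)⁻¹ * P (nbr a p.1 p.2) (hit Fset)
      ≤ (2 * (m:ℝ≥0∞)) * (2 * d : ℝ≥0∞)⁻¹ := by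
    calc ∑ p ∈ Finset.univ.filter (fun p : Fin d × Bool => p.1 ∈ I),
          (2 * d : ℝ≥0∞)⁻¹ * P (nbr a p.1 p.2) (hit Fset)
        ≤ ∑ _p ∈ Finset.univ.filter (fun p : Fin d × Bool => p.1 ∈ I),
          (2 * d : ℝ≥0∞)⁻¹ * 1 := by
          apply Finset.sum_le_sum
          intro p hp
          apply mul_le_mul_right
          have := hP.1 (nbr a p.1 p.2)
          exact prob_le_one
      _ = (2 * (m:ℝ≥0∞)) * (2 * d : ℝ≥0∞)⁻¹ := by
          rw [Finset.sum_const, hcard_in, nsmul_eq_mul]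
          push_cast
          ring
  have hpart2 : ∑ p ∈ Finset.univ.filter (fun p : Fin d × Bool => ¬ p.1 ∈ I),
        (2 * d : ℝ≥0∞)⁻¹ * P (nbr a p.1 p.2) (hit Fset)
      ≤ (2 * ((d - m : ℕ)) : ℝ≥0∞) * (2 * d : ℝ≥0∞)⁻¹ * Pm 0 (ret {(0:Zd (d-m))}) := by
    calc ∑ p ∈ Finset.univ.filter (fun p : Fin d × Bool => ¬ p.1 ∈ I),
          (2 * d : ℝ≥0∞)⁻¹ * P (nbr a p.1 p.2) (hit Fset)
        = ∑ q : Fin (d-m) × Bool,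
          (2 * d : ℝ≥0∞)⁻¹ * P (nbr a (e.symm q.1).1 q.2) (hit Fset) := hreindex _
      _ ≤ ∑ q : Fin (d-m) × Bool,
          (2 * d : ℝ≥0∞)⁻¹ * Pm (nbr 0 q.1 q.2) (hit {(0:Zd (d-m))}) := by
          apply Finset.sum_le_sum
          intro q _
          apply mul_le_mul_right
          calc P (nbr a (e.symm q.1).1 q.2) (hit Fset)
              ≤ Pm (proj (nbr a (e.symm q.1).1 q.2)) (hit {(0 : Zd (d-m))}) := hhit _
            _ = Pm (nbr 0 q.1 q.2) (hit {(0:Zd (d-m))}) := by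
                rw [hproj_perp a q, hproja]
      _ = (2 * d : ℝ≥0∞)⁻¹ * ((2 * ((d - m : ℕ)) : ℝ≥0∞) * Pm 0 (ret {(0:Zd (d-m))})) := by
          rw [← Finset.mul_sum, hq]
      _ = (2 * ((d - m : ℕ)) : ℝ≥0∞) * (2 * d : ℝ≥0∞)⁻¹ * Pm 0 (ret {(0:Zd (d-m))}) := by
          ring
  exact add_le_add hpart1 hpart2

end Transfer
/-! ### Occupation times -/

section Occupation

variable {ν : ℕ} {P : Zd ν → Measure (ℕ → Zd ν)}

/-- number of visits to `A` up to time `n` -/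
def cnt (A : Finset (Zd ν)) (n : ℕ) (w : ℕ → Zd ν) : ℕ :=
  ((Finset.range (n+1)).filter (fun j => w j ∈ A)).card

/-- at least `k` visits ever -/
def G (A : Finset (Zd ν)) (k : ℕ) : Set (ℕ → Zd ν) := {w | ∃ n, k ≤ cnt A n w}

/-- exactly `k` visits up to time `n`, with a visit at time `n` -/
def D (A : Finset (Zd ν)) (k n : ℕ) : Set (ℕ → Zd ν) := {w | cnt A n w = k ∧ w n ∈ A}

lemma measurable_cnt (A : Finset (Zd ν)) (n : ℕ) : Measurable (cnt A n) := by
  have h : cnt A n = fun w => ∑ j ∈ Finset.range (n+1), (if w j ∈ A then 1 else 0) := by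
    funext w
    rw [cnt, Finset.card_filter]
  rw [h]
  exact Finset.measurable_sum _ (fun j _ =>
    Measurable.ite (measurableSet_coordEq j (A : Set (Zd ν))) measurable_const measurable_const)

lemma measurableSet_G (A : Finset (Zd ν)) (k : ℕ) : MeasurableSet (G A k) := by
  have h : G A k = ⋃ n, (cnt A n) ⁻¹' {t | k ≤ t} := by
    ext w; simp [G]
  rw [h]
  exact MeasurableSet.iUnion (fun n =>
    measurable_cnt A n ({t | k ≤ t}.to_countable.measurableSet))

lemma measurableSet_D (A : Finset (Zd ν)) (k n : ℕ) : MeasurableSet (D A k n) := by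
  have h : D A k n = (cnt A n) ⁻¹' {k} ∩ {w | w n ∈ (↑A : Set (Zd ν))} := by
    ext w; simp [D]
  rw [h]
  exact ((measurable_cnt A n) (MeasurableSet.singleton k)).inter (measurableSet_coordEq n (A : Set (Zd ν)))

lemma cnt_zero (A : Finset (Zd ν)) (w : ℕ → Zd ν) :
    cnt A 0 w = if w 0 ∈ A then 1 else 0 := by
  rw [cnt]
  by_cases h : w 0 ∈ A <;>
    simp [Finset.range_one, Finset.filter_singleton, h]

lemma cnt_succ (A : Finset (Zd ν)) (n : ℕ) (w : ℕ → Zd ν) :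
    cnt A (n+1) w = cnt A n w + (if w (n+1) ∈ A then 1 else 0) := by
  rw [cnt, cnt, Finset.range_add_one, Finset.filter_insert]
  by_cases h : w (n+1) ∈ A
  · rw [if_pos h, if_pos h, Finset.card_insert_of_notMem (by simp)]
  · rw [if_neg h, if_neg h, add_zero]

lemma cnt_mono (A : Finset (Zd ν)) (w : ℕ → Zd ν) : Monotone (fun n => cnt A n w) := by
  apply monotone_nat_of_le_succ
  intro n
  rw [cnt_succ]
  exact Nat.le_add_right _ _

lemma cnt_le_cnt (A : Finset (Zd ν)) (w : ℕ → Zd ν) {n n' : ℕ} (h : n ≤ n') :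
    cnt A n w ≤ cnt A n' w := cnt_mono A w h

lemma G_eq_iUnion_D (A : Finset (Zd ν)) (k : ℕ) (hk : 1 ≤ k) :
    G A k = ⋃ n, D A k n := by
  ext w
  constructor
  · intro hw
    have hex : ∃ n, k ≤ cnt A n w := hw
    have hfind : k ≤ cnt A (Nat.find hex) w := Nat.find_spec hex
    refine Set.mem_iUnion.2 ⟨Nat.find hex, ?_, ?_⟩
    · rcases Nat.eq_zero_or_pos (Nat.find hex) with h0 | hpos
      · rw [h0] at hfind ⊢
        rw [cnt_zero] at hfind ⊢
        by_cases hmem : w 0 ∈ A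
        · rw [if_pos hmem] at hfind ⊢; omega
        · rw [if_neg hmem] at hfind; omega
      · obtain ⟨n', hn'⟩ : ∃ n', Nat.find hex = n' + 1 := ⟨Nat.find hex - 1, by omega⟩
        have hmin : ¬ k ≤ cnt A n' w := Nat.find_min hex (by omega)
        rw [hn'] at hfind ⊢
        rw [cnt_succ] at hfind ⊢
        by_cases hmem : w (n'+1) ∈ A
        · rw [if_pos hmem] at hfind ⊢; omega
        · rw [if_neg hmem] at hfind; omega
    · rcases Nat.eq_zero_or_pos (Nat.find hex) with h0 | hpos
      · rw [h0] at hfind ⊢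
        rw [cnt_zero] at hfind
        by_cases hmem : w 0 ∈ A
        · exact hmem
        · rw [if_neg hmem] at hfind; omega
      · obtain ⟨n', hn'⟩ : ∃ n', Nat.find hex = n' + 1 := ⟨Nat.find hex - 1, by omega⟩
        have hmin : ¬ k ≤ cnt A n' w := Nat.find_min hex (by omega)
        rw [hn'] at hfind ⊢
        rw [cnt_succ] at hfind
        by_cases hmem : w (n'+1) ∈ A
        · exact hmem
        · rw [if_neg hmem] at hfind; omega
  · intro hw
    rcases Set.mem_iUnion.1 hw with ⟨n, h1, _⟩
    exact ⟨n, h1.ge⟩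

lemma D_disjoint (A : Finset (Zd ν)) (k : ℕ) :
    Pairwise (Function.onFun Disjoint (D A k)) := by
  have hkey : ∀ n n', n < n' → ∀ w, w ∈ D A k n → w ∈ D A k n' → False := by
    intro n n' hnn w ⟨hc, hm⟩ ⟨hc', hm'⟩
    obtain ⟨t, rfl⟩ : ∃ t, n' = t + 1 := ⟨n' - 1, by omega⟩
    have h1 : cnt A n w ≤ cnt A t w := cnt_le_cnt A w (by omega)
    have h2 := cnt_succ A t w
    rw [if_pos hm'] at h2
    omega
  intro n n' hnn
  rcases lt_or_gt_of_ne hnn with h | h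
  · exact Set.disjoint_left.2 (fun w hw hw' => hkey n n' h w hw hw')
  · exact Set.disjoint_left.2 (fun w hw hw' => hkey n' n h w hw' hw)

lemma cnt_stable (A : Finset (Zd ν)) (w : ℕ → Zd ν) (n n' : ℕ) (hnn : n ≤ n')
    (hno : ∀ j, n + 1 ≤ j → j ≤ n' → w j ∉ A) : cnt A n' w = cnt A n w := by
  obtain ⟨t, rfl⟩ : ∃ t, n' = n + t := ⟨n' - n, by omega⟩
  clear hnn
  induction t with
  | zero => rfl
  | succ t ih =>
    rw [← Nat.add_assoc, cnt_succ, if_neg (hno (n+t+1) (by omega) (by omega)),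
      add_zero]
    exact ih (fun j hj1 hj2 => hno j hj1 (by omega))

lemma G_inter_D_subset (A : Finset (Zd ν)) (k n : ℕ) :
    G A (k+1) ∩ D A k n ⊆ shift n ⁻¹' (ret (↑A : Set (Zd ν))) := by
  rintro w ⟨⟨n', hn'⟩, hc, hm⟩
  have hlt : n < n' := by
    by_contra hcon
    push_neg at hcon
    have := cnt_le_cnt A w hcon
    omega
  by_contra hret
  simp only [Set.mem_preimage, ret, Set.mem_setOf_eq] at hret
  push_neg at hret
  have hno : ∀ j, n + 1 ≤ j → j ≤ n' → w j ∉ A := by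
    intro j hj1 hj2 hmem
    refine hret (j - n) (by omega) ?_
    show w (n + (j - n)) ∈ (↑A : Set (Zd ν))
    have e : n + (j - n) = j := by omega
    rw [e]
    exact hmem
  have := cnt_stable A w n n' (by omega) hno
  omega

/-- extension of a finite path to ℕ -/
def ext (n : ℕ) (p : Fin (n+1) → Zd ν) : ℕ → Zd ν :=
  fun t => if h : t < n + 1 then p ⟨t, h⟩ else p ⟨n, Nat.lt_succ_self n⟩

lemma ext_last (n : ℕ) (p : Fin (n+1) → Zd ν) : ext n p n = p ⟨n, Nat.lt_succ_self n⟩ := by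
  rw [ext]
  simp

lemma ext_le (n : ℕ) (p : Fin (n+1) → Zd ν) (t : ℕ) (ht : t ≤ n) :
    ext n p t = p ⟨t, by omega⟩ := by
  rw [ext, dif_pos (by omega)]

/-- membership in `D A k n` only depends on coordinates up to `n` -/
lemma D_cyl_det (A : Finset (Zd ν)) (k n : ℕ) (p : Fin (n+1) → Zd ν) (w : ℕ → Zd ν)
    (hw : w ∈ cyl n (ext n p)) : w ∈ D A k n ↔ ext n p ∈ D A k n := by
  have hcnt : cnt A n w = cnt A n (ext n p) := by
    rw [cnt, cnt]
    congr 1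
    apply Finset.filter_congr
    intro j hj
    rw [hw j (by simpa [Nat.lt_succ_iff] using hj)]
  have hlast : w n = ext n p n := hw n le_rfl
  unfold D
  rw [Set.mem_setOf_eq, Set.mem_setOf_eq, hcnt, hlast]

lemma cyl_ext_cover (n : ℕ) :
    (⋃ p : Fin (n+1) → Zd ν, cyl n (ext n p)) = Set.univ := by
  ext w
  simp only [Set.mem_iUnion, Set.mem_univ, iff_true]
  refine ⟨fun j => w j, fun t ht => ?_⟩
  rw [ext_le n _ t ht]

lemma cyl_ext_disjoint (n : ℕ) :
    Pairwise (Function.onFun Disjoint (fun p : Fin (n+1) → Zd ν => cyl n (ext n p))) := by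
  intro p p' hpp
  apply Set.disjoint_left.2
  rintro w hw hw'
  apply hpp
  funext j
  have h1 := hw j.1 (by omega)
  have h2 := hw' j.1 (by omega)
  rw [ext_le n p j.1 (by omega)] at h1
  rw [ext_le n p' j.1 (by omega)] at h2
  exact h1.symm.trans h2

/-- main single-step estimate -/
lemma D_ret_bound (hP : IsSRW ν P) (A : Finset (Zd ν)) (x : Zd ν) (k n : ℕ)
    (χ : ℝ≥0∞) (hχ : ∀ a ∈ A, P a (ret (↑A : Set (Zd ν))) ≤ χ) :
    P x (D A k n ∩ shift n ⁻¹' (ret (↑A : Set (Zd ν)))) ≤ χ * P x (D A k n) := by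
  classical
  have hRms : MeasurableSet (ret (↑A : Set (Zd ν))) := measurableSet_ret _
  have hdec : ∀ (S : Set (ℕ → Zd ν)), S = ⋃ p : Fin (n+1) → Zd ν, (cyl n (ext n p) ∩ S) := by
    intro S
    conv_lhs => rw [← Set.univ_inter S, ← cyl_ext_cover n]
    rw [Set.iUnion_inter]
  have hdisj : ∀ (S : Set (ℕ → Zd ν)), Pairwise (Function.onFun Disjoint
      (fun p : Fin (n+1) → Zd ν => cyl n (ext n p) ∩ S)) := by
    intro S p p' hpp
    exact Disjoint.mono Set.inter_subset_left Set.inter_subset_left (cyl_ext_disjoint n hpp)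
  -- decompose both sides
  have hL : P x (D A k n ∩ shift n ⁻¹' (ret (↑A : Set (Zd ν))))
      = ∑' p : Fin (n+1) → Zd ν,
        P x (cyl n (ext n p) ∩ (D A k n ∩ shift n ⁻¹' (ret (↑A : Set (Zd ν))))) := by
    conv_lhs => rw [hdec (D A k n ∩ shift n ⁻¹' (ret (↑A : Set (Zd ν))))]
    exact measure_iUnion (hdisj _) (fun p => (measurableSet_cyl _ _).inter
      ((measurableSet_D A k n).inter ((measurable_shift n) hRms)))
  have hR : P x (D A k n) = ∑' p : Fin (n+1) → Zd ν, P x (cyl n (ext n p) ∩ D A k n) := by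
    conv_lhs => rw [hdec (D A k n)]
    exact measure_iUnion (hdisj _) (fun p => (measurableSet_cyl _ _).inter (measurableSet_D A k n))
  rw [hL, hR, ← ENNReal.tsum_mul_left]
  apply ENNReal.tsum_le_tsum
  intro p
  by_cases hcond : ext n p ∈ D A k n
  · have hseteq : cyl n (ext n p) ∩ (D A k n ∩ shift n ⁻¹' (ret (↑A : Set (Zd ν))))
        = cyl n (ext n p) ∩ shift n ⁻¹' (ret (↑A : Set (Zd ν))) := by
      ext w
      simp only [Set.mem_inter_iff]
      constructor
      · rintro ⟨h1, _, h3⟩; exact ⟨h1, h3⟩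
      · rintro ⟨h1, h3⟩; exact ⟨h1, (D_cyl_det A k n p w h1).2 hcond, h3⟩
    have hseteq2 : cyl n (ext n p) ∩ D A k n = cyl n (ext n p) := by
      apply Set.inter_eq_self_of_subset_left
      intro w hw
      exact (D_cyl_det A k n p w hw).2 hcond
    rw [hseteq, hseteq2, markov_prod hP x n (ext n p) _ hRms]
    rw [mul_comm χ _]
    apply mul_le_mul_right
    exact hχ (ext n p n) hcond.2
  · have hempty : ∀ S, S ⊆ D A k n → cyl n (ext n p) ∩ S = ∅ := by
      intro S hS
      ext w
      simp only [Set.mem_inter_iff, Set.mem_empty_iff_false, iff_false]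
      rintro ⟨h1, h2⟩
      exact hcond ((D_cyl_det A k n p w h1).1 (hS h2))
    rw [hempty _ Set.inter_subset_left, hempty _ (subset_refl _)]
    simp

lemma G_succ_bound (hP : IsSRW ν P) (A : Finset (Zd ν)) (x : Zd ν) (k : ℕ) (hk : 1 ≤ k)
    (χ : ℝ≥0∞) (hχ : ∀ a ∈ A, P a (ret (↑A : Set (Zd ν))) ≤ χ) :
    P x (G A (k+1)) ≤ χ * P x (G A k) := by
  have hsub : G A (k+1) ⊆ ⋃ n, (D A k n ∩ shift n ⁻¹' (ret (↑A : Set (Zd ν)))) := by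
    intro w hw
    have hw' : w ∈ G A k := by
      rcases hw with ⟨n, hn⟩
      exact ⟨n, by omega⟩
    rw [G_eq_iUnion_D A k hk] at hw'
    rcases Set.mem_iUnion.1 hw' with ⟨n, hn⟩
    exact Set.mem_iUnion.2 ⟨n, hn, G_inter_D_subset A k n ⟨hw, hn⟩⟩
  calc P x (G A (k+1))
      ≤ P x (⋃ n, (D A k n ∩ shift n ⁻¹' (ret (↑A : Set (Zd ν))))) := measure_mono hsub
    _ ≤ ∑' n, P x (D A k n ∩ shift n ⁻¹' (ret (↑A : Set (Zd ν)))) := measure_iUnion_le _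
    _ ≤ ∑' n, χ * P x (D A k n) :=
        ENNReal.tsum_le_tsum (fun n => D_ret_bound hP A x k n χ hχ)
    _ = χ * ∑' n, P x (D A k n) := ENNReal.tsum_mul_left
    _ = χ * P x (⋃ n, D A k n) := by
        rw [measure_iUnion (D_disjoint A k) (fun n => measurableSet_D A k n)]
    _ = χ * P x (G A k) := by rw [← G_eq_iUnion_D A k hk]

lemma G_pow_bound (hP : IsSRW ν P) (A : Finset (Zd ν)) (x : Zd ν) (k : ℕ)
    (χ : ℝ≥0∞) (hχ : ∀ a ∈ A, P a (ret (↑A : Set (Zd ν))) ≤ χ) :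
    P x (G A (k+1)) ≤ χ ^ k := by
  induction k with
  | zero =>
    have := hP.1 x
    simpa using prob_le_one
  | succ k ih =>
    calc P x (G A (k+2)) ≤ χ * P x (G A (k+1)) := G_succ_bound hP A x (k+1) (by omega) χ hχ
      _ ≤ χ * χ ^ k := mul_le_mul_right ih χ
      _ = χ ^ (k+1) := by rw [pow_succ, mul_comm]

end Occupation
/-! ### Pointwise exponential bound and integration -/


section Final

variable {ν : ℕ} {P : Zd ν → Measure (ℕ → Zd ν)}

lemma mem_G_iff_of_finite (A : Finset (Zd ν)) (w : ℕ → Zd ν)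
    (h : {n : ℕ | w n ∈ A}.Finite) (j : ℕ) (hj : 1 ≤ j) :
    w ∈ G A j ↔ j ≤ h.toFinset.card := by
  constructor
  · rintro ⟨n, hn⟩
    refine hn.trans (Finset.card_le_card ?_)
    intro t ht
    rw [Set.Finite.mem_toFinset]
    exact (Finset.mem_filter.1 ht).2
  · intro hj'
    have hne : h.toFinset.Nonempty := Finset.card_pos.1 (by omega)
    refine ⟨h.toFinset.max' hne, le_trans hj' (Finset.card_le_card ?_)⟩
    intro t ht
    refine Finset.mem_filter.2 ⟨Finset.mem_range.2 ?_, (Set.Finite.mem_toFinset h).1 ht⟩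
    have := Finset.le_max' _ t ht
    omega

lemma mem_G_of_infinite (A : Finset (Zd ν)) (w : ℕ → Zd ν)
    (h : ¬ {n : ℕ | w n ∈ A}.Finite) (j : ℕ) : w ∈ G A j := by
  rcases Nat.eq_zero_or_pos j with rfl | hj
  · exact ⟨0, by omega⟩
  obtain ⟨S, hS1, hS2⟩ := Set.Infinite.exists_subset_card_eq h j
  have hne : S.Nonempty := Finset.card_pos.1 (by omega)
  refine ⟨S.max' hne, ?_⟩
  rw [← hS2]
  apply Finset.card_le_card
  intro t ht
  refine Finset.mem_filter.2 ⟨Finset.mem_range.2 ?_, hS1 ht⟩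
  have := Finset.le_max' _ t ht
  omega

lemma expOcc_pointwise (lam : ℝ) (hlam : 0 < lam) (A : Finset (Zd ν)) (w : ℕ → Zd ν) :
    expOcc ν lam A w ≤ 1 + ∑' k : ℕ,
      Set.indicator (G A (k+1))
        (fun _ => ENNReal.ofReal (Real.exp (lam * k) * (Real.exp lam - 1))) w := by
  have hterm : ∀ k : ℕ, Real.exp (lam * k) * (Real.exp lam - 1)
      = Real.exp (lam * (k+1)) - Real.exp (lam * k) := by
    intro k
    push_cast
    rw [mul_add, mul_one, Real.exp_add]
    ring
  by_cases h : {n : ℕ | w n ∈ A}.Finite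
  · rw [expOcc, dif_pos h]
    set c := h.toFinset.card with hc
    have hsum : (∑' k : ℕ, Set.indicator (G A (k+1))
          (fun _ => ENNReal.ofReal (Real.exp (lam * k) * (Real.exp lam - 1))) w)
        = ∑ k ∈ Finset.range c, ENNReal.ofReal (Real.exp (lam * k) * (Real.exp lam - 1)) := by
      rw [tsum_eq_sum (s := Finset.range c)]
      · apply Finset.sum_congr rfl
        intro k hk
        have hmem : w ∈ G A (k+1) :=
          (mem_G_iff_of_finite A w h (k+1) (by omega)).2 (by
            have := Finset.mem_range.1 hk; omega)
        rw [Set.indicator_of_mem hmem]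
      · intro k hk
        have hnot : w ∉ G A (k+1) := by
          rw [mem_G_iff_of_finite A w h (k+1) (by omega)]
          have := Finset.mem_range.not.1 hk
          omega
        rw [Set.indicator_of_notMem hnot]
    rw [hsum]
    have hfsum : ∑ k ∈ Finset.range c, ENNReal.ofReal (Real.exp (lam * k) * (Real.exp lam - 1))
        = ENNReal.ofReal (Real.exp (lam * c) - 1) := by
      rw [← ENNReal.ofReal_sum_of_nonneg (fun k _ => by
        have h1 : (0:ℝ) ≤ Real.exp (lam * k) := (Real.exp_pos _).le
        have h2 : (1:ℝ) ≤ Real.exp lam := Real.one_le_exp hlam.le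
        nlinarith)]
      congr 1
      calc ∑ k ∈ Finset.range c, Real.exp (lam * k) * (Real.exp lam - 1)
          = ∑ k ∈ Finset.range c, (Real.exp (lam * (k+1)) - Real.exp (lam * k)) := by
            apply Finset.sum_congr rfl
            intro k _
            exact hterm k
        _ = Real.exp (lam * c) - Real.exp (lam * 0) := by
            have := Finset.sum_range_sub (f := fun k : ℕ => Real.exp (lam * k)) c
            push_cast at this ⊢
            convert this using 2
        _ = Real.exp (lam * c) - 1 := by
            rw [mul_zero, Real.exp_zero]
    rw [hfsum]
    have hone : (1:ℝ≥0∞) = ENNReal.ofReal 1 := ENNReal.ofReal_one.symm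
    rw [hone, ← ENNReal.ofReal_add zero_le_one (by
      have : (1:ℝ) ≤ Real.exp (lam * c) := Real.one_le_exp (by positivity)
      linarith)]
    apply ENNReal.ofReal_le_ofReal
    linarith
  · rw [expOcc, dif_neg h]
    have hge : ∀ k : ℕ, ENNReal.ofReal (Real.exp lam - 1)
        ≤ Set.indicator (G A (k+1))
          (fun _ => ENNReal.ofReal (Real.exp (lam * k) * (Real.exp lam - 1))) w := by
      intro k
      rw [Set.indicator_of_mem (mem_G_of_infinite A w h (k+1))]
      apply ENNReal.ofReal_le_ofReal
      have h1 : (1:ℝ) ≤ Real.exp (lam * k) := Real.one_le_exp (by positivity)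
      have h2 : (0:ℝ) ≤ Real.exp lam - 1 := by
        have := Real.one_le_exp hlam.le
        linarith
      nlinarith
    have htop : (∑' k : ℕ, Set.indicator (G A (k+1))
        (fun _ => ENNReal.ofReal (Real.exp (lam * k) * (Real.exp lam - 1))) w) = ⊤ := by
      rw [eq_top_iff]
      calc (⊤ : ℝ≥0∞) = ∑' _ : ℕ, ENNReal.ofReal (Real.exp lam - 1) := by
            rw [ENNReal.tsum_const_eq_top_of_ne_zero]
            rw [ne_eq, ENNReal.ofReal_eq_zero, not_le, sub_pos]
            calc (1:ℝ) = Real.exp 0 := Real.exp_zero.symm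
              _ < Real.exp lam := Real.exp_lt_exp.2 hlam
        _ ≤ _ := ENNReal.tsum_le_tsum hge
    rw [htop]
    simp

lemma lintegral_expOcc_bound (hP : IsSRW ν P) (A : Finset (Zd ν)) (lam : ℝ) (hlam : 0 < lam)
    (χ : ℝ≥0∞) (hχ : ∀ a ∈ A, P a (ret (↑A : Set (Zd ν))) ≤ χ) (x : Zd ν) :
    ∫⁻ w, expOcc ν lam A w ∂(P x)
      ≤ 1 + ∑' k : ℕ, ENNReal.ofReal (Real.exp (lam * k) * (Real.exp lam - 1)) * χ ^ k := by
  have hprob : IsProbabilityMeasure (P x) := hP.1 x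
  calc ∫⁻ w, expOcc ν lam A w ∂(P x)
      ≤ ∫⁻ w, (1 + ∑' k : ℕ, Set.indicator (G A (k+1))
          (fun _ => ENNReal.ofReal (Real.exp (lam * k) * (Real.exp lam - 1))) w) ∂(P x) :=
        lintegral_mono (fun w => expOcc_pointwise lam hlam A w)
    _ = (∫⁻ _, (1:ℝ≥0∞) ∂(P x)) + ∫⁻ w, (∑' k : ℕ, Set.indicator (G A (k+1))
          (fun _ => ENNReal.ofReal (Real.exp (lam * k) * (Real.exp lam - 1))) w) ∂(P x) :=
        lintegral_add_left measurable_const _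
    _ = 1 + ∑' k : ℕ, ∫⁻ w, Set.indicator (G A (k+1))
          (fun _ => ENNReal.ofReal (Real.exp (lam * k) * (Real.exp lam - 1))) w ∂(P x) := by
        rw [lintegral_one, hprob.measure_univ, lintegral_tsum (fun k =>
          (measurable_const.indicator (measurableSet_G A (k+1))).aemeasurable)]
    _ = 1 + ∑' k : ℕ, ENNReal.ofReal (Real.exp (lam * k) * (Real.exp lam - 1))
          * P x (G A (k+1)) := by
        congr 1
        apply tsum_congr
        intro k
        rw [lintegral_indicator_const (measurableSet_G A (k+1))]
    _ ≤ 1 + ∑' k : ℕ, ENNReal.ofReal (Real.exp (lam * k) * (Real.exp lam - 1)) * χ ^ k := by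
        apply add_le_add_right
        apply ENNReal.tsum_le_tsum
        intro k
        exact mul_le_mul_right (G_pow_bound hP A x k χ hχ) _

end Final
end SRWp

/-- **Theorem 2.4, (2.22)/(2.28).** For `d ≥ 4`, `1 ≤ m ≤ d − 3` and `λ > 0` with
`χ(λ) < 1`, and `A` a finite subset of an `m`-dimensional coordinate affine sublattice
`F = y + Σ_{i∈I} ℤ e_i`, one has
`sup_x E_x[exp(λ f_A)] ≤ 1 + (e^λ − 1)/(1 − χ(λ))` and hence
`E_{e_A}[exp(λ f_A) − 1] ≤ cap(A)·(e^λ − 1)/(1 − χ(λ))`. -/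
theorem exp_moment_occupation
    (d m : ℕ) (hd : 4 ≤ d) (hm1 : 1 ≤ m) (hm2 : m ≤ d - 3)
    (P : Zd d → Measure (ℕ → Zd d)) (hP : IsSRW d P)
    (Pm : Zd (d - m) → Measure (ℕ → Zd (d - m))) (hPm : IsSRW (d - m) Pm)
    (lam : ℝ) (hlam : 0 < lam)
    (hchi : chiVal d m (retProb (d - m) Pm) lam < 1)
    (I : Finset (Fin d)) (hI : I.card = m) (y : Zd d)
    (A : Finset (Zd d)) (hA : ∀ z ∈ A, ∀ i : Fin d, i ∉ I → z i = y i) :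
    (∀ x : Zd d,
        (∫⁻ w, expOcc d lam A w ∂(P x))
          ≤ ENNReal.ofReal (1 + (Real.exp lam - 1)
              / (1 - chiVal d m (retProb (d - m) Pm) lam)))
    ∧ (∑ x ∈ A, eqm d P A x * ((∫⁻ w, expOcc d lam A w ∂(P x)) - 1))
        ≤ capa d P A * ENNReal.ofReal ((Real.exp lam - 1)
            / (1 - chiVal d m (retProb (d - m) Pm) lam)) := by
  classical
  have hd0 : 0 < d := by omega
  have hdm0 : 0 < d - m := by omega
  have hmd : m ≤ d := by omega
  set qR : ℝ := retProb (d - m) Pm with hqRdef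
  set chi : ℝ := chiVal d m qR lam with hchidef
  -- the return probability
  have hPm0prob : IsProbabilityMeasure (Pm 0) := hPm.1 0
  have hretset : {w : ℕ → Zd (d-m) | ∃ n : ℕ, 1 ≤ n ∧ w n = 0}
      = SRWp.ret {(0 : Zd (d - m))} := rfl
  have hq'top : Pm 0 (SRWp.ret {(0 : Zd (d - m))}) ≠ ⊤ := measure_ne_top _ _
  have hq'eq : Pm 0 (SRWp.ret {(0 : Zd (d - m))}) = ENNReal.ofReal qR := by
    rw [hqRdef, retProb, hretset, ENNReal.ofReal_toReal hq'top]
  have hqR0 : 0 ≤ qR := ENNReal.toReal_nonneg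
  -- chi nonneg
  have hmdr : (m:ℝ)/d ≤ 1 := by
    rw [div_le_one (by positivity)]
    exact_mod_cast hmd
  have hrchi0 : (0:ℝ) ≤ (m:ℝ)/d + (1 - (m:ℝ)/d) * qR := by
    have h2 : (0:ℝ) ≤ (m:ℝ)/d := by positivity
    nlinarith
  have hchipos : 0 ≤ chi := by
    rw [hchidef, chiVal]
    exact mul_nonneg (Real.exp_pos _).le hrchi0
  have hchilt : chi < 1 := hchi
  -- the χ₀ bound on the return probability from A
  set χ₀ : ℝ≥0∞ := ENNReal.ofReal ((m:ℝ)/d + (1 - (m:ℝ)/d) * qR) with hχ₀def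
  have hfrac : ∀ a b : ℕ, 0 < b → ((a:ℝ≥0∞)) * ((b:ℝ≥0∞))⁻¹ = ENNReal.ofReal ((a:ℝ)/(b:ℝ)) := by
    intro a b hb
    rw [ENNReal.ofReal_div_of_pos (by exact_mod_cast hb), ENNReal.ofReal_natCast,
      ENNReal.ofReal_natCast, div_eq_mul_inv]
  have e1 : (2 * (m:ℝ≥0∞)) * (2 * (d:ℝ≥0∞))⁻¹ = ENNReal.ofReal ((m:ℝ)/d) := by
    rw [show (2 * (m:ℝ≥0∞)) = ((2*m : ℕ) : ℝ≥0∞) by push_cast; ring,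
      show (2 * (d:ℝ≥0∞)) = ((2*d : ℕ) : ℝ≥0∞) by push_cast; ring,
      hfrac (2*m) (2*d) (by omega)]
    congr 1
    push_cast
    rw [mul_div_mul_left _ _ (two_ne_zero)]
  have e2 : (2 * ((d - m : ℕ):ℝ≥0∞)) * (2 * (d:ℝ≥0∞))⁻¹ * ENNReal.ofReal qR
      = ENNReal.ofReal ((1 - (m:ℝ)/d) * qR) := by
    rw [show (2 * ((d - m : ℕ):ℝ≥0∞)) = ((2*(d - m) : ℕ) : ℝ≥0∞) by push_cast; ring,
      show (2 * (d:ℝ≥0∞)) = ((2*d : ℕ) : ℝ≥0∞) by push_cast; ring,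
      hfrac (2*(d-m)) (2*d) (by omega),
      ← ENNReal.ofReal_mul (by positivity)]
    congr 1
    have hc : ((2*(d-m) : ℕ) : ℝ) = 2 * ((d:ℝ) - m) := by
      push_cast [Nat.cast_sub hmd]
      ring
    rw [hc]
    push_cast
    have hdne : (d:ℝ) ≠ 0 := by positivity
    field_simp
  have hχ₀ : ∀ a ∈ A, P a (SRWp.ret (↑A : Set (Zd d))) ≤ χ₀ := by
    intro a haA
    have hsub : SRWp.ret (↑A : Set (Zd d))
        ⊆ SRWp.ret {z : Zd d | ∀ i : Fin d, i ∉ I → z i = y i} := by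
      rintro w ⟨k, hk1, hk2⟩
      exact ⟨k, hk1, fun i hi => hA _ hk2 i hi⟩
    calc P a (SRWp.ret (↑A : Set (Zd d)))
        ≤ P a (SRWp.ret {z : Zd d | ∀ i : Fin d, i ∉ I → z i = y i}) := measure_mono hsub
      _ ≤ (2 * m) * (2 * d : ℝ≥0∞)⁻¹
          + (2 * ((d - m : ℕ)) : ℝ≥0∞) * (2 * d : ℝ≥0∞)⁻¹ * Pm 0 (SRWp.ret {(0 : Zd (d - m))}) :=
          SRWp.return_bound hdm0 hd0 hP hPm I hI y a (fun i hi => hA a haA i hi)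
      _ = χ₀ := by
          rw [hq'eq, e1, e2, hχ₀def, ENNReal.ofReal_add (by positivity) (mul_nonneg (by linarith [hmdr]) hqR0)]
  -- numeric facts
  have hexp1 : (1:ℝ) ≤ Real.exp lam := Real.one_le_exp hlam.le
  have hcnn : 0 ≤ (Real.exp lam - 1) / (1 - chi) :=
    div_nonneg (by linarith) (by linarith)
  have hofe : ENNReal.ofReal (Real.exp lam) * χ₀ = ENNReal.ofReal chi := by
    rw [hχ₀def, ← ENNReal.ofReal_mul (Real.exp_pos lam).le, hchidef, chiVal]
  -- the per-x bound
  have hxbound : ∀ x : Zd d, (∫⁻ w, expOcc d lam A w ∂(P x))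
      ≤ ENNReal.ofReal (1 + (Real.exp lam - 1) / (1 - chi)) := by
    intro x
    calc (∫⁻ w, expOcc d lam A w ∂(P x))
        ≤ 1 + ∑' k : ℕ, ENNReal.ofReal (Real.exp (lam * k) * (Real.exp lam - 1)) * χ₀ ^ k :=
          SRWp.lintegral_expOcc_bound hP A lam hlam χ₀ hχ₀ x
      _ ≤ 1 + ∑' k : ℕ, ENNReal.ofReal (Real.exp lam - 1) * (ENNReal.ofReal chi) ^ k := by
          apply add_le_add_right
          apply ENNReal.tsum_le_tsum
          intro k
          have hek : ENNReal.ofReal (Real.exp (lam * k) * (Real.exp lam - 1)) * χ₀ ^ k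
              = ENNReal.ofReal (Real.exp lam - 1) * (ENNReal.ofReal (Real.exp lam) * χ₀) ^ k := by
            rw [ENNReal.ofReal_mul (Real.exp_pos _).le, mul_pow,
              ← ENNReal.ofReal_pow (Real.exp_pos _).le, ← Real.exp_nat_mul, mul_comm (k:ℝ) lam]
            ring
          rw [hek, hofe]
      _ = 1 + ENNReal.ofReal (Real.exp lam - 1) * (1 - ENNReal.ofReal chi)⁻¹ := by
          rw [ENNReal.tsum_mul_left, ENNReal.tsum_geometric]
      _ = ENNReal.ofReal (1 + (Real.exp lam - 1) / (1 - chi)) := by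
          rw [show (1:ℝ≥0∞) - ENNReal.ofReal chi = ENNReal.ofReal (1 - chi) by
              rw [ENNReal.ofReal_sub 1 hchipos, ENNReal.ofReal_one],
            ← ENNReal.ofReal_inv_of_pos (by linarith : (0:ℝ) < 1 - chi),
            ← ENNReal.ofReal_mul (by linarith : (0:ℝ) ≤ Real.exp lam - 1),
            ← div_eq_mul_inv,
            ENNReal.ofReal_add zero_le_one hcnn, ENNReal.ofReal_one]
  refine ⟨hxbound, ?_⟩
  have hsub1 : ∀ x : Zd d, (∫⁻ w, expOcc d lam A w ∂(P x)) - 1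
      ≤ ENNReal.ofReal ((Real.exp lam - 1) / (1 - chi)) := by
    intro x
    rw [tsub_le_iff_right]
    calc (∫⁻ w, expOcc d lam A w ∂(P x))
        ≤ ENNReal.ofReal (1 + (Real.exp lam - 1) / (1 - chi)) := hxbound x
      _ = ENNReal.ofReal ((Real.exp lam - 1) / (1 - chi)) + 1 := by
          rw [ENNReal.ofReal_add zero_le_one hcnn, ENNReal.ofReal_one, add_comm]
  calc ∑ x ∈ A, eqm d P A x * ((∫⁻ w, expOcc d lam A w ∂(P x)) - 1)
      ≤ ∑ x ∈ A, eqm d P A x * ENNReal.ofReal ((Real.exp lam - 1) / (1 - chi)) :=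
        Finset.sum_le_sum (fun x _ => mul_le_mul_right (hsub1 x) _)
    _ = capa d P A * ENNReal.ofReal ((Real.exp lam - 1) / (1 - chi)) := by
        rw [capa, Finset.sum_mul]
end

section
/- (Induction lemma for the renormalization scheme.) Let d ≥ 3, a = 1/(100d), and let L_n, ℓ_n be the scales defined from an integer L₀ > 1. Let c₁, c₃, c₄ > 0 be given. There exists a constant c depending only on d, c₁, c₃, c₄ with the following property. Suppose L₀ ≥ c, r is an integer with (d−2)·a·r ≥ 4d, u₀ > 0, u_{n+1} = (1 + c₁·ℓ_n^{−(d−2)})^{r+1}·u_n for n ≥ 0, and (a_n)_{n≥0} is a sequence of nonnegative reals satisfying a_{n+1} ≤ c₄·a_n·(L_n^{2(d−1)a²}·a_n + L_n^{2(d−1)a(1+a)}·u_n·c₃^r·L_n^{(d−2)(1−ar)}) for all n ≥ 0. If for some n one has a_n ≤ L_n^{−1} and u_n ≤ L_n^{(d−2)·a·r/2}, then also a_{n+1} ≤ L_{n+1}^{−1} and u_{n+1} ≤ L_{n+1}^{(d−2)·a·r/2}. -/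
/-!
Lemma 3.4: the induction step of the renormalization scheme.
-/


/-- The length scales `L_n` of Section 3: `L_{n+1} = ℓ_n L_n`, `ℓ_n = 100⌊L_n^a⌋`,
`a = 1/(100d)`. -/
noncomputable def Lscale (d L0 : ℕ) : ℕ → ℕ
  | 0 => L0
  | n + 1 => (100 * ⌊(Lscale d L0 n : ℝ) ^ ((1 : ℝ) / (100 * d))⌋₊) * Lscale d L0 n

/-- `ℓ_n = 100⌊L_n^a⌋`. -/
noncomputable def ellScale (d L0 n : ℕ) : ℕ :=
  100 * ⌊(Lscale d L0 n : ℝ) ^ ((1 : ℝ) / (100 * d))⌋₊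

lemma half_le_floor {x : ℝ} (hx : 1 ≤ x) : x / 2 ≤ (⌊x⌋₊ : ℝ) := by
  rcases le_or_gt 2 x with h | h
  · have := Nat.sub_one_lt_floor x
    linarith
  · have h1 : 1 ≤ ⌊x⌋₊ := Nat.le_floor (by exact_mod_cast hx)
    have : (1:ℝ) ≤ (⌊x⌋₊ : ℝ) := by exact_mod_cast h1
    linarith

lemma Lscale_ge (d L0 : ℕ) (h : 1 ≤ L0) : ∀ n, L0 ≤ Lscale d L0 n := by
  intro n
  induction n with
  | zero => simp [Lscale]
  | succ n ih =>
    have hL1 : (1:ℝ) ≤ (Lscale d L0 n : ℝ) := by exact_mod_cast le_trans h ih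
    have hA : (0:ℝ) ≤ (1 : ℝ) / (100 * d) := by positivity
    have h1 : (1:ℝ) ≤ (Lscale d L0 n : ℝ) ^ ((1 : ℝ) / (100 * d)) :=
      Real.one_le_rpow hL1 hA
    have hfl : 1 ≤ ⌊(Lscale d L0 n : ℝ) ^ ((1 : ℝ) / (100 * d))⌋₊ :=
      Nat.le_floor (by exact_mod_cast h1)
    calc L0 ≤ Lscale d L0 n := ih
    _ = 1 * Lscale d L0 n := (one_mul _).symm
    _ ≤ (100 * ⌊(Lscale d L0 n : ℝ) ^ ((1 : ℝ) / (100 * d))⌋₊) * Lscale d L0 n := by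
        apply Nat.mul_le_mul_right
        omega
    _ = Lscale d L0 (n+1) := rfl

set_option maxHeartbeats 2000000 in
/-- **Lemma 3.4 (induction lemma for the renormalization scheme).** With
`a = 1/(100d)`: if `L₀ ≥ c(d,c₁,c₃,c₄)`, `(d−2)·a·r ≥ 4d`,
`u_{n+1} = (1 + c₁ ℓ_n^{−(d−2)})^{r+1} u_n`, and the sequence `(a_n)` of nonnegative
reals satisfies the recursion (3.58), then the bounds `a_n ≤ L_n⁻¹` and
`u_n ≤ L_n^{(d−2)·a·r/2}` propagate from `n` to `n+1`. -/
theorem renormalization_induction_lemma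
    (d : ℕ) (hd : 3 ≤ d) (c₁ c₃ c₄ : ℝ) (hc₁ : 0 < c₁) (hc₃ : 0 < c₃) (hc₄ : 0 < c₄) :
    ∃ c : ℕ, ∀ L0 : ℕ, 1 < L0 → c ≤ L0 →
    ∀ r : ℕ, 4 * (d : ℝ) ≤ ((d : ℝ) - 2) * (1 / (100 * (d : ℝ))) * (r : ℝ) →
    ∀ u a : ℕ → ℝ, 0 < u 0 → (∀ n, 0 ≤ a n) →
      (∀ n : ℕ, u (n + 1) =
        (1 + c₁ * ((ellScale d L0 n : ℝ) ^ (d - 2))⁻¹) ^ (r + 1) * u n) →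
      (∀ n : ℕ, a (n + 1) ≤ c₄ * a n *
        ((Lscale d L0 n : ℝ) ^ (2 * ((d : ℝ) - 1) * (1 / (100 * (d : ℝ))) ^ 2) * a n
          + (Lscale d L0 n : ℝ)
              ^ (2 * ((d : ℝ) - 1) * (1 / (100 * (d : ℝ))) * (1 + 1 / (100 * (d : ℝ))))
            * u n * c₃ ^ r
            * (Lscale d L0 n : ℝ) ^ (((d : ℝ) - 2) * (1 - (1 / (100 * (d : ℝ))) * r)))) →
      ∀ n : ℕ,
        (a n ≤ (Lscale d L0 n : ℝ)⁻¹
          ∧ u n ≤ (Lscale d L0 n : ℝ) ^ (((d : ℝ) - 2) * (1 / (100 * (d : ℝ))) * r / 2)) →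
        a (n + 1) ≤ (Lscale d L0 (n + 1) : ℝ)⁻¹
          ∧ u (n + 1)
              ≤ (Lscale d L0 (n + 1) : ℝ)
                  ^ (((d : ℝ) - 2) * (1 / (100 * (d : ℝ))) * r / 2) := by
  -- the constant
  set K : ℝ := 200 * c₄ + c₃ ^ 4 + 24 * c₁ + 1 with hKdef
  have hK1 : (1:ℝ) ≤ K := by nlinarith [pow_pos hc₃ 4]
  refine ⟨⌈K ^ (100 * d)⌉₊, ?_⟩
  intro L0 hL0 hcL0 r hr u a hu0 ha0 hu ha n ⟨han, hun⟩
  have hd3 : (3:ℝ) ≤ (d:ℝ) := by exact_mod_cast hd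
  have hdpos : (0:ℝ) < (d:ℝ) := by linarith
  set A : ℝ := 1 / (100 * (d:ℝ)) with hAdef
  have hA0 : 0 < A := by rw [hAdef]; positivity
  have hdA : (100 * (d:ℝ)) * A = 1 := by rw [hAdef]; field_simp
  have hA300 : A ≤ 1/300 := by rw [hAdef, div_le_div_iff₀ (by positivity) (by norm_num)]; nlinarith
  set L : ℝ := (Lscale d L0 n : ℝ) with hLdef
  set l : ℝ := (ellScale d L0 n : ℝ) with hldef
  have hLnat : L0 ≤ Lscale d L0 n := Lscale_ge d L0 (le_of_lt hL0) n
  have hL2 : (2:ℝ) ≤ L := by rw [hLdef]; exact_mod_cast le_trans hL0 hLnat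
  have hL1 : (1:ℝ) ≤ L := by linarith
  have hLpos : (0:ℝ) < L := by linarith
  -- K ≤ L^A
  have hcK : (K ^ (100*d) : ℝ) ≤ (L0:ℝ) := by
    have := Nat.ceil_le.mp hcL0
    exact_mod_cast this
  have hKL0 : K ≤ (L0:ℝ) ^ A := by
    have h1 : ((K ^ (100*d) : ℝ)) ^ A ≤ (L0:ℝ) ^ A :=
      Real.rpow_le_rpow (by positivity) hcK hA0.le
    calc K = ((K ^ (100*d) : ℝ)) ^ A := by
          rw [← Real.rpow_natCast K (100*d), ← Real.rpow_mul (by positivity)]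
          rw [show ((100*d : ℕ) : ℝ) * A = 1 by push_cast; linarith [hdA]]
          rw [Real.rpow_one]
      _ ≤ (L0:ℝ) ^ A := h1
  have hKLA : K ≤ L ^ A := by
    refine hKL0.trans (Real.rpow_le_rpow (by positivity) ?_ hA0.le)
    rw [hLdef]; exact_mod_cast hLnat
  have hLA1 : (1:ℝ) ≤ L ^ A := le_trans hK1 hKLA
  -- ℓ bounds
  have hl_eq : l = 100 * (⌊L ^ A⌋₊ : ℝ) := by
    rw [hldef, hLdef, hAdef, ellScale]; push_cast; ring
  have hl_up : l ≤ 100 * L ^ A := by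
    rw [hl_eq]
    have := Nat.floor_le (show (0:ℝ) ≤ L ^ A by positivity)
    linarith
  have hl_low : 50 * L ^ A ≤ l := by
    rw [hl_eq]
    have := half_le_floor hLA1
    linarith
  have hl100 : (100:ℝ) ≤ l := by
    rw [hl_eq]
    have h1 : 1 ≤ ⌊L ^ A⌋₊ := Nat.le_floor (by exact_mod_cast hLA1)
    have : (1:ℝ) ≤ (⌊L ^ A⌋₊ : ℝ) := by exact_mod_cast h1
    linarith
  have hlpos : (0:ℝ) < l := by linarith
  have hr1 : (1:ℝ) ≤ (r:ℝ) := by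
    rcases Nat.eq_zero_or_pos r with h|h
    · exfalso; rw [h] at hr; push_cast at hr; nlinarith
    · exact_mod_cast h
  have hr0 : (0:ℝ) ≤ (r:ℝ) := by linarith
  have hd2 : (1:ℝ) ≤ (d:ℝ) - 2 := by linarith
  set β : ℝ := ((d:ℝ) - 2) * A * (r:ℝ) / 2 with hβdef
  have hβ0 : 0 ≤ β := by
    rw [hβdef]
    have h := mul_nonneg (mul_nonneg (by linarith : (0:ℝ) ≤ (d:ℝ) - 2) hA0.le) hr0
    linarith
  have hLn1 : ((Lscale d L0 (n+1) : ℕ) : ℝ) = l * L := by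
    have h : Lscale d L0 (n+1) = ellScale d L0 n * Lscale d L0 n := rfl
    rw [h, Nat.cast_mul, ← hldef, ← hLdef]
  have hupos : ∀ m, 0 < u m := by
    intro m
    induction m with
    | zero => exact hu0
    | succ m ih =>
      rw [hu m]
      have h1 : (0:ℝ) < 1 + c₁ * ((ellScale d L0 m : ℝ) ^ (d - 2))⁻¹ := by positivity
      exact mul_pos (pow_pos h1 _) ih
  constructor
  · -- a part
    have hun0 : 0 ≤ u n := (hupos n).le
    have han0 : 0 ≤ a n := ha0 n
    have hbK : 200 * c₄ ≤ L ^ A := by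
      have h : 200 * c₄ ≤ K := by linarith [pow_pos hc₃ 4]
      linarith
    have hdA2 : (100 * (d:ℝ)) * (A * A) = A := by rw [← mul_assoc, hdA, one_mul]
    have hc34 : c₃ ≤ L ^ (A / 4) := by
      have h4 : (L ^ (A/4)) ^ (4:ℕ) = L ^ A := by
        rw [← Real.rpow_natCast (L ^ (A/4)) 4, ← Real.rpow_mul hLpos.le]
        norm_num
      have h5 : c₃ ^ (4:ℕ) ≤ (L ^ (A/4)) ^ (4:ℕ) := by
        rw [h4]
        have : c₃ ^ 4 ≤ K := by linarith
        linarith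
      exact le_of_pow_le_pow_left₀ (by norm_num) (by positivity) h5
    have hc3r : c₃ ^ r ≤ L ^ (A * (r:ℝ) / 4) := by
      calc c₃ ^ r ≤ (L ^ (A/4)) ^ r := pow_le_pow_left₀ hc₃.le hc34 r
        _ = L ^ (A / 4 * (r:ℝ)) := by
            rw [← Real.rpow_natCast (L ^ (A/4)) r, ← Real.rpow_mul hLpos.le]
        _ = L ^ (A * (r:ℝ) / 4) := by ring_nf
    have hLinv : L⁻¹ = L ^ (-1 : ℝ) := (Real.rpow_neg_one L).symm
    set E1 : ℝ := 2 * ((d:ℝ) - 1) * A ^ 2 with hE1def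
    set E2 : ℝ := 2 * ((d:ℝ) - 1) * A * (1 + A) with hE2def
    set E3 : ℝ := ((d:ℝ) - 2) * (1 - A * (r:ℝ)) with hE3def
    have hbig : ∀ e : ℝ, e ≤ -(1 + 2*A) → 200 * c₄ * L ^ e ≤ L ^ (-(1+A)) := by
      intro e he
      have h1 : L ^ e ≤ L ^ (-(1 + 2*A)) := Real.rpow_le_rpow_of_exponent_le hL1 he
      have h2 : 200 * c₄ * L ^ e ≤ L ^ A * L ^ (-(1 + 2*A)) :=
        mul_le_mul hbK h1 (by positivity) (by positivity)
      calc 200 * c₄ * L ^ e ≤ L ^ A * L ^ (-(1 + 2*A)) := h2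
        _ = L ^ (-(1+A)) := by rw [← Real.rpow_add hLpos]; ring_nf
    have hE1le : E1 - 2 ≤ -(1 + 2*A) := by
      rw [hE1def]
      linarith [hdA2, hA300, mul_nonneg hA0.le hA0.le, sq_nonneg A]
    have hT1 : c₄ * a n * (L ^ E1 * a n) ≤ 1/200 * L ^ (-(1+A)) := by
      have h1 : c₄ * a n * (L ^ E1 * a n) ≤ c₄ * L⁻¹ * (L ^ E1 * L⁻¹) := by
        gcongr <;> first | exact han | exact han0 | positivity
      have h2 : c₄ * L⁻¹ * (L ^ E1 * L⁻¹) = 1/200 * (200 * c₄ * L ^ (E1 - 2)) := by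
        rw [hLinv, show E1 - 2 = -1 + (E1 + -1) by ring, Real.rpow_add hLpos,
          Real.rpow_add hLpos]
        ring
      calc c₄ * a n * (L ^ E1 * a n) ≤ c₄ * L⁻¹ * (L ^ E1 * L⁻¹) := h1
        _ = 1/200 * (200 * c₄ * L ^ (E1 - 2)) := h2
        _ ≤ 1/200 * L ^ (-(1+A)) := by linarith [hbig (E1 - 2) hE1le]
    have ht0 : (0:ℝ) ≤ A * (r:ℝ) := mul_nonneg hA0.le hr0
    have hEle : -1 + (E2 + (β + (A * (r:ℝ) / 4 + E3))) ≤ -(1 + 2*A) := by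
      rw [hE2def, hE3def, hβdef]
      linarith [hr, hdA, hdA2, hA300, mul_nonneg hA0.le hA0.le, ht0,
        mul_le_mul_of_nonneg_right hd2 ht0]
    have hT2 : c₄ * a n * (L ^ E2 * u n * c₃ ^ r * L ^ E3) ≤ 1/200 * L ^ (-(1+A)) := by
      have h1 : c₄ * a n * (L ^ E2 * u n * c₃ ^ r * L ^ E3)
          ≤ c₄ * L⁻¹ * (L ^ E2 * L ^ β * L ^ (A * (r:ℝ) / 4) * L ^ E3) := by
        gcongr <;>
          first | exact han | exact hun | exact hc3r | exact han0 | exact hun0 | positivity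
      have h2 : c₄ * L⁻¹ * (L ^ E2 * L ^ β * L ^ (A * (r:ℝ) / 4) * L ^ E3)
          = 1/200 * (200 * c₄ * L ^ (-1 + (E2 + (β + (A * (r:ℝ) / 4 + E3))))) := by
        rw [hLinv, Real.rpow_add hLpos, Real.rpow_add hLpos, Real.rpow_add hLpos,
          Real.rpow_add hLpos]
        ring
      calc c₄ * a n * (L ^ E2 * u n * c₃ ^ r * L ^ E3)
          ≤ c₄ * L⁻¹ * (L ^ E2 * L ^ β * L ^ (A * (r:ℝ) / 4) * L ^ E3) := h1
        _ = 1/200 * (200 * c₄ * L ^ (-1 + (E2 + (β + (A * (r:ℝ) / 4 + E3))))) := h2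
        _ ≤ 1/200 * L ^ (-(1+A)) := by linarith [hbig _ hEle]
    have hsum : a (n+1) ≤ 1/100 * L ^ (-(1+A)) := by
      calc a (n+1) ≤ c₄ * a n * (L ^ E1 * a n + L ^ E2 * u n * c₃ ^ r * L ^ E3) := ha n
        _ = c₄ * a n * (L ^ E1 * a n) + c₄ * a n * (L ^ E2 * u n * c₃ ^ r * L ^ E3) := by
            ring
        _ ≤ 1/200 * L ^ (-(1+A)) + 1/200 * L ^ (-(1+A)) := add_le_add hT1 hT2
        _ = 1/100 * L ^ (-(1+A)) := by ring
    have hfin : 1/100 * L ^ (-(1+A)) ≤ (l * L)⁻¹ := by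
      have h1 : l * L ≤ 100 * L ^ (1+A) := by
        calc l * L ≤ (100 * L ^ A) * L := mul_le_mul_of_nonneg_right hl_up hLpos.le
          _ = 100 * L ^ (1+A) := by
              rw [Real.rpow_add hLpos, Real.rpow_one]; ring
      have h2 : (100 * L ^ (1+A))⁻¹ ≤ (l * L)⁻¹ := inv_anti₀ (by positivity) h1
      have h3 : (100 * L ^ (1+A))⁻¹ = 1/100 * L ^ (-(1+A)) := by
        rw [Real.rpow_neg hLpos.le, mul_inv]
        ring
      linarith
    rw [hLn1]
    linarith
  · -- u part
    set x : ℝ := c₁ * (l ^ (d - 2))⁻¹ with hxdef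
    have hx0 : 0 ≤ x := by rw [hxdef]; positivity
    have hl_pow : l ≤ l ^ (d - 2) := le_self_pow₀ (by linarith) (by omega)
    have hx_le : x ≤ c₁ / l := by
      rw [hxdef, div_eq_mul_inv]
      exact mul_le_mul_of_nonneg_left (inv_anti₀ hlpos hl_pow) hc₁.le
    have hl_c₁ : 1200 * c₁ ≤ l := by
      have h1 : 24 * c₁ ≤ K := by linarith [pow_pos hc₃ 4]
      linarith
    have h300 : 1/300 ≤ ((d:ℝ) - 2) * A := by linarith [hdA, hA300]
    have hlog : 1 ≤ Real.log l := by
      rw [Real.le_log_iff_exp_le hlpos]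
      have := Real.exp_one_lt_d9
      linarith
    have hmain : ((r:ℝ) + 1) * x ≤ Real.log l * β := by
      have h1 : ((r:ℝ) + 1) * x ≤ (2 * r) * (c₁ / l) := by
        apply mul_le_mul (by linarith) hx_le hx0 (by linarith)
      have h2 : (2 * (r:ℝ)) * (c₁ / l) ≤ β := by
        have h2' := mul_le_mul_of_nonneg_right h300 hlpos.le
        have key : 4 * c₁ ≤ (((d:ℝ) - 2) * A) * l := by linarith
        have hstep : 2 * (c₁ / l) ≤ ((d:ℝ) - 2) * A / 2 := by
          rw [show 2 * (c₁ / l) = (2 * c₁) / l by ring,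
            div_le_div_iff₀ hlpos (by norm_num : (0:ℝ) < 2)]
          linarith
        rw [hβdef]
        calc (2 * (r:ℝ)) * (c₁ / l) = (r:ℝ) * (2 * (c₁ / l)) := by ring
          _ ≤ (r:ℝ) * (((d:ℝ) - 2) * A / 2) := mul_le_mul_of_nonneg_left hstep hr0
          _ = ((d:ℝ) - 2) * A * (r:ℝ) / 2 := by ring
      calc ((r:ℝ) + 1) * x ≤ (2 * r) * (c₁ / l) := h1
        _ ≤ β := h2
        _ ≤ Real.log l * β := le_mul_of_one_le_left hβ0 hlog
    have hmult : (1 + x) ^ (r + 1) ≤ l ^ β := by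
      calc (1 + x) ^ (r + 1) ≤ Real.exp x ^ (r + 1) := by
            apply pow_le_pow_left₀ (by linarith)
            linarith [Real.add_one_le_exp x]
        _ = Real.exp (((r:ℝ) + 1) * x) := by
            rw [← Real.exp_nat_mul]; push_cast; ring_nf
        _ ≤ Real.exp (Real.log l * β) := Real.exp_le_exp.mpr hmain
        _ = l ^ β := (Real.rpow_def_of_pos hlpos β).symm
    rw [hu n, hLn1, Real.mul_rpow hlpos.le hLpos.le]
    exact mul_le_mul hmult hun (hupos n).le (by positivity)
end
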